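/- arXiv:1806.01208 — 11 statements merged into one kernel-verified Lean document; each statement's English description precedes it below -/
import Mathlib

section
/- If {a_i} is a rigid divisibility sequence in the ring of integers O_K of a number field K, then for all i, j ≥ 1 the ideal generated by a_i and a_j equals the ideal generated by a_{gcd(i,j)}. -/
open NumberField

/-- A sequence in the ring of integers of a number field `K` is a rigid divisibility
sequence if for every non-archimedean absolute value `|·|` on `K`:
(1) `|a n| < 1` implies `|a (k*n)| = |a n|` for all `k ≥ 1`;
(2) `|a n| < 1` and `|a j| < 1` imply `|a (gcd n j)| < 1`. -/
def IsRigidDivisibilitySequence {K : Type*} [Field K] [NumberField K]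
    (a : ℕ → 𝓞 K) : Prop :=
  ∀ v : AbsoluteValue K ℝ, (∀ x y : K, v (x + y) ≤ max (v x) (v y)) →
    (∀ n k : ℕ, 1 ≤ n → 1 ≤ k → v (algebraMap (𝓞 K) K (a n)) < 1 →
      v (algebraMap (𝓞 K) K (a (k * n))) = v (algebraMap (𝓞 K) K (a n))) ∧
    (∀ n j : ℕ, 1 ≤ n → 1 ≤ j → v (algebraMap (𝓞 K) K (a n)) < 1 →
      v (algebraMap (𝓞 K) K (a j)) < 1 →
      v (algebraMap (𝓞 K) K (a (Nat.gcd n j))) < 1)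

open IsDedekindDomain IsDedekindDomain.HeightOneSpectrum WithZeroMulInt
open scoped Classical Multiplicative

namespace RigidAux

variable {K : Type*} [Field K] [NumberField K]

noncomputable def adicAbv (v : HeightOneSpectrum (𝓞 K)) : AbsoluteValue K ℝ where
  toFun x := toNNReal (ne_zero_of_lt (one_lt_two : (1 : NNReal) < 2)) (v.valuation K x)
  map_mul' x y := by simp [map_mul]
  nonneg' x := NNReal.coe_nonneg _
  eq_zero' x := by
    rw [NNReal.coe_eq_zero]
    constructor
    · intro h
      by_contra hx
      exact toNNReal_ne_zero (ne_zero_of_lt (one_lt_two : (1 : NNReal) < 2))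
        ((Valuation.ne_zero_iff _).mpr hx) h
    · rintro rfl; simp
  add_le' x y := by
    have h := Valuation.map_add (v.valuation K) x y
    have hm := (toNNReal_strictMono (one_lt_two : (1 : NNReal) < 2)).monotone
    calc ((toNNReal (ne_zero_of_lt (one_lt_two : (1 : NNReal) < 2)) (v.valuation K (x + y)) : NNReal) : ℝ)
        ≤ ((toNNReal (ne_zero_of_lt (one_lt_two : (1 : NNReal) < 2))
            (max (v.valuation K x) (v.valuation K y)) : NNReal) : ℝ) := by
          exact_mod_cast hm h
      _ = max ((toNNReal (ne_zero_of_lt (one_lt_two : (1 : NNReal) < 2)) (v.valuation K x) : NNReal) : ℝ)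
            ((toNNReal (ne_zero_of_lt (one_lt_two : (1 : NNReal) < 2)) (v.valuation K y) : NNReal) : ℝ) := by
          rw [hm.map_max]; exact NNReal.coe_max _ _
      _ ≤ _ := max_le_add_of_nonneg (NNReal.coe_nonneg _) (NNReal.coe_nonneg _)

lemma adicAbv_def (v : HeightOneSpectrum (𝓞 K)) (x : K) :
    adicAbv v x = ((toNNReal (ne_zero_of_lt (one_lt_two : (1 : NNReal) < 2))
      (v.valuation K x) : NNReal) : ℝ) := rfl

lemma adicAbv_nonarch (v : HeightOneSpectrum (𝓞 K)) (x y : K) :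
    adicAbv v (x + y) ≤ max (adicAbv v x) (adicAbv v y) := by
  have hm := (toNNReal_strictMono (one_lt_two : (1 : NNReal) < 2)).monotone
  have h := Valuation.map_add (v.valuation K) x y
  rw [adicAbv_def, adicAbv_def, adicAbv_def]
  calc ((toNNReal (ne_zero_of_lt (one_lt_two : (1 : NNReal) < 2)) (v.valuation K (x + y)) : NNReal) : ℝ)
      ≤ ((toNNReal (ne_zero_of_lt (one_lt_two : (1 : NNReal) < 2))
          (max (v.valuation K x) (v.valuation K y)) : NNReal) : ℝ) := by exact_mod_cast hm h
    _ = _ := by rw [hm.map_max]; exact NNReal.coe_max _ _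

lemma adicAbv_lt_one_iff (v : HeightOneSpectrum (𝓞 K)) (r : 𝓞 K) :
    adicAbv v (algebraMap (𝓞 K) K r) < 1 ↔ r ∈ v.asIdeal := by
  rw [adicAbv_def, ← NNReal.coe_one, NNReal.coe_lt_coe, valuation_of_algebraMap,
    toNNReal_lt_one_iff (one_lt_two : (1 : NNReal) < 2), intValuation_apply,
    ← intValuation_apply, intValuation_lt_one_iff_dvd, Ideal.dvd_span_singleton]

lemma adicAbv_eq_iff (v : HeightOneSpectrum (𝓞 K)) (r s : 𝓞 K) :
    adicAbv v (algebraMap (𝓞 K) K r) = adicAbv v (algebraMap (𝓞 K) K s) ↔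
      v.intValuationDef r = v.intValuationDef s := by
  rw [adicAbv_def, adicAbv_def, NNReal.coe_inj]
  constructor
  · intro h
    have := (toNNReal_strictMono (one_lt_two : (1 : NNReal) < 2)).injective h
    rwa [valuation_of_algebraMap, valuation_of_algebraMap, intValuation_apply,
      intValuation_apply] at this
  · intro h
    rw [valuation_of_algebraMap, valuation_of_algebraMap, intValuation_apply,
      intValuation_apply, h]

lemma nonempty_hos : Nonempty (HeightOneSpectrum (𝓞 K)) := by
  obtain ⟨M, hM⟩ := Ideal.exists_maximal (𝓞 K)
  exact ⟨⟨M, hM.isPrime,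
    Ring.ne_bot_of_isMaximal_of_not_isField hM (NumberField.RingOfIntegers.not_isField K)⟩⟩

lemma span_eq_top (r : 𝓞 K) (hr : ∀ v : HeightOneSpectrum (𝓞 K), r ∉ v.asIdeal) :
    Ideal.span {r} = ⊤ := by
  by_contra h
  obtain ⟨M, hM, hle⟩ := Ideal.exists_le_maximal _ h
  exact hr ⟨M, hM.isPrime,
    Ring.ne_bot_of_isMaximal_of_not_isField hM (NumberField.RingOfIntegers.not_isField K)⟩
    (hle (Ideal.subset_span rfl))

lemma eq_zero_of_intVal_eq_zero {r : 𝓞 K} {v : HeightOneSpectrum (𝓞 K)}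
    (h : v.intValuationDef r = 0) : r = 0 := by
  by_contra hr
  exact v.intValuation_ne_zero r hr h

lemma count_eq_of_intVal_eq {r s : 𝓞 K} (hr : r ≠ 0) (hs : s ≠ 0)
    (v : HeightOneSpectrum (𝓞 K)) (h : v.intValuationDef r = v.intValuationDef s) :
    (Associates.mk v.asIdeal).count (Associates.mk (Ideal.span {r})).factors =
      (Associates.mk v.asIdeal).count (Associates.mk (Ideal.span {s})).factors := by
  rw [v.intValuationDef_if_neg hr, v.intValuationDef_if_neg hs] at h
  rw [WithZero.exp_inj] at h
  have := h
  omega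

lemma mem_iff_intVal_lt_one (v : HeightOneSpectrum (𝓞 K)) (r : 𝓞 K) :
    r ∈ v.asIdeal ↔ v.intValuationDef r < 1 := by
  rw [← intValuation_apply, intValuation_lt_one_iff_dvd, Ideal.dvd_span_singleton]

end RigidAux

open RigidAux

/-- If `{a_i}` is a rigid divisibility sequence in the ring of integers
`𝓞 K` of a number field `K`, then for all `i, j ≥ 1` the ideal generated by
`a_i` and `a_j` equals the ideal generated by `a_{gcd(i,j)}`. -/
theorem rigid_divisibility_span_pair {K : Type*} [Field K] [NumberField K]
    (a : ℕ → 𝓞 K) (hrds : IsRigidDivisibilitySequence a)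
    (i j : ℕ) (hi : 1 ≤ i) (hj : 1 ≤ j) :
    Ideal.span {a i, a j} = Ideal.span {a (Nat.gcd i j)} := by
  set d := Nat.gcd i j with hd_def
  have hd : 1 ≤ d := Nat.gcd_pos_of_pos_left j hi
  have hdi : d ∣ i := Nat.gcd_dvd_left i j
  have hdj : d ∣ j := Nat.gcd_dvd_right i j
  -- key facts per height-one prime
  have key1 : ∀ (v : HeightOneSpectrum (𝓞 K)) (n : ℕ), 1 ≤ n → d ∣ n →
      a d ∈ v.asIdeal → v.intValuationDef (a n) = v.intValuationDef (a d) := by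
    intro v n hn hdvd hmem
    obtain ⟨k, hk⟩ := hdvd
    have hk1 : 1 ≤ k := Nat.pos_of_ne_zero (by rintro rfl; simp at hk; omega)
    have h1 := (hrds (adicAbv v) (adicAbv_nonarch v)).1 d k hd hk1
      ((adicAbv_lt_one_iff v (a d)).mpr hmem)
    have h2 := (adicAbv_eq_iff v (a (k * d)) (a d)).mp h1
    rwa [show k * d = n by rw [hk, Nat.mul_comm]] at h2
  have key2 : ∀ v : HeightOneSpectrum (𝓞 K),
      a i ∈ v.asIdeal → a j ∈ v.asIdeal → a d ∈ v.asIdeal := by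
    intro v h1 h2
    have := (hrds (adicAbv v) (adicAbv_nonarch v)).2 i j hi hj
      ((adicAbv_lt_one_iff v (a i)).mpr h1) ((adicAbv_lt_one_iff v (a j)).mpr h2)
    exact (adicAbv_lt_one_iff v (a d)).mp this
  by_cases hg : a d = 0
  · obtain ⟨v⟩ : Nonempty (HeightOneSpectrum (𝓞 K)) := nonempty_hos
    have hmem : a d ∈ v.asIdeal := by rw [hg]; exact zero_mem _
    have hx : a i = 0 := by
      apply eq_zero_of_intVal_eq_zero (v := v)
      rw [key1 v i hi hdi hmem, hg, intValuationDef_zero]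
    have hy : a j = 0 := by
      apply eq_zero_of_intVal_eq_zero (v := v)
      rw [key1 v j hj hdj hmem, hg, intValuationDef_zero]
    rw [hx, hy, hg, Set.pair_eq_singleton]
  by_cases hx : a i = 0
  · have h1 : ∀ v : HeightOneSpectrum (𝓞 K), a d ∉ v.asIdeal := by
      intro v hmem
      have h := key1 v i hi hdi hmem
      rw [hx, intValuationDef_zero] at h
      exact hg (eq_zero_of_intVal_eq_zero (v := v) h.symm)
    have h2 : ∀ v : HeightOneSpectrum (𝓞 K), a j ∉ v.asIdeal := by
      intro v hmem
      exact h1 v (key2 v (by rw [hx]; exact zero_mem _) hmem)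
    have hJ : Ideal.span {a d} = ⊤ := span_eq_top _ h1
    have hI : Ideal.span {a i, a j} = ⊤ := by
      rw [eq_top_iff, ← span_eq_top (a j) h2]
      exact Ideal.span_mono (by simp)
    rw [hI, hJ]
  by_cases hy : a j = 0
  · have h1 : ∀ v : HeightOneSpectrum (𝓞 K), a d ∉ v.asIdeal := by
      intro v hmem
      have h := key1 v j hj hdj hmem
      rw [hy, intValuationDef_zero] at h
      exact hg (eq_zero_of_intVal_eq_zero (v := v) h.symm)
    have h2 : ∀ v : HeightOneSpectrum (𝓞 K), a i ∉ v.asIdeal := by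
      intro v hmem
      exact h1 v (key2 v hmem (by rw [hy]; exact zero_mem _))
    have hJ : Ideal.span {a d} = ⊤ := span_eq_top _ h1
    have hI : Ideal.span {a i, a j} = ⊤ := by
      rw [eq_top_iff, ← span_eq_top (a i) h2]
      exact Ideal.span_mono (by simp)
    rw [hI, hJ]
  -- main case: all nonzero
  have hxne : (Ideal.span {a i} : Ideal (𝓞 K)) ≠ 0 := by
    simp only [Ideal.zero_eq_bot, ne_eq, Ideal.span_singleton_eq_bot]; exact hx
  have hyne : (Ideal.span {a j} : Ideal (𝓞 K)) ≠ 0 := by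
    simp only [Ideal.zero_eq_bot, ne_eq, Ideal.span_singleton_eq_bot]; exact hy
  have hJne : (Ideal.span {a d} : Ideal (𝓞 K)) ≠ 0 := by
    simp only [Ideal.zero_eq_bot, ne_eq, Ideal.span_singleton_eq_bot]; exact hg
  have hIne : (Ideal.span {a i, a j} : Ideal (𝓞 K)) ≠ 0 := by
    intro h
    apply hxne
    rw [Ideal.zero_eq_bot] at h ⊢
    exact le_bot_iff.mp (h ▸ Ideal.span_mono (by simp))
  rw [← associated_iff_eq]
  rw [← Associates.mk_eq_mk_iff_associated]
  apply Associates.eq_of_eq_counts (Associates.mk_ne_zero.mpr hIne) (Associates.mk_ne_zero.mpr hJne)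
  intro P hP
  obtain ⟨P', rfl⟩ := Associates.mk_surjective P
  have hPirr : Irreducible P' := Associates.irreducible_mk.mp hP
  have hprime : Prime P' := UniqueFactorizationMonoid.irreducible_iff_prime.mp hPirr
  set v : HeightOneSpectrum (𝓞 K) :=
    ⟨P', Ideal.isPrime_of_prime hprime, by
      rw [← Ideal.zero_eq_bot]; exact hprime.ne_zero⟩ with hv
  have hva : v.asIdeal = P' := rfl
  by_cases hmem : a d ∈ v.asIdeal
  · have e1 := count_eq_of_intVal_eq hx hg v (key1 v i hi hdi hmem)
    have e2 := count_eq_of_intVal_eq hy hg v (key1 v j hj hdj hmem)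
    rw [hva] at e1 e2
    have hle1 : (Associates.mk P').count (Associates.mk (Ideal.span {a i, a j})).factors
        ≤ (Associates.mk P').count (Associates.mk (Ideal.span {a i})).factors :=
      Associates.count_le_count_of_le (Associates.mk_ne_zero.mpr hxne) hP
        (Associates.mk_le_mk_iff_dvd.mpr (Ideal.dvd_iff_le.mpr (Ideal.span_mono (by simp))))
    set cJ := (Associates.mk P').count (Associates.mk (Ideal.span {a d})).factors with hcJ
    have hpowx : Ideal.span {a i} ≤ P' ^ cJ := by
      apply Ideal.le_of_dvd
      rw [← Associates.mk_dvd_mk, Associates.mk_pow]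
      exact (Associates.prime_pow_dvd_iff_le (Associates.mk_ne_zero.mpr hxne) hP).mpr
        (le_of_eq e1.symm)
    have hpowy : Ideal.span {a j} ≤ P' ^ cJ := by
      apply Ideal.le_of_dvd
      rw [← Associates.mk_dvd_mk, Associates.mk_pow]
      exact (Associates.prime_pow_dvd_iff_le (Associates.mk_ne_zero.mpr hyne) hP).mpr
        (le_of_eq e2.symm)
    have hIpow : Ideal.span {a i, a j} ≤ P' ^ cJ := by
      rw [Ideal.span_insert]
      exact sup_le hpowx hpowy
    have hge : cJ ≤ (Associates.mk P').count (Associates.mk (Ideal.span {a i, a j})).factors := by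
      apply (Associates.prime_pow_dvd_iff_le (Associates.mk_ne_zero.mpr hIne) hP).mp
      rw [← Associates.mk_pow]
      exact Associates.mk_le_mk_iff_dvd.mpr (Ideal.dvd_iff_le.mpr hIpow)
    exact le_antisymm (hle1.trans (le_of_eq e1)) hge
  · have hcJ : (Associates.mk P').count (Associates.mk (Ideal.span {a d})).factors = 0 := by
      by_contra h
      exact hmem (hva ▸ Ideal.dvd_span_singleton.mp
        ((Associates.count_ne_zero_iff_dvd hJne hPirr).mp h))
    have hor : a i ∉ v.asIdeal ∨ a j ∉ v.asIdeal := by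
      by_contra h
      push_neg at h
      exact hmem (key2 v h.1 h.2)
    rw [hcJ]
    rcases hor with h | h
    · have hcx : (Associates.mk P').count (Associates.mk (Ideal.span {a i})).factors = 0 := by
        by_contra hc
        exact h (hva ▸ Ideal.dvd_span_singleton.mp
          ((Associates.count_ne_zero_iff_dvd hxne hPirr).mp hc))
      have hmono : (Associates.mk P').count (Associates.mk (Ideal.span {a i, a j})).factors
          ≤ (Associates.mk P').count (Associates.mk (Ideal.span {a i})).factors :=
        Associates.count_le_count_of_le (Associates.mk_ne_zero.mpr hxne) hP
          (Associates.mk_le_mk_iff_dvd.mpr (Ideal.dvd_iff_le.mpr (Ideal.span_mono (by simp))))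
      omega
    · have hcy : (Associates.mk P').count (Associates.mk (Ideal.span {a j})).factors = 0 := by
        by_contra hc
        exact h (hva ▸ Ideal.dvd_span_singleton.mp
          ((Associates.count_ne_zero_iff_dvd hyne hPirr).mp hc))
      have hmono : (Associates.mk P').count (Associates.mk (Ideal.span {a i, a j})).factors
          ≤ (Associates.mk P').count (Associates.mk (Ideal.span {a j})).factors :=
        Associates.count_le_count_of_le (Associates.mk_ne_zero.mpr hyne) hP
          (Associates.mk_le_mk_iff_dvd.mpr (Ideal.dvd_iff_le.mpr (Ideal.span_mono (by simp))))
      omega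
end

section
/- Let f(x) = x^d + c be post-critically finite with exact type (m,n), K = ℚ(c), and a_i = f^i(0) ∈ O_K. Then for all i, j ≥ 1 with gcd(i,n) = gcd(j,n), the ideals (a_i) and (a_j) of O_K are equal. In particular (a_i) = (a_{gcd(i,n)}) for all i. -/
open UniqueFactorizationMonoid

section seq

variable {R : Type*} [CommRing R] {d : ℕ} {c : R} {a : ℕ → R}

lemma aux_weak_dvd (ha0 : a 0 = 0) (harec : ∀ i, a (i + 1) = a i ^ d + c) :
    ∀ u v, a u ∣ a (u + v) - a v := by
  intro u v
  induction v with
  | zero => simpa [ha0] using dvd_refl (a u)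
  | succ v ih =>
    have h1 : a (u + (v + 1)) = a (u + v) ^ d + c := by
      rw [show u + (v + 1) = (u + v) + 1 by ring, harec]
    have h2 : a (u + (v + 1)) - a (v + 1) = a (u + v) ^ d - a v ^ d := by
      rw [h1, harec]; ring
    rw [h2]
    exact ih.trans (sub_dvd_pow_sub_pow _ _ d)

lemma aux_strong_dvd (ha0 : a 0 = 0) (harec : ∀ i, a (i + 1) = a i ^ d + c) (hd : 1 ≤ d) :
    ∀ u v, 1 ≤ v → a u ^ d ∣ a (u + v) - a v := by
  intro u v hv
  induction v with
  | zero => omega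
  | succ v ih =>
    rcases Nat.eq_zero_or_pos v with rfl | hv'
    · have h2 : a (u + 1) - a 1 = a u ^ d := by
        rw [harec, show (1:ℕ) = 0 + 1 by rfl, harec, ha0, zero_pow (by omega)]; ring
      rw [h2]
    · have h1 : a (u + (v + 1)) = a (u + v) ^ d + c := by
        rw [show u + (v + 1) = (u + v) + 1 by ring, harec]
      have h2 : a (u + (v + 1)) - a (v + 1) = a (u + v) ^ d - a v ^ d := by
        rw [h1, harec]; ring
      rw [h2]
      exact (ih hv').trans (sub_dvd_pow_sub_pow _ _ d)

lemma aux_dvd_mul (ha0 : a 0 = 0) (harec : ∀ i, a (i + 1) = a i ^ d + c) :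
    ∀ u k, a u ∣ a (k * u) := by
  intro u k
  induction k with
  | zero => simp [ha0]
  | succ k ih =>
    have h1 : (k + 1) * u = u + k * u := by ring
    have h2 : a (u + k * u) = (a (u + k * u) - a (k * u)) + a (k * u) := by ring
    rw [h1, h2]
    exact dvd_add (aux_weak_dvd ha0 harec u (k * u)) ih

end seq


lemma aux_exact {R : Type*} [CommRing R] {d : ℕ} {c : R} {a : ℕ → R}
    (ha0 : a 0 = 0) (harec : ∀ i, a (i + 1) = a i ^ d + c) (hd : 2 ≤ d)
    (P : Ideal R) {e : ℕ} (he : 1 ≤ e) {u : ℕ} (hu : 1 ≤ u)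
    (h1 : a u ∈ P ^ e) (h2 : a u ∉ P ^ (e + 1)) :
    ∀ k, 1 ≤ k → a (k * u) ∈ P ^ e ∧ a (k * u) ∉ P ^ (e + 1) := by
  intro k hk
  induction k with
  | zero => omega
  | succ k ih =>
    rcases Nat.eq_zero_or_pos k with rfl | hk'
    · simpa using ⟨h1, h2⟩
    · obtain ⟨hm1, hm2⟩ := ih hk'
      obtain ⟨z, hz⟩ := aux_strong_dvd ha0 harec (by omega) (k * u) u hu
      have hidx : (k + 1) * u = k * u + u := by ring
      have hrep : a ((k + 1) * u) = a u + a (k * u) ^ d * z := by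
        rw [hidx]
        linear_combination hz
      have hpowmem : a (k * u) ^ d * z ∈ P ^ (e + 1) := by
        have hp1 : a (k * u) ^ d ∈ (P ^ e) ^ d := Ideal.pow_mem_pow hm1 d
        rw [← pow_mul] at hp1
        have hle : P ^ (e * d) ≤ P ^ (e + 1) := Ideal.pow_le_pow_right (by nlinarith)
        exact Ideal.mul_mem_right z _ (hle hp1)
      constructor
      · rw [hrep]
        exact add_mem h1 ((Ideal.pow_le_pow_right (by omega) : P ^ (e+1) ≤ P ^ e) hpowmem)
      · intro hcon
        apply h2
        have hrep2 : a u = a ((k + 1) * u) - a (k * u) ^ d * z := by rw [hrep]; ring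
        rw [hrep2]
        exact sub_mem hcon hpowmem


lemma aux_per' {R : Type*} [CommRing R] {d : ℕ} {c : R} {a : ℕ → R}
    (harec : ∀ i, a (i + 1) = a i ^ d + c) {m n : ℕ} (hmn : a (m + n) = a m) :
    ∀ s, m ≤ s → a (s + n) = a s := by
  intro s hs
  induction s, hs using Nat.le_induction with
  | base => exact hmn
  | succ s hs ih =>
    have h : s + 1 + n = (s + n) + 1 := by ring
    rw [h, harec, ih, ← harec]

lemma aux_per_mod {R : Type*} [CommRing R] {d : ℕ} {c : R} {a : ℕ → R}
    (harec : ∀ i, a (i + 1) = a i ^ d + c) {m n : ℕ} (hmn : a (m + n) = a m) :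
    ∀ x y, m ≤ x → m ≤ y → x % n = y % n → a x = a y := by
  have key : ∀ t s, m ≤ s → a (s + t * n) = a s := by
    intro t
    induction t with
    | zero => simp
    | succ t ih =>
      intro s hs
      have h : s + (t + 1) * n = (s + t * n) + n := by ring
      rw [h, aux_per' harec hmn _ (by omega), ih s hs]
  have main : ∀ x y, m ≤ x → m ≤ y → x ≤ y → x % n = y % n → a x = a y := by
    intro x y hx hy hxy hmod
    rcases Nat.eq_zero_or_pos n with rfl | hn
    · obtain rfl : x = y := by simpa using hmod
      rfl
    · obtain ⟨t, ht⟩ := (Nat.modEq_iff_dvd' hxy).mp hmod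
      have h : y = x + t * n := by rw [Nat.mul_comm]; omega
      rw [h, key t x hx]
  intro x y hx hy hmod
  rcases le_total x y with h | h
  · exact main x y hx hy h hmod
  · exact (main y x hy hx h hmod.symm).symm

lemma aux_bezout (i n m : ℕ) (hi : 1 ≤ i) (hn : 1 ≤ n) :
    ∃ k t : ℕ, 1 ≤ k ∧ m ≤ t ∧ k * i = Nat.gcd i n + t * n := by
  obtain ⟨i', hi'⟩ := Nat.gcd_dvd_left i n
  obtain ⟨n', hn'⟩ := Nat.gcd_dvd_right i n
  set g := Nat.gcd i n with hg
  have hg1 : 1 ≤ g := Nat.gcd_pos_of_pos_left n hi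
  have hi'1 : 1 ≤ i' := by nlinarith
  have hn'1 : 1 ≤ n' := by nlinarith
  set x := Nat.gcdA i n with hx
  set y := Nat.gcdB i n with hy
  have hbez : (g : ℤ) = i * x + n * y := Nat.gcd_eq_gcd_ab i n
  set M : ℕ := x.natAbs + y.natAbs + m + 1 with hM
  have hMx : (M : ℤ) ≥ x.natAbs + y.natAbs + m + 1 := by rw [hM]; push_cast; omega
  have hkz : (1 : ℤ) ≤ x + M * n' := by
    have h1 : (M : ℤ) * n' ≥ M := by
      have h2 : (1:ℤ) ≤ (n' : ℤ) := by exact_mod_cast hn'1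
      nlinarith [Int.natCast_nonneg M]
    have h2 : (x.natAbs : ℤ) ≥ -x := by omega
    omega
  have htz : (m : ℤ) ≤ M * i' - y := by
    have h1 : (M : ℤ) * i' ≥ M := by
      have h2 : (1:ℤ) ≤ (i' : ℤ) := by exact_mod_cast hi'1
      nlinarith [Int.natCast_nonneg M]
    have h2 : (y.natAbs : ℤ) ≥ y := by omega
    omega
  refine ⟨(x + M * n').toNat, (M * i' - y).toNat, ?_, ?_, ?_⟩
  · exact (Int.le_toNat (by omega)).mpr hkz
  · exact (Int.le_toNat (by omega)).mpr htz
  · have hcomm : (i : ℤ) * n' = (n : ℤ) * i' := by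
      have h3 : (i : ℤ) = g * i' := by exact_mod_cast hi'
      have h4 : (n : ℤ) = g * n' := by exact_mod_cast hn'
      rw [h3, h4]; ring
    have key : ((x + M * n').toNat : ℤ) * i = g + ((M * i' - y).toNat : ℤ) * n := by
      rw [Int.toNat_of_nonneg (by omega), Int.toNat_of_nonneg (by omega), hbez]
      nlinarith [hcomm]
    exact_mod_cast key

lemma aux_s (i n m : ℕ) (hi : 1 ≤ i) (hn : 1 ≤ n) :
    ∃ t : ℕ, 1 ≤ t ∧ m ≤ Nat.gcd i n + t * n ∧
      Nat.gcd (Nat.gcd i n + t * n) i = Nat.gcd i n := by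
  obtain ⟨i', hi'⟩ := Nat.gcd_dvd_left i n
  obtain ⟨n', hn'⟩ := Nat.gcd_dvd_right i n
  set g := Nat.gcd i n with hg
  have hg1 : 1 ≤ g := Nat.gcd_pos_of_pos_left n hi
  have hi'1 : 1 ≤ i' := by nlinarith
  have hn'1 : 1 ≤ n' := by nlinarith
  refine ⟨i' * (m + 1), Nat.mul_pos hi'1 m.succ_pos, ?_, ?_⟩
  · have h0 : m + 1 ≤ i' * (m + 1) * n := by
      calc m + 1 = 1 * (m + 1) * 1 := by ring
      _ ≤ i' * (m + 1) * n := Nat.mul_le_mul (Nat.mul_le_mul hi'1 le_rfl) hn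
    omega
  · have h1 : g + i' * (m + 1) * n = g * (1 + i' * ((m + 1) * n')) := by
      rw [hn']; ring
    rw [h1, hi', Nat.gcd_mul_left]
    have h2 : Nat.gcd (1 + i' * ((m + 1) * n')) i' = 1 := by
      rw [Nat.gcd_add_mul_left_left i' 1 ((m + 1) * n')]
      exact Nat.gcd_one_left i'
    rw [h2, Nat.mul_one]

open UniqueFactorizationMonoid in
lemma aux_count {R : Type*} [CommRing R] [IsDomain R] [IsDedekindDomain R]
    [DecidableEq (Ideal R)]
    {Q : Ideal R} (hQ : Prime Q) {x : R} (hx : x ≠ 0) :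
    x ∈ Q ^ (Multiset.count Q (normalizedFactors (Ideal.span {x}))) ∧
    x ∉ Q ^ (Multiset.count Q (normalizedFactors (Ideal.span {x})) + 1) := by
  set e := Multiset.count Q (normalizedFactors (Ideal.span {x})) with he
  have hsp : (Ideal.span {x} : Ideal R) ≠ 0 := by
    simpa [Ideal.zero_eq_bot, Ideal.span_singleton_eq_bot] using hx
  have hQ0 : (Q : Ideal R) ≠ 0 := hQ.ne_zero
  have hnfpow : ∀ j : ℕ, normalizedFactors (Q ^ j) = Multiset.replicate j Q := by
    intro j
    rw [hQ.irreducible.normalizedFactors_pow]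
    congr 1
    simp
  constructor
  · have hdvd : Q ^ e ∣ Ideal.span {x} := by
      rw [dvd_iff_normalizedFactors_le_normalizedFactors (pow_ne_zero e hQ0) hsp, hnfpow,
        Multiset.le_iff_count]
      intro b
      rw [Multiset.count_replicate]
      split
      · next h => rw [← h, ← he]
      · exact Nat.zero_le _
    exact (Ideal.span_singleton_le_iff_mem _).mp (Ideal.dvd_iff_le.mp hdvd)
  · intro hcon
    have hdvd : Q ^ (e + 1) ∣ Ideal.span {x} :=
      Ideal.dvd_iff_le.mpr ((Ideal.span_singleton_le_iff_mem _).mpr hcon)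
    rw [dvd_iff_normalizedFactors_le_normalizedFactors (pow_ne_zero _ hQ0) hsp, hnfpow,
      Multiset.le_iff_count] at hdvd
    have := hdvd Q
    rw [Multiset.count_replicate, if_pos rfl] at this
    omega

open NumberField

/-- Let `f(x) = x^d + c` be post-critically finite with exact type `(m,n)`,
`K = ℚ(c)`, `a_i = f^i(0) ∈ 𝓞 K`. Then for all `i, j ≥ 1` with `gcd(i,n) = gcd(j,n)`,
the ideals `(a_i)` and `(a_j)` of `𝓞 K` are equal; in particular
`(a_i) = (a_{gcd(i,n)})` for all `i ≥ 1`. -/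
theorem span_orbit_eq_of_gcd_eq {K : Type*} [Field K] [NumberField K]
    (d m n : ℕ) (hd : 2 ≤ d) (hm : 0 ≤ m) (hn : 1 ≤ n)
    (c : 𝓞 K)
    (hK : IntermediateField.adjoin ℚ {algebraMap (𝓞 K) K c} = ⊤)
    (f : 𝓞 K → 𝓞 K) (hf : f = fun x => x ^ d + c)
    (a : ℕ → 𝓞 K) (ha : ∀ i, a i = f^[i] 0)
    (hper : f^[m + n] 0 = f^[m] 0)
    (hmin : ∀ n', 0 < n' → n' < n → f^[m + n'] 0 ≠ f^[m] 0)
    (htail : ∀ k, k < m → f^[k + n] 0 ≠ f^[k] 0) :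
    (∀ i j : ℕ, 1 ≤ i → 1 ≤ j → Nat.gcd i n = Nat.gcd j n →
      Ideal.span {a i} = Ideal.span {a j}) ∧
    (∀ i : ℕ, 1 ≤ i → Ideal.span {a i} = Ideal.span {a (Nat.gcd i n)}) := by
  classical
  have ha0 : a 0 = 0 := by rw [ha]; rfl
  have harec : ∀ i, a (i + 1) = a i ^ d + c := by
    intro i
    rw [ha, ha, Function.iterate_succ_apply', hf]
  have hmn : a (m + n) = a m := by rw [ha, ha]; exact hper
  have key : ∀ i : ℕ, 1 ≤ i → Ideal.span {a i} = Ideal.span {a (Nat.gcd i n)} := by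
    intro i hi
    have hg1 : 1 ≤ Nat.gcd i n := Nat.gcd_pos_of_pos_left n hi
    by_cases hz : a i = 0
    · -- degenerate purely-zero case: then n ∣ i and a (gcd i n) = a n = 0
      have hfi : f^[i] 0 = 0 := by rw [← ha]; exact hz
      have hperi : ∀ x, a (x + i) = a x := by
        intro x
        rw [ha, ha, Function.iterate_add_apply, hfi]
      have hperiL : ∀ L x, a (x + L * i) = a x := by
        intro L
        induction L with
        | zero => simp
        | succ L ih =>
          intro x
          have h : x + (L + 1) * i = (x + L * i) + i := by ring
          rw [h, hperi, ih]
      have hmi : m ≤ m * i := by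
        have := Nat.mul_le_mul_left m hi
        omega
      have hpern : ∀ x, a (x + n) = a x := by
        intro x
        have h3 : a (x + n + m * i) = a (x + m * i) := by
          have hidx : x + n + m * i = (x + m * i) + n := by ring
          rw [hidx]
          exact aux_per_mod harec hmn _ _ (by omega) (by omega)
            (Nat.add_mod_right _ _)
        calc a (x + n) = a ((x + n) + m * i) := (hperiL m (x + n)).symm
        _ = a (x + m * i) := h3
        _ = a x := hperiL m x
      have hfullmod : ∀ x y, x % n = y % n → a x = a y := by
        intro x y hxy
        exact aux_per_mod harec (m := 0) (by simpa using hpern 0) x y (Nat.zero_le _)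
          (Nat.zero_le _) hxy
      have hni : n ∣ i := by
        by_contra hnd
        have hr : i % n ≠ 0 := fun h => hnd (Nat.dvd_of_mod_eq_zero h)
        have hrn : i % n < n := Nat.mod_lt _ (by omega)
        have hra : a (i % n) = 0 := by
          rw [hfullmod (i % n) i (Nat.mod_mod_of_dvd i dvd_rfl)]
          exact hz
        apply hmin (i % n) (Nat.pos_of_ne_zero hr) hrn
        have hfr : f^[i % n] 0 = 0 := by rw [← ha]; exact hra
        rw [Function.iterate_add_apply, hfr]
      have hgn : Nat.gcd i n = n := by
        rw [Nat.gcd_comm]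
        exact Nat.gcd_eq_left hni
      have han : a (Nat.gcd i n) = 0 := by
        obtain ⟨u, hu⟩ := hni
        rw [hgn, hfullmod n i (by rw [hu, Nat.mod_self, Nat.mul_mod_right])]
        exact hz
      rw [hz, han]
    · -- main case
      set g := Nat.gcd i n with hgdef
      obtain ⟨q, hq⟩ := Nat.gcd_dvd_left i n
      have hq1 : 1 ≤ q := by nlinarith
      have hdvd_gi : a g ∣ a i := by
        have := aux_dvd_mul ha0 harec g q
        rwa [← Nat.mul_comm, ← hq] at this
      have hag0 : a g ≠ 0 := by
        intro h0
        exact hz (by simpa [h0] using hdvd_gi)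
      refine le_antisymm (Ideal.span_singleton_le_span_singleton.mpr hdvd_gi) ?_
      rw [← Ideal.dvd_iff_le]
      have hspani : (Ideal.span {a i} : Ideal (𝓞 K)) ≠ 0 := by
        simpa [Ideal.zero_eq_bot, Ideal.span_singleton_eq_bot] using hz
      have hspang : (Ideal.span {a g} : Ideal (𝓞 K)) ≠ 0 := by
        simpa [Ideal.zero_eq_bot, Ideal.span_singleton_eq_bot] using hag0
      rw [UniqueFactorizationMonoid.dvd_iff_normalizedFactors_le_normalizedFactors hspani hspang,
        Multiset.le_iff_count]
      intro Q
      by_cases hQ : Q ∈ UniqueFactorizationMonoid.normalizedFactors (Ideal.span {a i})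
      swap
      · simp [Multiset.count_eq_zero_of_notMem hQ]
      have hQp : Prime Q := UniqueFactorizationMonoid.prime_of_normalized_factor Q hQ
      have hQisp : Q.IsPrime := Ideal.isPrime_of_prime hQp
      have hai_mem : a i ∈ Q := by
        have h1 : Ideal.span {a i} ≤ Q :=
          Ideal.le_of_dvd (UniqueFactorizationMonoid.dvd_of_mem_normalizedFactors hQ)
        exact (Ideal.span_singleton_le_iff_mem _).mp h1
      have mem_of_dvd : ∀ x y : 𝓞 K, x ∈ Q → x ∣ y → y ∈ Q := by
        intro x y hxm hxy
        obtain ⟨z, rfl⟩ := hxy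
        exact Ideal.mul_mem_right z Q hxm
      -- show a g ∈ Q
      have hag_mem : a g ∈ Q := by
        obtain ⟨k, t, hk, ht, hkt⟩ := aux_bezout i n m hi hn
        obtain ⟨t0, ht0, hst0, hgcds⟩ := aux_s i n m hi hn
        set s := g + t0 * n with hsdef
        have hs1 : 1 ≤ s := by omega
        have haki_mem : a (k * i) ∈ Q := mem_of_dvd _ _ hai_mem (aux_dvd_mul ha0 harec i k)
        have hkim : m ≤ k * i := by
          have h1 : t ≤ t * n := Nat.le_mul_of_pos_right t (by omega)
          omega
        have hals : a (k * i) = a s := by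
          apply aux_per_mod harec hmn _ _ hkim (by omega)
          rw [hkt]
          exact (Nat.add_mul_mod_self_right g t n).trans (Nat.add_mul_mod_self_right g t0 n).symm
        have has_mem : a s ∈ Q := hals ▸ haki_mem
        obtain ⟨α, β, hα, _, hαβ⟩ := aux_bezout s i 0 hs1 hi
        rw [hgcds] at hαβ
        have haαs_mem : a (α * s) ∈ Q := mem_of_dvd _ _ has_mem (aux_dvd_mul ha0 harec s α)
        have haβi_mem : a (β * i) ∈ Q := mem_of_dvd _ _ hai_mem (aux_dvd_mul ha0 harec i β)
        obtain ⟨z, hzeq⟩ := aux_strong_dvd ha0 harec (by omega) (β * i) g hg1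
        have hidx : β * i + g = α * s := by omega
        have hgrep : a g = a (α * s) - a (β * i) ^ d * z := by
          rw [← hidx]
          linear_combination -hzeq
        rw [hgrep]
        refine sub_mem haαs_mem (Ideal.mul_mem_right z Q ?_)
        have : a (β * i) ^ d = a (β * i) * a (β * i) ^ (d - 1) := by
          rw [← pow_succ']
          congr 1
          omega
        rw [this]
        exact Ideal.mul_mem_right _ Q haβi_mem
      -- transfer exact valuations
      obtain ⟨hgm, hgnm⟩ := aux_count hQp hag0
      set e := Multiset.count Q (UniqueFactorizationMonoid.normalizedFactors
        (Ideal.span {a g})) with hedef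
      have he1 : 1 ≤ e := by
        rcases Nat.eq_zero_or_pos e with h0 | h1
        · exfalso
          apply hgnm
          rw [h0]
          simpa using hag_mem
        · exact h1
      have hexact := aux_exact ha0 harec hd Q he1 hg1 hgm hgnm q hq1
      have hiq : q * g = i := by rw [Nat.mul_comm]; exact hq.symm
      rw [hiq] at hexact
      have hcount : Multiset.count Q (UniqueFactorizationMonoid.normalizedFactors
          (Ideal.span {a i})) = e :=
        Ideal.count_normalizedFactors_eq (hp := hQisp)
          ((Ideal.span_singleton_le_iff_mem _).mpr hexact.1)
          (fun hcon => hexact.2 ((Ideal.span_singleton_le_iff_mem _).mp hcon))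
      rw [hcount]
  refine ⟨?_, key⟩
  intro i j hi hj hgcd
  rw [key i hi, key j hj, hgcd]
end

section
/- Let f(x) = x^d + c be post-critically finite with exact type (m,n), m ≥ 1, K = ℚ(c), a_i = f^i(0) ∈ O_K. If n does not divide i, then a_i is a unit in O_K. -/
open NumberField

/-- A function `b : ℕ → α` has `s` as a (pure) period. -/
def OrbPer {α : Type*} (b : ℕ → α) (s : ℕ) : Prop := ∀ k, b (k + s) = b k

lemma orbPer_mul {α : Type*} {b : ℕ → α} {s : ℕ} (h : OrbPer b s) (L : ℕ) :
    OrbPer b (L * s) := by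
  induction L with
  | zero => intro k; simp
  | succ L ih =>
    intro k
    have e : k + (L + 1) * s = (k + L * s) + s := by ring
    rw [e, h, ih]

lemma orbPer_mod {α : Type*} {b : ℕ → α} {x : ℕ} (hx : OrbPer b x) :
    ∀ y, OrbPer b y → OrbPer b (y % x) := by
  intro y
  induction y using Nat.strong_induction_on with
  | _ y ih =>
    intro hy
    rcases Nat.eq_zero_or_pos x with hx0 | hx0
    · subst hx0; simpa using hy
    rcases Nat.lt_or_ge y x with h | h
    · rwa [Nat.mod_eq_of_lt h]
    · rw [Nat.mod_eq_sub_mod h]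
      refine ih (y - x) (by omega) ?_
      intro k
      have e : k + (y - x) + x = k + y := by omega
      calc b (k + (y - x)) = b (k + (y - x) + x) := (hx _).symm
        _ = b k := by rw [e]; exact hy k

lemma orbPer_gcd {α : Type*} {b : ℕ → α} :
    ∀ x y, OrbPer b x → OrbPer b y → OrbPer b (Nat.gcd x y) := by
  intro x y
  induction x, y using Nat.gcd.induction with
  | H0 y => intro _ hy; simpa using hy
  | H1 x y hx ih =>
    intro hxp hyp
    rw [Nat.gcd_rec]
    exact ih (orbPer_mod hxp y hyp) hxp

set_option maxHeartbeats 1000000 in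
set_option synthInstance.maxHeartbeats 400000 in
/-- Let `f(x) = x^d + c` be post-critically finite with exact type `(m,n)`,
`m ≥ 1`, `K = ℚ(c)`, `a_i = f^i(0) ∈ 𝓞 K`. If `n` does not divide `i`, then `a_i` is
a unit in `𝓞 K`. -/
theorem orbit_elem_isUnit_of_not_dvd {K : Type*} [Field K] [NumberField K]
    (d m n : ℕ) (hd : 2 ≤ d) (hm : 1 ≤ m) (hn : 1 ≤ n)
    (c : 𝓞 K)
    (hK : IntermediateField.adjoin ℚ {algebraMap (𝓞 K) K c} = ⊤)
    (f : 𝓞 K → 𝓞 K) (hf : f = fun x => x ^ d + c)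
    (a : ℕ → 𝓞 K) (ha : ∀ i, a i = f^[i] 0)
    (hper : f^[m + n] 0 = f^[m] 0)
    (hmin : ∀ n', 0 < n' → n' < n → f^[m + n'] 0 ≠ f^[m] 0)
    (htail : ∀ k, k < m → f^[k + n] 0 ≠ f^[k] 0)
    (i : ℕ) (hi : 1 ≤ i) (hni : ¬ n ∣ i) :
    IsUnit (a i) := by
  have ha0 : a 0 = 0 := by rw [ha]; rfl
  have hstep : ∀ k, a (k + 1) = (a k) ^ d + c := by
    intro k
    simp only [ha, Function.iterate_succ_apply', hf]
  have tail : ∀ k, m ≤ k → a (k + n) = a k := by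
    intro k hk
    induction k, hk using Nat.le_induction with
    | base => simp only [ha]; exact hper
    | succ k hk ih =>
      have e : k + 1 + n = (k + n) + 1 := by omega
      rw [e, hstep (k + n), ih, ← hstep k]
  have tailL : ∀ L k, m ≤ k → a (k + L * n) = a k := by
    intro L
    induction L with
    | zero => intro k hk; simp
    | succ L ih =>
      intro k hk
      have e : k + (L + 1) * n = (k + L * n) + n := by ring
      rw [e, tail _ (le_trans hk (Nat.le_add_right _ _)), ih k hk]
  by_contra hu
  have hsp : Ideal.span {a i} ≠ ⊤ := fun h => hu (Ideal.span_singleton_eq_top.mp h)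
  obtain ⟨M, hMmax, hMle⟩ := Ideal.exists_le_maximal _ hsp
  have haiM : a i ∈ M := hMle (Ideal.subset_span rfl)
  set g := Nat.gcd i n with hgdef
  have hg0 : 0 < g := Nat.gcd_pos_of_pos_left _ hi
  have hgn : g ∣ n := Nat.gcd_dvd_right i n
  have hgltn : g < n :=
    lt_of_le_of_ne (Nat.le_of_dvd hn hgn)
      (fun h => hni (h ▸ Nat.gcd_dvd_left i n))
  -- work modulo M
  set b : ℕ → (𝓞 K) ⧸ M := fun k => Ideal.Quotient.mk M (a k) with hbdef
  have hbstep : ∀ k, b (k + 1) = (b k) ^ d + Ideal.Quotient.mk M c := by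
    intro k
    simp only [hbdef]
    rw [hstep k]
    simp [map_add, map_pow]
  have hb0 : b 0 = 0 := by
    simp only [hbdef]
    rw [ha0]; exact map_zero _
  have hbi : b i = 0 := by
    simp only [hbdef]
    exact Ideal.Quotient.eq_zero_iff_mem.2 haiM
  have per_of : ∀ s, b s = b 0 → OrbPer b s := by
    intro s hs k
    induction k with
    | zero => rw [Nat.zero_add, hs]
    | succ k ih =>
      have e : k + 1 + s = (k + s) + 1 := by omega
      rw [e, hbstep (k + s), ih, hbstep k]
  have Pi : OrbPer b i := per_of i (by rw [hbi, hb0])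
  have Pmi : OrbPer b (m * i) := orbPer_mul Pi m
  have hmmi : m ≤ m * i := by
    calc m = m * 1 := (Nat.mul_one m).symm
      _ ≤ m * i := Nat.mul_le_mul_left m hi
  have Pn : OrbPer b n := by
    intro k
    have e : (k + n) + m * i = (k + m * i) + n := by ring
    calc b (k + n) = b ((k + n) + m * i) := (Pmi (k + n)).symm
      _ = b ((k + m * i) + n) := by rw [e]
      _ = b (k + m * i) := by
          simp only [hbdef]
          rw [tail (k + m * i) (le_trans hmmi (Nat.le_add_left _ _))]
      _ = b k := Pmi k
  have Pg : OrbPer b g := orbPer_gcd i n Pi Pn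
  -- the node N on the cycle where the ideal divides the orbit
  set N := m * i with hNdef
  have hmN : m ≤ N := hmmi
  have hbN : b N = 0 := by
    have h := Pmi 0
    rw [Nat.zero_add] at h
    rw [h, hb0]
  have hbNg : b (N + g) = 0 := by rw [Pg N, hbN]
  have hAM : a N ∈ M := by
    have h := hbN
    simp only [hbdef] at h
    exact Ideal.Quotient.eq_zero_iff_mem.1 h
  have hBM : a (N + g) ∈ M := by
    have h := hbNg
    simp only [hbdef] at h
    exact Ideal.Quotient.eq_zero_iff_mem.1 h
  -- the two cycle points are distinct (exactness of the period n)
  have hAB : a (N + g) ≠ a N := by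
    intro hE
    have shift : ∀ s, a (N + g + s) = a (N + s) := by
      intro s
      induction s with
      | zero => exact hE
      | succ s ih =>
        have h1 : a (N + g + (s + 1)) = (a (N + g + s)) ^ d + c := hstep _
        have h2 : a (N + (s + 1)) = (a (N + s)) ^ d + c := hstep _
        rw [h1, h2, ih]
    have hNle : N ≤ m + N * n := by
      calc N = N * 1 := (Nat.mul_one N).symm
        _ ≤ N * n := Nat.mul_le_mul_left N hn
        _ ≤ m + N * n := Nat.le_add_left _ _
    have hs := shift (m + N * n - N)
    have e1 : N + (m + N * n - N) = m + N * n := by omega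
    have e2 : N + g + (m + N * n - N) = (m + g) + N * n := by omega
    rw [e1, e2] at hs
    rw [tailL N (m + g) (Nat.le_add_right m g), tailL N m le_rfl] at hs
    rw [ha (m + g), ha m] at hs
    exact hmin g hg0 hgltn hs
  -- telescoping the difference around the cycle
  have key : ∀ s, 1 ≤ s → ∃ P : 𝓞 K,
      a (N + s) - a (N + g + s) =
        (∑ j ∈ Finset.range d, a N ^ j * a (N + g) ^ (d - 1 - j)) * P
          * (a N - a (N + g)) := by
    intro s hs
    induction s, hs using Nat.le_induction with
    | base =>
      refine ⟨1, ?_⟩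
      have h1 : a (N + 1) = (a N) ^ d + c := hstep N
      have h2 : a (N + g + 1) = (a (N + g)) ^ d + c := hstep (N + g)
      have hgs := geom_sum₂_mul (a N) (a (N + g)) d
      rw [h1, h2]
      linear_combination -hgs
    | succ s hs ih =>
      obtain ⟨P, hP⟩ := ih
      refine ⟨(∑ j ∈ Finset.range d, a (N + s) ^ j * a (N + g + s) ^ (d - 1 - j)) * P, ?_⟩
      have h1 : a (N + (s + 1)) = (a (N + s)) ^ d + c := hstep _
      have h2 : a (N + g + (s + 1)) = (a (N + g + s)) ^ d + c := hstep _
      have hgs := geom_sum₂_mul (a (N + s)) (a (N + g + s)) d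
      rw [h1, h2]
      linear_combination (∑ j ∈ Finset.range d, a (N + s) ^ j * a (N + g + s) ^ (d - 1 - j)) * hP - hgs
  obtain ⟨P, hP⟩ := key n hn
  rw [tail N hmN, tail (N + g) (le_trans hmN (Nat.le_add_right N g))] at hP
  have hABne : a N - a (N + g) ≠ 0 := sub_ne_zero.2 (Ne.symm hAB)
  have hz : ((∑ j ∈ Finset.range d, a N ^ j * a (N + g) ^ (d - 1 - j)) * P - 1)
      * (a N - a (N + g)) = 0 := by linear_combination -hP
  have h1 : (∑ j ∈ Finset.range d, a N ^ j * a (N + g) ^ (d - 1 - j)) * P = 1 := by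
    rcases mul_eq_zero.1 hz with h | h
    · exact sub_eq_zero.1 h
    · exact absurd h hABne
  have hC0M : (∑ j ∈ Finset.range d, a N ^ j * a (N + g) ^ (d - 1 - j)) ∈ M := by
    refine Ideal.sum_mem M ?_
    intro j hj
    rcases Nat.eq_zero_or_pos j with h0 | h0
    · subst h0
      have hB : a (N + g) ^ (d - 1) ∈ M := Ideal.pow_mem_of_mem M hBM _ (by omega)
      simpa using hB
    · exact Ideal.mul_mem_right _ M (Ideal.pow_mem_of_mem M hAM j h0)
  have hone : (1 : 𝓞 K) ∈ M := h1 ▸ Ideal.mul_mem_right P M hC0M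
  exact hMmax.ne_top ((Ideal.eq_top_iff_one M).2 hone)
end

section
/- Let d be a prime and f(x) = x^d + c post-critically finite with exact type (m,n), m ≥ 1, and suppose n does not divide m−1. If n divides i, then (a_i)^A = (d) as ideals of O_K, where A = d^{m−1}(d−1), K = ℚ(c), a_i = f^i(0). -/
open NumberField


private lemma one_sub_dvd_one_sub {R : Type*} [CommRing R] [IsDomain R] {d : ℕ} (hd : d.Prime)
    {α β : R} (hα : IsPrimitiveRoot α d) (hβ : β ^ d = 1) : (1 - α) ∣ (1 - β) := by
  haveI : NeZero d := ⟨hd.ne_zero⟩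
  obtain ⟨j, hj, rfl⟩ := hα.eq_pow_of_pow_eq_one hβ
  exact ⟨∑ t ∈ Finset.range j, α ^ t, by linear_combination geom_sum_mul α j⟩

private lemma assoc_sub_one_pow_prime {R : Type*} [CommRing R] [IsDomain R] {d : ℕ}
    (hd : d.Prime) {ζ : R} (hζ : IsPrimitiveRoot ζ d) :
    Associated ((ζ - 1) ^ (d - 1)) ((d : R)) := by
  haveI := Fact.mk hd
  have h0 : 0 < d := hd.pos
  have hprod : (d : R) = ∏ μ ∈ primitiveRoots d R, (1 - μ) := by
    have h := congrArg (Polynomial.eval 1) (Polynomial.cyclotomic_eq_prod_X_sub_primitiveRoots hζ)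
    rw [Polynomial.eval_one_cyclotomic_prime, Polynomial.eval_prod] at h
    simpa using h
  have hcard : (primitiveRoots d R).card = d - 1 := by
    rw [hζ.card_primitiveRoots, Nat.totient_prime hd]
  have h2 : Associated ((1 - ζ) ^ (d - 1)) (∏ μ ∈ primitiveRoots d R, (1 - μ)) := by
    rw [← hcard, ← Finset.prod_const]
    exact Associated.prod _ _ _ fun μ hμ => by
      have hμp : IsPrimitiveRoot μ d := (mem_primitiveRoots h0).1 hμ
      exact associated_of_dvd_dvd (one_sub_dvd_one_sub hd hζ hμp.pow_eq_one)
        (one_sub_dvd_one_sub hd hμp hζ.pow_eq_one)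
  have h3 : Associated (ζ - 1) (1 - ζ) := associated_of_dvd_dvd ⟨-1, by ring⟩ ⟨-1, by ring⟩
  have h4 : (∏ μ ∈ primitiveRoots d R, (1 - μ)) = (d : R) := hprod.symm
  exact h4 ▸ (h3.pow_pow.trans h2)

private lemma span_singleton_eq_span_singleton_of_mem_pow {R : Type*} [CommRing R] [IsDomain R]
    [IsDedekindDomain R] {x y : R} (hx : x ≠ 0) (hy : y ≠ 0)
    (h : ∀ P : Ideal R, P.IsPrime → P ≠ ⊥ → ∀ k : ℕ, x ∈ P ^ k ↔ y ∈ P ^ k) :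
    Ideal.span {x} = Ideal.span {y} := by
  classical
  have hx0 : Ideal.span {x} ≠ 0 := by
    simpa only [Ne, Ideal.zero_eq_bot, Ideal.span_singleton_eq_bot] using hx
  have hy0 : Ideal.span {y} ≠ 0 := by
    simpa only [Ne, Ideal.zero_eq_bot, Ideal.span_singleton_eq_bot] using hy
  have bridge : ∀ (z : R), z ≠ 0 → ∀ (Q : Ideal R), Q.IsPrime → Q ≠ ⊥ → ∀ k : ℕ,
      (k ≤ (UniqueFactorizationMonoid.normalizedFactors (Ideal.span {z})).count Q ↔
        z ∈ Q ^ k) := by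
    intro z hz Q hQ hQ0 k
    have hirr : Irreducible Q := (Ideal.prime_of_isPrime hQ0 hQ).irreducible
    have hz0 : Ideal.span {z} ≠ 0 := by
      simpa only [Ne, Ideal.zero_eq_bot, Ideal.span_singleton_eq_bot] using hz
    have e1 : z ∈ Q ^ k ↔ Q ^ k ∣ Ideal.span {z} := by
      rw [Ideal.dvd_iff_le, Ideal.span_singleton_le_iff_mem]
    have e2 : emultiplicity Q (Ideal.span {z}) =
        (((UniqueFactorizationMonoid.normalizedFactors (Ideal.span {z})).count Q : ℕ∞)) := by
      rw [UniqueFactorizationMonoid.emultiplicity_eq_count_normalizedFactors hirr hz0,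
        normalize_eq]
    rw [e1, pow_dvd_iff_le_emultiplicity, e2, Nat.cast_le]
  have hnf : UniqueFactorizationMonoid.normalizedFactors (Ideal.span {x})
      = UniqueFactorizationMonoid.normalizedFactors (Ideal.span {y}) := by
    refine Multiset.ext.mpr fun Q => ?_
    by_cases hQmem : Q ∈ UniqueFactorizationMonoid.normalizedFactors (Ideal.span {x}) ∨
        Q ∈ UniqueFactorizationMonoid.normalizedFactors (Ideal.span {y})
    · have hQp : Prime Q := by
        rcases hQmem with hmm | hmm
        exacts [UniqueFactorizationMonoid.prime_of_normalized_factor Q hmm,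
          UniqueFactorizationMonoid.prime_of_normalized_factor Q hmm]
      have hQ : Q.IsPrime := Ideal.isPrime_of_prime hQp
      have hQ0 : Q ≠ ⊥ := by
        have := hQp.ne_zero; simpa only [Ideal.zero_eq_bot] using this
      apply le_antisymm
      · exact (bridge y hy Q hQ hQ0 _).2 ((h Q hQ hQ0 _).1 ((bridge x hx Q hQ hQ0 _).1 le_rfl))
      · exact (bridge x hx Q hQ hQ0 _).2 ((h Q hQ hQ0 _).2 ((bridge y hy Q hQ hQ0 _).1 le_rfl))
    · push_neg at hQmem
      rw [Multiset.count_eq_zero_of_notMem hQmem.1, Multiset.count_eq_zero_of_notMem hQmem.2]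
  have h1 := UniqueFactorizationMonoid.prod_normalizedFactors hx0
  have h2 := UniqueFactorizationMonoid.prod_normalizedFactors hy0
  rw [← associated_iff_eq]
  refine h1.symm.trans ?_
  rw [hnf]
  exact h2

/-- Let `d` be a prime and `f(x) = x^d + c` post-critically finite with
exact type `(m,n)`, `m ≥ 1`, and suppose `n ∤ m−1`. If `n ∣ i`, then
`(a_i)^A = (d)` as ideals of `𝓞 K`, where `A = d^(m−1)·(d−1)`, `K = ℚ(c)`,
`a_i = f^i(0)`. -/
theorem span_orbit_pow_eq_span_d_of_not_dvd {K : Type*} [Field K] [NumberField K]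
    (d m n : ℕ) (hd : d.Prime) (hm : 1 ≤ m) (hn : 1 ≤ n)
    (c : 𝓞 K)
    (hK : IntermediateField.adjoin ℚ {algebraMap (𝓞 K) K c} = ⊤)
    (f : 𝓞 K → 𝓞 K) (hf : f = fun x => x ^ d + c)
    (a : ℕ → 𝓞 K) (ha : ∀ i, a i = f^[i] 0)
    (hper : f^[m + n] 0 = f^[m] 0)
    (hmin : ∀ n', 0 < n' → n' < n → f^[m + n'] 0 ≠ f^[m] 0)
    (htail : ∀ k, k < m → f^[k + n] 0 ≠ f^[k] 0)
    (hnm : ¬ n ∣ (m - 1))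
    (i : ℕ) (hi : 1 ≤ i) (hni : n ∣ i) :
    (Ideal.span {a i}) ^ (d ^ (m - 1) * (d - 1)) = Ideal.span {(d : 𝓞 K)} := by
  classical
  have hd2 : 2 ≤ d := hd.two_le
  have hm2 : 2 ≤ m := by
    by_contra hc2
    have : m = 1 := by omega
    exact hnm (by rw [this]; exact dvd_zero n)
  have ha0 : a 0 = 0 := by rw [ha]; rfl
  have hrec : ∀ k, a (k + 1) = a k ^ d + c := by
    intro k; rw [ha, ha, Function.iterate_succ_apply', hf]
  have hshift : ∀ s t : ℕ, a (t + s) = f^[t] (a s) := by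
    intro s t; rw [ha, ha, Function.iterate_add_apply]
  have hpern : ∀ k, m ≤ k → a (k + n) = a k := by
    intro k hk
    obtain ⟨t, rfl⟩ := Nat.exists_eq_add_of_le hk
    have h1 : a (t + (m + n)) = f^[t] (a (m + n)) := hshift _ _
    have h2 : a (t + m) = f^[t] (a m) := hshift _ _
    have h3 : a (m + n) = a m := by rw [ha, ha]; exact hper
    rw [show m + t + n = t + (m + n) by omega, h1, h3, ← h2, show t + m = m + t by omega]
  have hpermul : ∀ k t, m ≤ k → a (k + t * n) = a k := by
    intro k t hk
    induction t with
    | zero => simp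
    | succ t ihh =>
      rw [show k + (t + 1) * n = (k + t * n) + n by ring, hpern _ (by omega), ihh]
  have hperi : ∀ k, m ≤ k → a (k + i) = a k := by
    intro k hk
    obtain ⟨t, rfl⟩ := hni
    rw [show k + n * t = k + t * n by ring]
    exact hpermul k t hk
  have hBne : ∀ k, k < m → a (k + i) ≠ a k := by
    intro k hk heq
    have hiter : ∀ t, a (k + t * i) = a k := by
      intro t
      induction t with
      | zero => simp
      | succ t ihh =>
        have e1 : a (i + (k + t * i)) = f^[i] (a (k + t * i)) := hshift _ _
        have e2 : a (i + k) = f^[i] (a k) := hshift _ _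
        rw [show k + (t + 1) * i = i + (k + t * i) by ring, e1, ihh, ← e2,
          show i + k = k + i by omega, heq]
    have hK' : a (k + m * i) = a k := hiter m
    have hge : m ≤ k + m * i := by
      have h1 : m * 1 ≤ m * i := Nat.mul_le_mul_left m hi
      omega
    have hfin : a (k + n) = a k := by
      have h1 : a ((k + m * i) + n) = a (k + m * i) := hpern _ hge
      have h2 : a (n + (k + m * i)) = f^[n] (a (k + m * i)) := hshift _ _
      have h3 : a (n + k) = f^[n] (a k) := hshift _ _
      calc a (k + n) = a (n + k) := by rw [add_comm]
        _ = f^[n] (a k) := h3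
        _ = f^[n] (a (k + m * i)) := by rw [hK']
        _ = a (n + (k + m * i)) := h2.symm
        _ = a ((k + m * i) + n) := by rw [add_comm]
        _ = a (k + m * i) := h1
        _ = a k := hK'
    rw [ha (k + n), ha k] at hfin
    exact htail k hk hfin
  have hai0 : a i ≠ 0 := by
    have := hBne 0 (by omega)
    simpa [ha0] using this
  have hd0 : ((d : ℕ) : 𝓞 K) ≠ 0 := Nat.cast_ne_zero.mpr hd.ne_zero
  -- ζ construction
  have hM : m - 1 + 1 = m := by omega
  have hpowEq : a (m - 1 + i) ^ d = a (m - 1) ^ d := by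
    have h1 : a ((m - 1 + i) + 1) = a (m - 1 + i) ^ d + c := hrec _
    have h2 : a ((m - 1) + 1) = a (m - 1) ^ d + c := hrec _
    have h3 : a ((m - 1 + i) + 1) = a ((m - 1) + 1) := by
      rw [show (m - 1 + i) + 1 = m + i by omega, hM, hperi m le_rfl]
    rw [h1, h2] at h3
    exact add_right_cancel h3
  have ham1 : a (m - 1) ≠ 0 := by
    intro h0
    have h1 : a (m - 1 + i) = 0 := by
      have h2 := hpowEq
      rw [h0, zero_pow (by omega : d ≠ 0)] at h2
      exact pow_eq_zero_iff (by omega : d ≠ 0) |>.mp h2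
    exact hBne (m - 1) (by omega) (by rw [h1, h0])
  have hinj : Function.Injective (algebraMap (𝓞 K) K) := IsFractionRing.injective _ _
  have hamK : algebraMap (𝓞 K) K (a (m - 1)) ≠ 0 := fun hh => ham1 (hinj (by simpa using hh))
  set z : K := algebraMap (𝓞 K) K (a (m - 1 + i)) / algebraMap (𝓞 K) K (a (m - 1)) with hzdef
  have hzd : z ^ d = 1 := by
    rw [hzdef, div_pow, ← map_pow, ← map_pow, hpowEq, div_self (by exact pow_ne_zero _ hamK)]
  have hzint : IsIntegral ℤ z := by
    refine ⟨Polynomial.X ^ d - Polynomial.C 1, Polynomial.monic_X_pow_sub_C 1 (by omega), ?_⟩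
    simp [hzd]
  set ζ : 𝓞 K := IsIntegralClosure.mk' (𝓞 K) z hzint with hζdef
  have hζK : algebraMap (𝓞 K) K ζ = z := IsIntegralClosure.algebraMap_mk' _ _ _
  have hζ1 : a (m - 1 + i) = ζ * a (m - 1) := by
    apply hinj
    rw [map_mul, hζK, hzdef, div_mul_cancel₀ _ hamK]
  have hζd : ζ ^ d = 1 := by
    apply hinj
    rw [map_pow, hζK, hzd, map_one]
  have hζne : ζ ≠ 1 := by
    intro h1
    exact hBne (m - 1) (by omega) (by rw [hζ1, h1, one_mul])
  haveI := Fact.mk hd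
  have hprim : IsPrimitiveRoot ζ d := by
    refine ⟨hζd, fun l hl => ?_⟩
    have ho : orderOf ζ = d := orderOf_eq_prime hζd hζne
    exact ho ▸ orderOf_dvd_of_pow_eq_one hl
  have hζm1ne : ζ - 1 ≠ 0 := sub_ne_zero.mpr hζne
  have hcyc : Associated ((ζ - 1) ^ (d - 1)) ((d : ℕ) : 𝓞 K) :=
    assoc_sub_one_pow_prime hd hprim
  -- the B chain
  set B : ℕ → 𝓞 K := fun k => a (k + i) - a k with hBdef
  have hBne' : ∀ k, k < m → B k ≠ 0 := fun k hk => sub_ne_zero.mpr (hBne k hk)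
  have hB0 : B 0 = a i := by simp only [hBdef, zero_add, ha0, sub_zero]
  have hBm1 : B (m - 1) = (ζ - 1) * a (m - 1) := by
    simp only [hBdef]; rw [hζ1]; ring
  have hBsucc : ∀ k, B (k + 1) = a (k + i) ^ d - a k ^ d := by
    intro k
    have h1 : a ((k + i) + 1) = a (k + i) ^ d + c := hrec _
    have h2 : a (k + 1 + i) = a ((k + i) + 1) := by congr 1; omega
    simp only [hBdef]
    rw [h2, h1, hrec k]; ring
  have hBdvd : ∀ k, B k ∣ B (k + 1) := by
    intro k
    rw [hBsucc k]
    have : B k = a (k + i) - a k := rfl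
    rw [this]
    exact sub_dvd_pow_sub_pow _ _ d
  have hBexp : ∀ k, B (k + 1)
      = ∑ j ∈ Finset.range d, a k ^ j * B k ^ (d - j) * ((d.choose j : ℕ) : 𝓞 K) := by
    intro k
    have hx : a (k + i) = a k + B k := by simp only [hBdef]; ring
    have hap := add_pow (a k) (B k) d
    rw [hBsucc k, hx, hap, Finset.sum_range_succ]
    simp only [Nat.sub_self, pow_zero, mul_one, Nat.choose_self, Nat.cast_one]
    exact add_sub_cancel_right _ _
  rw [Ideal.span_singleton_pow]
  refine span_singleton_eq_span_singleton_of_mem_pow (pow_ne_zero _ hai0) hd0 ?_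
  intro P hP hP0
  -- membership helpers
  have hPne1 : (1 : 𝓞 K) ∉ P := fun h1 => hP.ne_top ((Ideal.eq_top_iff_one P).mpr h1)
  have hxy : ∀ {x y : 𝓞 K}, x - y ∈ P → (x ∈ P ↔ y ∈ P) := by
    intro x y hsub
    constructor
    · intro hx
      have := P.sub_mem hx hsub
      simpa using this
    · intro hy
      have := P.add_mem hsub hy
      simpa using this
  have hR1 : ∀ s t : ℕ, a s ∣ (a (s + t) - a t) := by
    intro s t
    induction t with
    | zero => simpa [ha0] using dvd_refl (a s)
    | succ t ihh =>
      have h1 : a (s + (t + 1)) - a (t + 1) = a (s + t) ^ d - a t ^ d := by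
        rw [show s + (t + 1) = (s + t) + 1 by omega, hrec, hrec]; ring
      rw [h1]
      exact ihh.trans (sub_dvd_pow_sub_pow _ _ d)
  have hmodP : ∀ s, a s ∈ P → ∀ q r : ℕ, (a (s * q + r) ∈ P ↔ a r ∈ P) := by
    intro s hs q r
    induction q with
    | zero => simp
    | succ q ihh =>
      obtain ⟨u, hu⟩ := hR1 s (s * q + r)
      have hmem : a (s + (s * q + r)) - a (s * q + r) ∈ P := by
        rw [hu]; exact Ideal.mul_mem_right _ _ hs
      rw [show s * (q + 1) + r = s + (s * q + r) by ring, hxy hmem]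
      exact ihh
  have eSpec : (∃ j, 1 ≤ j ∧ a j ∈ P) → ∀ j, a j ∈ P → n ∣ j := by
    intro hEx
    obtain ⟨he1, heP⟩ : 1 ≤ Nat.find hEx ∧ a (Nat.find hEx) ∈ P := Nat.find_spec hEx
    set e := Nat.find hEx with hedef
    have hemin : ∀ j, j < e → ¬(1 ≤ j ∧ a j ∈ P) := fun j hj => Nat.find_min hEx hj
    have hdvd_of_mem : ∀ j, a j ∈ P → e ∣ j := by
      intro j hj
      rcases Nat.eq_zero_or_pos j with rfl | hj1
      · exact dvd_zero e
      have hr : a (j % e) ∈ P := by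
        have h1 := (hmodP e heP (j / e) (j % e)).1
        rw [Nat.div_add_mod] at h1
        exact h1 hj
      rcases Nat.eq_zero_or_pos (j % e) with hr0 | hrpos
      · exact Nat.dvd_of_mod_eq_zero hr0
      · exact absurd ⟨hrpos, hr⟩ (hemin _ (Nat.mod_lt j (by omega)))
    have hmem_of_dvd : ∀ j, e ∣ j → a j ∈ P := by
      rintro j ⟨q, rfl⟩
      have h1 := (hmodP e heP q 0).2 (by rw [ha0]; exact P.zero_mem)
      simpa using h1
    have hen : e ∣ n := by
      have h1 : a (e * m) ∈ P := hmem_of_dvd _ ⟨m, rfl⟩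
      have h2 : a (e * m + n) = a (e * m) := hpern _ (Nat.le_mul_of_pos_left m (by omega))
      have h3 : a (e * m + n) ∈ P := by rw [h2]; exact h1
      have h4 : e ∣ e * m + n := hdvd_of_mem _ h3
      exact (Nat.dvd_add_right ⟨m, rfl⟩).mp h4
    have hee : e = n := by
      by_contra hne
      have hlt : e < n := lt_of_le_of_ne (Nat.le_of_dvd (by omega) hen) hne
      set C : ℕ → 𝓞 K := fun k => ∑ t ∈ Finset.range d, a (k + e) ^ t * a k ^ (d - 1 - t)
        with hCdef
      have hCstep : ∀ k, a ((k + 1) + e) - a (k + 1) = (a (k + e) - a k) * C k := by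
        intro k
        have h1 : a ((k + 1) + e) = a (k + e) ^ d + c := by
          rw [show (k + 1) + e = (k + e) + 1 by omega, hrec]
        have hg := geom_sum₂_mul (a (k + e)) (a k) d
        simp only [hCdef]
        rw [h1, hrec k]
        linear_combination -hg
      have hprodC : ∀ t : ℕ,
          a ((m + t) + e) - a (m + t) = (a (m + e) - a m) * ∏ k ∈ Finset.range t, C (m + k) := by
        intro t
        induction t with
        | zero => simp
        | succ t ihh =>
          have h1 := hCstep (m + t)
          rw [show (m + (t + 1)) + e = ((m + t) + 1) + e by omega,
            show m + (t + 1) = (m + t) + 1 by omega, h1, ihh, Finset.prod_range_succ]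
          ring
      have hmne : a (m + e) - a m ≠ 0 := by
        intro h0
        have heq : a (m + e) = a m := sub_eq_zero.mp h0
        rw [ha (m + e), ha m] at heq
        exact hmin e (by omega) hlt heq
      have hPn : a ((m + n) + e) - a (m + n) = a (m + e) - a m := by
        rw [show (m + n) + e = (m + e) + n by omega, hpern _ (by omega), hpern _ le_rfl]
      have hprod1 : (∏ k ∈ Finset.range n, C (m + k)) = 1 := by
        have h5 := hprodC n
        rw [hPn] at h5
        have h6 : (a (m + e) - a m) * 1 = (a (m + e) - a m) * ∏ k ∈ Finset.range n, C (m + k) := by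
          rw [mul_one]; exact h5
        exact (mul_left_cancel₀ hmne h6).symm
      set k₀ : ℕ := (m / e) * e + e with hk0def
      have hdm1 : e * (m / e) + m % e = m := Nat.div_add_mod m e
      have hdm2 : m % e < e := Nat.mod_lt m (by omega)
      have hdm3 : (m / e) * e = e * (m / e) := mul_comm _ _
      have hdm4 : (m / e) * e ≤ m := Nat.div_mul_le_self m e
      have hk₀m : m ≤ k₀ := by omega
      have hk₀n : k₀ < m + n := by omega
      have hek₀ : e ∣ k₀ := ⟨m / e + 1, by ring⟩
      have hCmem : C k₀ ∈ P := by
        simp only [hCdef]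
        refine Ideal.sum_mem _ fun t ht => ?_
        rcases Nat.eq_zero_or_pos t with rfl | htpos
        · have h6 : a k₀ ∈ P := hmem_of_dvd _ hek₀
          have h7 : a k₀ ^ (d - 1) ∈ P := by
            rw [show d - 1 = (d - 2) + 1 by omega, pow_succ]
            exact Ideal.mul_mem_left _ _ h6
          simpa using h7
        · have h6 : a (k₀ + e) ∈ P := hmem_of_dvd _ (Dvd.dvd.add hek₀ dvd_rfl)
          have h7 : a (k₀ + e) ^ t ∈ P := by
            rw [show t = (t - 1) + 1 by omega, pow_succ]
            exact Ideal.mul_mem_left _ _ h6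
          exact Ideal.mul_mem_right _ _ h7
      have hCdvd : C k₀ ∣ 1 := by
        rw [← hprod1]
        have ht₀ : k₀ - m ∈ Finset.range n := Finset.mem_range.mpr (by omega)
        have h8 : C k₀ = C (m + (k₀ - m)) := by congr 1; omega
        rw [h8]
        exact Finset.dvd_prod_of_mem _ ht₀
      obtain ⟨u, hu⟩ := hCdvd
      exact hPne1 (hu ▸ Ideal.mul_mem_right _ _ hCmem)
    intro j hj
    exact hee ▸ hdvd_of_mem j hj
  have hPprime : Prime P := Ideal.prime_of_isPrime hP0 hP
  have hPirr : Irreducible P := hPprime.irreducible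
  set v : 𝓞 K → ℕ :=
    fun x => (UniqueFactorizationMonoid.normalizedFactors (Ideal.span {x})).count P with hvdef
  have vmem : ∀ {x : 𝓞 K}, x ≠ 0 → ∀ {l : ℕ}, (x ∈ P ^ l ↔ l ≤ v x) := by
    intro x hx l
    have hx0 : Ideal.span {x} ≠ 0 := by
      simpa only [Ne, Ideal.zero_eq_bot, Ideal.span_singleton_eq_bot] using hx
    have e1 : x ∈ P ^ l ↔ P ^ l ∣ Ideal.span {x} := by
      rw [Ideal.dvd_iff_le, Ideal.span_singleton_le_iff_mem]
    have e2 : emultiplicity P (Ideal.span {x}) = ((v x : ℕ∞)) := by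
      rw [UniqueFactorizationMonoid.emultiplicity_eq_count_normalizedFactors hPirr hx0,
        normalize_eq, hvdef]
    rw [e1, pow_dvd_iff_le_emultiplicity, e2, Nat.cast_le]
  have vmul : ∀ {x y : 𝓞 K}, x ≠ 0 → y ≠ 0 → v (x * y) = v x + v y := by
    intro x y hx hy
    have hx0 : Ideal.span {x} ≠ 0 := by
      simpa only [Ne, Ideal.zero_eq_bot, Ideal.span_singleton_eq_bot] using hx
    have hy0 : Ideal.span {y} ≠ 0 := by
      simpa only [Ne, Ideal.zero_eq_bot, Ideal.span_singleton_eq_bot] using hy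
    simp only [hvdef]
    rw [← Ideal.span_singleton_mul_span_singleton,
      UniqueFactorizationMonoid.normalizedFactors_mul hx0 hy0, Multiset.count_add]
  have vpow : ∀ {x : 𝓞 K}, x ≠ 0 → ∀ j : ℕ, v (x ^ j) = j * v x := by
    intro x hx j
    simp only [hvdef]
    rw [← Ideal.span_singleton_pow, UniqueFactorizationMonoid.normalizedFactors_pow,
      Multiset.count_nsmul]
  have vspan : ∀ {x y : 𝓞 K}, Ideal.span {x} = Ideal.span {y} → v x = v y := by
    intro x y hh
    simp only [hvdef, hh]
  have vmemP : ∀ {x : 𝓞 K}, x ≠ 0 → (x ∈ P ↔ 1 ≤ v x) := by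
    intro x hx
    have := vmem hx (l := 1)
    rwa [pow_one] at this
  set V : ℕ := v ((d : ℕ) : 𝓞 K) with hVdef
  set w : ℕ := v (a i) with hwdef
  set u : ℕ := v (ζ - 1) with hudef
  have hVu : V = (d - 1) * u := by
    have h1 : V = v ((ζ - 1) ^ (d - 1)) :=
      vspan (Ideal.span_singleton_eq_span_singleton.mpr hcyc.symm)
    rw [h1, vpow hζm1ne]
  suffices hmain : d ^ (m - 1) * (d - 1) * w = V by
    intro k
    rw [vmem (pow_ne_zero _ hai0), vmem hd0, vpow hai0, ← hwdef, hmain, ← hVdef]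
  have ham1P : (∃ j, 1 ≤ j ∧ a j ∈ P) → a (m - 1) ∉ P := by
    intro hEx hmem
    exact hnm (eSpec hEx (m - 1) hmem)
  rcases Nat.eq_zero_or_pos V with hV0 | hVpos
  · -- case V = 0 : show w = 0
    have hw0 : w = 0 := by
      by_contra hw
      have haiP : a i ∈ P := (vmemP hai0).2 (by omega)
      have hEx : ∃ j, 1 ≤ j ∧ a j ∈ P := ⟨i, hi, haiP⟩
      have hchain : ∀ k, k ≤ m - 1 → a i ∣ B k := by
        intro k
        induction k with
        | zero => intro _; rw [hB0]
        | succ k ihh => intro hk; exact (ihh (by omega)).trans (hBdvd k)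
      have hBm1P : B (m - 1) ∈ P := by
        obtain ⟨t, ht⟩ := hchain (m - 1) le_rfl
        rw [ht]
        exact Ideal.mul_mem_right _ _ haiP
      rw [hBm1] at hBm1P
      rcases hP.mem_or_mem hBm1P with hz | hz
      · have h1 : 1 ≤ u := (vmemP hζm1ne).1 hz
        have h2 := Nat.mul_le_mul (show 1 ≤ d - 1 by omega) h1
        omega
      · exact ham1P hEx hz
    rw [hV0, hw0, mul_zero]
  · -- case V ≥ 1
    have hupos : 1 ≤ u := by
      rcases Nat.eq_zero_or_pos u with h0 | h
      · rw [h0, mul_zero] at hVu; omega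
      · exact h
    set s : ℕ → ℕ := fun k => v (B k) with hsdef
    have hs0 : s 0 = w := by simp only [hsdef, hB0, hwdef]
    have hsm1 : s (m - 1) = u + v (a (m - 1)) := by
      simp only [hsdef]
      rw [hBm1, vmul hζm1ne ham1]
    have hdmul : ∀ q : ℕ, d * q = (d - 1) * q + q := by
      intro q
      have h := Nat.sub_add_cancel (show 1 ≤ d by omega)
      calc d * q = (d - 1 + 1) * q := by rw [h]
        _ = (d - 1) * q + q := by ring
    have hEmem : ∀ k, k < m - 1 → B (k + 1) - B k ^ d ∈ P ^ (V + s k) := by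
      intro k hk
      have hBk : B k ≠ 0 := hBne' k (by omega)
      have hBkP : B k ∈ P ^ (s k) := (vmem hBk).2 le_rfl
      have hdP : ((d : ℕ) : 𝓞 K) ∈ P ^ V := (vmem hd0).2 le_rfl
      have hd1 : (d - 1) + 1 = d := by omega
      have hsplit : B (k + 1) - B k ^ d = ∑ j ∈ Finset.range (d - 1),
          a k ^ (j + 1) * B k ^ (d - (j + 1)) * ((d.choose (j + 1) : ℕ) : 𝓞 K) := by
        rw [hBexp k]
        have h8 := Finset.sum_range_succ'
          (fun j => a k ^ j * B k ^ (d - j) * ((d.choose j : ℕ) : 𝓞 K)) (d - 1)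
        rw [hd1] at h8
        rw [h8]
        simp only [pow_zero, one_mul, Nat.sub_zero, Nat.choose_zero_right, Nat.cast_one, mul_one]
        exact add_sub_cancel_right _ _
      rw [hsplit]
      refine Ideal.sum_mem _ fun j hj => ?_
      have hj1 : j + 1 < d := by
        have := Finset.mem_range.mp hj; omega
      obtain ⟨t, ht⟩ := hd.dvd_choose_self (Nat.succ_ne_zero j) hj1
      have hBpow : B k ^ (d - (j + 1)) ∈ P ^ (s k) := by
        rw [show d - (j + 1) = (d - (j + 1) - 1) + 1 by omega, pow_succ]
        exact Ideal.mul_mem_left _ _ hBkP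
      have hterm : a k ^ (j + 1) * B k ^ (d - (j + 1)) * ((d.choose (j + 1) : ℕ) : 𝓞 K)
          = (a k ^ (j + 1) * (t : 𝓞 K)) * (((d : ℕ) : 𝓞 K) * B k ^ (d - (j + 1))) := by
        rw [ht]; push_cast; ring
      rw [hterm, pow_add]
      exact Ideal.mul_mem_left _ _ (Ideal.mul_mem_mul hdP hBpow)
    have hBk1mem : ∀ k, k < m - 1 → B (k + 1) ∈ P ^ (min (V + s k) (d * s k)) := by
      intro k hk
      have hBk : B k ≠ 0 := hBne' k (by omega)
      have h1 : B k ^ d ∈ P ^ (d * s k) := by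
        refine (vmem (pow_ne_zero d hBk)).2 ?_
        rw [vpow hBk]
      have h2 : B (k + 1) = (B (k + 1) - B k ^ d) + B k ^ d := by ring
      rw [h2]
      refine Ideal.add_mem _ ?_ ?_
      · exact Ideal.pow_le_pow_right (min_le_left _ _) (hEmem k hk)
      · exact Ideal.pow_le_pow_right (min_le_right _ _) h1
    have hstep_exact : ∀ k, k < m - 1 → (d - 1) * s k < V → s (k + 1) = d * s k := by
      intro k hk hlt
      have hBk : B k ≠ 0 := hBne' k (by omega)
      have hBk1 : B (k + 1) ≠ 0 := hBne' (k + 1) (by omega)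
      have hdq := hdmul (s k)
      have hVq : d * s k + 1 ≤ V + s k := by omega
      have hlow : d * s k ≤ s (k + 1) := by
        have h3 := hBk1mem k hk
        rw [min_eq_right (by omega)] at h3
        exact (vmem hBk1).1 h3
      have hupp : ¬(d * s k + 1 ≤ s (k + 1)) := by
        intro hle
        have h1 : B (k + 1) ∈ P ^ (d * s k + 1) := (vmem hBk1).2 hle
        have h2 : B (k + 1) - B k ^ d ∈ P ^ (d * s k + 1) :=
          Ideal.pow_le_pow_right hVq (hEmem k hk)
        have h3 : B k ^ d ∈ P ^ (d * s k + 1) := by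
          have h4 : B k ^ d = B (k + 1) - (B (k + 1) - B k ^ d) := by ring
          rw [h4]
          exact Ideal.sub_mem _ h1 h2
        have h5 : d * s k + 1 ≤ v (B k ^ d) := (vmem (pow_ne_zero _ hBk)).1 h3
        rw [vpow hBk, show v (B k) = s k from rfl] at h5
        omega
      exact le_antisymm (Nat.lt_succ_iff.mp (Nat.not_le.mp hupp)) hlow
    have hstep_low : ∀ k, k < m - 1 → min (V + s k) (d * s k) ≤ s (k + 1) := by
      intro k hk
      exact (vmem (hBne' (k + 1) (by omega))).1 (hBk1mem k hk)
    have hExu' : ∃ k, u ≤ s k := ⟨m - 1, by rw [hsm1]; omega⟩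
    set k₀ := Nat.find hExu' with hk₀def
    have hk₀u : u ≤ s k₀ := Nat.find_spec hExu'
    have hk₀le : k₀ ≤ m - 1 := Nat.find_le (by rw [hsm1]; omega)
    have hbefore : ∀ k, k < k₀ → s k < u := by
      intro k hk
      have := Nat.find_min hExu' hk
      omega
    have hgeom : ∀ k, k ≤ k₀ → s k = d ^ k * w := by
      intro k
      induction k with
      | zero => intro _; rw [hs0, pow_zero, one_mul]
      | succ k ihh =>
        intro hk
        have hk' : k < k₀ := by omega
        have h1 : s k < u := hbefore k hk'
        have h2 : (d - 1) * s k < V := by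
          rw [hVu]
          exact Nat.mul_lt_mul_of_le_of_lt (le_refl (d - 1)) h1 (by omega)
        have h3 := hstep_exact k (by omega) h2
        rw [h3, ihh (by omega), pow_succ]
        ring
    have hwpos_of : 1 ≤ w → (a i ∈ P) := fun hw => (vmemP hai0).2 hw
    rcases eq_or_lt_of_le hk₀le with heq | hlt2
    · -- k₀ = m - 1
      have h1 : s (m - 1) = d ^ (m - 1) * w := by
        rw [← heq]; exact hgeom k₀ le_rfl
      have hw1 : 1 ≤ w := by
        by_contra hw
        have hww : w = 0 := by omega
        rw [hww, mul_zero] at h1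
        omega
      have hEx : ∃ j, 1 ≤ j ∧ a j ∈ P := ⟨i, hi, hwpos_of hw1⟩
      have ham1v : v (a (m - 1)) = 0 := by
        by_contra hc2
        exact ham1P hEx ((vmemP ham1).2 (by omega))
      rw [hsm1, ham1v, add_zero] at h1
      rw [hVu, h1]
      ring
    · -- k₀ < m - 1 : contradiction
      exfalso
      have hw1 : 1 ≤ w := by
        by_contra hw
        have h0 : s k₀ = 0 := by
          rw [hgeom k₀ le_rfl, show w = 0 by omega, mul_zero]
        omega
      have hEx : ∃ j, 1 ≤ j ∧ a j ∈ P := ⟨i, hi, hwpos_of hw1⟩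
      have ham1v : v (a (m - 1)) = 0 := by
        by_contra hc2
        exact ham1P hEx ((vmemP ham1).2 (by omega))
      have hVu' : u ≤ V := by
        rw [hVu]
        exact Nat.le_mul_of_pos_left u (by omega)
      have hgrow : ∀ t, k₀ + t ≤ m - 1 → s k₀ + t * u ≤ s (k₀ + t) := by
        intro t
        induction t with
        | zero => intro _; simp
        | succ t ihh =>
          intro hle
          have h1 := ihh (by omega)
          have h2 : u ≤ s (k₀ + t) := le_trans (by omega) h1
          have h3 := hstep_low (k₀ + t) (by omega)
          have h4 : s (k₀ + t) + u ≤ V + s (k₀ + t) := by omega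
          have h5 : s (k₀ + t) + u ≤ d * s (k₀ + t) := by
            have h6 := hdmul (s (k₀ + t))
            have h7 : (d - 1) * u ≤ (d - 1) * s (k₀ + t) := Nat.mul_le_mul_left (d - 1) h2
            have h7b : 1 * s (k₀ + t) ≤ (d - 1) * s (k₀ + t) :=
              Nat.mul_le_mul_right _ (by omega)
            omega
        -- combine
          have h8 : s (k₀ + t) + u ≤ s (k₀ + t + 1) := le_trans (le_min h4 h5) h3
          calc s k₀ + (t + 1) * u = (s k₀ + t * u) + u := by ring
            _ ≤ s (k₀ + t) + u := by omega
            _ ≤ s (k₀ + (t + 1)) := h8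
      have hfin := hgrow ((m - 1) - k₀) (by omega)
      rw [show k₀ + ((m - 1) - k₀) = m - 1 by omega] at hfin
      have h9 : 1 ≤ (m - 1) - k₀ := by omega
      have h10 : 1 * u ≤ ((m - 1) - k₀) * u := Nat.mul_le_mul_right u h9
      have h11 : s (m - 1) = u := by rw [hsm1, ham1v, add_zero]
      omega
end

section
/- Let d be a prime and f(x) = x^d + c post-critically finite with exact type (m,n), m ≥ 1, and suppose n divides m−1. If n divides i, then (a_i)^A = (d) as ideals of O_K, where A = (d^{m−1}−1)(d−1), K = ℚ(c), a_i = f^i(0). -/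
open NumberField

section Aux
variable {R : Type*} [CommRing R]

lemma aux_pow_add_sub (d : ℕ) (hd : d.Prime) (y b : R) :
    ∃ z : R, (y + b) ^ d - y ^ d = b ^ d + (d : R) * b * z := by
  classical
  obtain ⟨e, rfl⟩ : ∃ e, d = e + 1 := ⟨d - 1, by have := hd.two_le; omega⟩
  refine ⟨∑ i ∈ Finset.range e,
      (((e+1).choose (i+1) / (e+1) : ℕ) : R) * y ^ (i+1) * b ^ (e - i - 1), ?_⟩
  have hpow := add_pow y b (e+1)
  rw [Finset.sum_range_succ, Finset.sum_range_succ'] at hpow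
  have hterm : ∀ i ∈ Finset.range e,
      y ^ (i+1) * b ^ (e + 1 - (i+1)) * ((e+1).choose (i+1) : R)
        = ((e+1 : ℕ) : R) * b * ((((e+1).choose (i+1) / (e+1) : ℕ) : R) * y ^ (i+1) * b ^ (e - i - 1)) := by
    intro i hi
    have hi' := Finset.mem_range.mp hi
    have hdvd : (e+1) ∣ (e+1).choose (i+1) :=
      hd.dvd_choose_self (by omega) (by omega)
    have hc : ((e+1).choose (i+1) : R) = ((e+1 : ℕ) : R) * (((e+1).choose (i+1) / (e+1) : ℕ) : R) := by
      rw [← Nat.cast_mul, Nat.mul_div_cancel' hdvd]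
    have hb : b ^ (e + 1 - (i+1)) = b * b ^ (e - i - 1) := by
      have : e + 1 - (i + 1) = (e - i - 1) + 1 := by omega
      rw [this, pow_succ]
      ring
    rw [hc, hb]; ring
  rw [Finset.sum_congr rfl hterm, ← Finset.mul_sum] at hpow
  rw [hpow]
  simp only [Nat.sub_self, pow_zero, Nat.choose_self, Nat.choose_zero_right, Nat.cast_one, Nat.sub_zero]
  push_cast
  ring

end Aux

section Zeta
variable {R : Type*} [CommRing R] [IsDomain R]

lemma aux_one_sub_pow_assoc {d : ℕ} (hd : d.Prime) {ζ : R} (hζd : ζ ^ d = 1) {k : ℕ}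
    (hk0 : 0 < k) (hkd : k < d) : Associated (1 - ζ) (1 - ζ ^ k) := by
  have hdvd1 : ζ - 1 ∣ ζ ^ k - 1 := Dvd.intro_left _ (geom_sum_mul ζ k)
  refine associated_of_dvd_dvd ?_ ?_
  · rw [show (1:R) - ζ = -(ζ - 1) by ring, show (1:R) - ζ ^ k = -(ζ ^ k - 1) by ring,
      neg_dvd, dvd_neg]
    exact hdvd1
  · have hcop : Nat.Coprime k d := Nat.Coprime.symm (hd.coprime_iff_not_dvd.mpr
      (fun h => by have := Nat.le_of_dvd hk0 h; omega))
    obtain ⟨t, -, ht⟩ := Nat.exists_mul_mod_eq_one_of_coprime hcop hd.one_lt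
    have hpow : ζ ^ (k * t) = ζ := by
      conv_lhs => rw [← Nat.div_add_mod (k * t) d, ht]
      rw [pow_add, pow_mul, hζd, one_pow, one_mul, pow_one]
    have hdvd2 : ζ ^ k - 1 ∣ ζ ^ (k * t) - 1 := by
      rw [pow_mul]
      exact Dvd.intro_left _ (geom_sum_mul (ζ ^ k) t)
    rw [hpow] at hdvd2
    rw [show (1:R) - ζ = -(ζ - 1) by ring, show (1:R) - ζ ^ k = -(ζ ^ k - 1) by ring,
      neg_dvd, dvd_neg]
    exact hdvd2

lemma aux_span_sub_one_pow {d : ℕ} (hd : d.Prime) {ζ : R} (hζd : ζ ^ d = 1) (hζ1 : ζ ≠ 1) :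
    Ideal.span {ζ - 1} ^ (d - 1) = Ideal.span {(d : R)} := by
  have hfact : Fact d.Prime := ⟨hd⟩
  have hord : orderOf ζ = d := orderOf_eq_prime hζd hζ1
  have hprim : IsPrimitiveRoot ζ d := hord ▸ IsPrimitiveRoot.orderOf ζ
  obtain ⟨e, rfl⟩ : ∃ e, d = e + 1 := ⟨d - 1, by have := hd.two_le; omega⟩
  have hprod : ∏ k ∈ Finset.range e, (1 - ζ ^ (k + 1)) = (e : R) + 1 :=
    hprim.prod_one_sub_pow_eq_order
  have hassoc : Associated ((1 - ζ) ^ e) (((e+1 : ℕ) : R)) := by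
    have h1 : (1 - ζ) ^ e = ∏ _k ∈ Finset.range e, (1 - ζ) := by
      rw [Finset.prod_const, Finset.card_range]
    rw [h1, Nat.cast_add, Nat.cast_one, ← hprod]
    refine Associated.prod _ _ _ (fun k hk => ?_)
    exact aux_one_sub_pow_assoc hd hζd (Nat.succ_pos k) (by simpa using Finset.mem_range.mp hk)
  have hassoc2 : Associated ((ζ - 1) ^ e) (((e+1 : ℕ) : R)) := by
    refine Associated.trans ?_ hassoc
    exact Associated.pow_pow (associated_of_dvd_dvd ⟨-1, by ring⟩ ⟨-1, by ring⟩)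
  rw [Ideal.span_singleton_pow, show e + 1 - 1 = e from rfl]
  exact Ideal.span_singleton_eq_span_singleton.mpr hassoc2

end Zeta

section Ded
variable {R : Type*} [CommRing R] [IsDomain R] [IsDedekindDomain R]

lemma aux_le_emult_iff_mem {P : Ideal R} (x : R) (k : ℕ) :
    (k : ℕ∞) ≤ emultiplicity P (Ideal.span {x}) ↔ x ∈ P ^ k := by
  rw [← pow_dvd_iff_le_emultiplicity, Ideal.dvd_iff_le, Ideal.span_singleton_le_iff_mem]

lemma aux_emult_ne_top {P : Ideal R} (hP : P.IsPrime) {x : R} (hx : x ≠ 0) :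
    emultiplicity P (Ideal.span {x}) ≠ ⊤ := by
  rw [← lt_top_iff_ne_top, emultiplicity_lt_top]
  exact FiniteMultiplicity.of_not_isUnit
    (fun h => hP.ne_top (Ideal.isUnit_iff.mp h))
    (by simpa using hx)

lemma aux_ideal_eq_of_emult_eq {I J : Ideal R} (hI : I ≠ ⊥) (hJ : J ≠ ⊥)
    (h : ∀ P : Ideal R, P.IsPrime → P ≠ ⊥ → emultiplicity P I = emultiplicity P J) :
    I = J := by
  classical
  have key : ∀ I' J' : Ideal R, I' ≠ ⊥ → J' ≠ ⊥ →
      (∀ P : Ideal R, P.IsPrime → P ≠ ⊥ → emultiplicity P I' = emultiplicity P J') → I' ∣ J' := by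
    intro I' J' hI' hJ' h'
    rw [UniqueFactorizationMonoid.dvd_iff_normalizedFactors_le_normalizedFactors hI' hJ',
      Multiset.le_iff_count]
    intro q
    by_cases hq : q ∈ UniqueFactorizationMonoid.normalizedFactors I'
    · have hqp : Prime q := UniqueFactorizationMonoid.prime_of_normalized_factor q hq
      have hq0 : q ≠ ⊥ := hqp.ne_zero
      have hqP : q.IsPrime := Ideal.isPrime_of_prime hqp
      have hnq : normalize q = q := normalize_eq q
      have := h' q hqP hq0
      rw [UniqueFactorizationMonoid.emultiplicity_eq_count_normalizedFactors hqp.irreducible hI',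
        UniqueFactorizationMonoid.emultiplicity_eq_count_normalizedFactors hqp.irreducible hJ',
        hnq] at this
      exact_mod_cast this.le
    · simp [Multiset.count_eq_zero_of_notMem hq]
  have h1 := key I J hI hJ h
  have h2 := key J I hJ hI (fun P hP hP0 => (h P hP hP0).symm)
  exact associated_iff_eq.mp (associated_of_dvd_dvd h1 h2)

end Ded

theorem span_orbit_pow_eq_span_d_of_dvd {K : Type*} [Field K] [NumberField K]
    (d m n : ℕ) (hd : d.Prime) (hm : 1 ≤ m) (hn : 1 ≤ n)
    (c : 𝓞 K)
    (hK : IntermediateField.adjoin ℚ {algebraMap (𝓞 K) K c} = ⊤)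
    (f : 𝓞 K → 𝓞 K) (hf : f = fun x => x ^ d + c)
    (a : ℕ → 𝓞 K) (ha : ∀ i, a i = f^[i] 0)
    (hper : f^[m + n] 0 = f^[m] 0)
    (hmin : ∀ n', 0 < n' → n' < n → f^[m + n'] 0 ≠ f^[m] 0)
    (htail : ∀ k, k < m → f^[k + n] 0 ≠ f^[k] 0)
    (hnm : n ∣ (m - 1))
    (i : ℕ) (hi : 1 ≤ i) (hni : n ∣ i) :
    (Ideal.span {a i}) ^ ((d ^ (m - 1) - 1) * (d - 1)) = Ideal.span {(d : 𝓞 K)} := by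
  classical
  have hd2 := hd.two_le
  have hd0 : d ≠ 0 := by omega
  have hfx : ∀ x : 𝓞 K, f x = x ^ d + c := fun x => by rw [hf]
  have ha0 : a 0 = 0 := by rw [ha]; rfl
  have hastep : ∀ t, a (t+1) = (a t) ^ d + c := fun t => by
    rw [ha, ha, Function.iterate_succ_apply', hfx]
  -- key divisibility
  have key_dvd : ∀ (x : 𝓞 K) (t : ℕ), x ∣ f^[t] x - f^[t] 0 := by
    intro x t
    induction t with
    | zero => simpa using dvd_refl x
    | succ t ih =>
      rw [Function.iterate_succ_apply', Function.iterate_succ_apply', hfx, hfx,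
        show (f^[t] x) ^ d + c - ((f^[t] 0) ^ d + c) = (f^[t] x) ^ d - (f^[t] 0) ^ d by ring]
      exact ih.trans (sub_dvd_pow_sub_pow _ _ d)
  have adv : ∀ j t : ℕ, a j ∣ a (j + t) - a t := by
    intro j t
    have h := key_dvd (f^[j] 0) t
    rw [← Function.iterate_add_apply] at h
    rw [ha j, ha (j + t), ha t, Nat.add_comm j t]
    exact h
  have per : ∀ k, m ≤ k → a (k + n) = a k := by
    intro k hk
    obtain ⟨s, rfl⟩ := Nat.exists_eq_add_of_le hk
    rw [ha, ha, show m + s + n = s + (m + n) by omega, Function.iterate_add_apply, hper,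
      ← Function.iterate_add_apply, Nat.add_comm s m]
  have dvd_mul_index : ∀ j l, 1 ≤ l → a j ∣ a (j * l) := by
    intro j l hl
    induction l with
    | zero => omega
    | succ l ih =>
      rcases Nat.lt_or_ge l 1 with h1 | h1
      · have : l = 0 := by omega
        subst this
        simpa using dvd_refl (a j)
      · have h2 := adv j (j * l)
        have h3 : a (j * (l + 1)) = (a (j + j * l) - a (j * l)) + a (j * l) := by
          rw [show j * (l+1) = j + j * l by ring]; ring
        rw [h3]
        exact dvd_add h2 (ih h1)
  have han : a n ≠ 0 := by
    have h := htail 0 hm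
    rw [← ha, ← ha, Nat.zero_add, ha0] at h
    exact h
  have hm2 : 2 ≤ m := by
    by_contra hlt
    have hm1 : m = 1 := by omega
    have h1 : a (1 + n) = a 1 := by
      rw [ha, ha]; rw [hm1] at hper; exact hper
    rw [show 1 + n = n + 1 by omega, hastep n, hastep 0, ha0, zero_pow hd0, zero_add] at h1
    exact han (pow_eq_zero_iff hd0 |>.mp (by linear_combination h1))
  -- associated multiples
  have a_mul_n_dvd : ∀ k, 1 ≤ k → a (k * n) ∣ a n ∧ a n ∣ a (k * n) := by
    intro k hk
    constructor
    · have hkn1 : 1 ≤ k * n := Nat.mul_pos hk hn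
      have hu : m ≤ k * n * m := Nat.le_mul_of_pos_left m (by omega)
      have h1 : a (k * n) ∣ a (k * n * m) := dvd_mul_index (k * n) m hm
      have h2 : a (k * n * m + n) = a (k * n * m) := per _ hu
      have h3 := adv (k * n * m) n
      rw [h2] at h3
      exact h1.trans ((dvd_sub_right (dvd_refl _)).mp h3)
    · have := dvd_mul_index n k hk
      rwa [Nat.mul_comm n k] at this
  have span_mul_n : ∀ k, 1 ≤ k → Ideal.span {a (k * n)} = Ideal.span {a n} := by
    intro k hk
    apply le_antisymm
    · exact Ideal.span_singleton_le_span_singleton.mpr (a_mul_n_dvd k hk).2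
    · exact Ideal.span_singleton_le_span_singleton.mpr (a_mul_n_dvd k hk).1
  -- the b sequence
  set b : ℕ → 𝓞 K := fun j => a (j + n) - a j with hbdef
  have hb1 : b 1 = a n ^ d := by
    show a (1 + n) - a 1 = _
    rw [Nat.add_comm 1 n, hastep n, hastep 0, ha0, zero_pow hd0, zero_add]
    ring
  have hbstep : ∀ j, ∃ z, b (j + 1) = b j ^ d + (d : 𝓞 K) * b j * z := by
    intro j
    obtain ⟨z, hz⟩ := aux_pow_add_sub d hd (a j) (b j)
    refine ⟨z, ?_⟩
    have h1 : a (j + 1 + n) = a (j + n) ^ d + c := by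
      rw [show j + 1 + n = (j + n) + 1 by omega, hastep]
    have h2 : a (j + n) = a j + b j := by
      show a (j + n) = a j + (a (j + n) - a j); ring
    show a (j + 1 + n) - a (j + 1) = _
    rw [h1, hastep j, h2]
    linear_combination hz
  -- nonvanishing of b in the tail
  have hbne : ∀ j, j < m → b j ≠ 0 := by
    intro j hj h0
    have h := htail j hj
    rw [← ha, ← ha] at h
    exact h (sub_eq_zero.mp h0)
  -- roots of unity part : x = a (m-1+n), y = a (m-1)
  have hyd : a (m - 1 + n) ^ d = a (m - 1) ^ d := by
    have h1 : a (m - 1 + n + 1) = a (m - 1 + 1) := by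
      rw [show m - 1 + n + 1 = m + n by omega, show m - 1 + 1 = m by omega, ha, ha]
      exact hper
    rw [show m - 1 + n + 1 = (m - 1 + n) + 1 by omega, hastep, hastep] at h1
    linear_combination h1
  have hxyne : a (m - 1 + n) ≠ a (m - 1) := by
    have h := htail (m - 1) (by omega)
    rw [← ha, ← ha] at h
    exact h
  have hy0 : a (m - 1) ≠ 0 := by
    intro h0
    apply hxyne
    rw [h0] at hyd ⊢
    rw [zero_pow hd0] at hyd
    exact pow_eq_zero_iff hd0 |>.mp hyd
  -- construct the root of unity ζ ∈ 𝓞 K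
  have hyK : (algebraMap (𝓞 K) K) (a (m - 1)) ≠ 0 := by
    simpa using hy0
  set ξ : K := algebraMap (𝓞 K) K (a (m - 1 + n)) / algebraMap (𝓞 K) K (a (m - 1)) with hξdef
  have hξd : ξ ^ d = 1 := by
    rw [hξdef, div_pow, ← map_pow, ← map_pow, hyd, div_self (by simpa using pow_ne_zero d hy0)]
  have hint : IsIntegral ℤ ξ := by
    refine ⟨Polynomial.X ^ d - Polynomial.C 1, Polynomial.monic_X_pow_sub_C 1 hd0, ?_⟩
    simp [Polynomial.eval₂_sub, hξd]
  obtain ⟨ζ, hζval⟩ : ∃ ζ : 𝓞 K, algebraMap (𝓞 K) K ζ = ξ := ⟨⟨ξ, hint⟩, rfl⟩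
  have hζy : ζ * a (m - 1) = a (m - 1 + n) := by
    apply NumberField.RingOfIntegers.coe_injective
    rw [map_mul, hζval, hξdef]
    field_simp
  have hζd1 : ζ ^ d = 1 := by
    apply NumberField.RingOfIntegers.coe_injective
    rw [map_pow, hζval, hξd, map_one]
  have hζne1 : ζ ≠ 1 := by
    intro h
    exact hxyne (by rw [← hζy, h, one_mul])
  have hbm1 : b (m - 1) = (ζ - 1) * a (m - 1) := by
    show a (m - 1 + n) - a (m - 1) = _
    rw [← hζy]; ring
  have H1 : Ideal.span {b (m - 1)} ^ (d - 1)
      = Ideal.span {(d : 𝓞 K)} * Ideal.span {a (m - 1)} ^ (d - 1) := by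
    rw [hbm1, ← Ideal.span_singleton_mul_span_singleton, mul_pow,
      aux_span_sub_one_pow hd hζd1 hζne1]
  -- span of a (m-1) equals span of a n
  obtain ⟨q, hq⟩ := hnm
  have hq1 : 1 ≤ q := by
    by_contra h
    have h0 : q = 0 := by omega
    rw [h0, Nat.mul_zero] at hq
    omega
  have span_am1 : Ideal.span {a (m - 1)} = Ideal.span {a n} := by
    rw [show m - 1 = q * n from by rw [hq, Nat.mul_comm]]
    exact span_mul_n q hq1
  -- reduce to span {a n}
  obtain ⟨k, hk⟩ := hni
  have hk1 : 1 ≤ k := by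
    by_contra h
    have h0 : k = 0 := by omega
    rw [h0, Nat.mul_zero] at hk
    omega
  have span_ai : Ideal.span {a i} = Ideal.span {a n} := by
    rw [show i = k * n from by rw [hk, Nat.mul_comm]]
    exact span_mul_n k hk1
  rw [span_ai]
  have hdOK : (d : 𝓞 K) ≠ 0 := Nat.cast_ne_zero.mpr hd0
  have hIne : Ideal.span {a n} ^ ((d ^ (m - 1) - 1) * (d - 1)) ≠ ⊥ := by
    apply pow_ne_zero
    simpa [Ideal.span_singleton_eq_bot] using han
  have hJne : Ideal.span {(d : 𝓞 K)} ≠ ⊥ := by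
    simpa [Ideal.span_singleton_eq_bot] using hdOK
  apply aux_ideal_eq_of_emult_eq hIne hJne
  intro P hP hP0
  set ν : 𝓞 K → ℕ∞ := fun x => emultiplicity P (Ideal.span {x}) with hνdef
  have hprimeP : Prime P := Ideal.prime_of_isPrime hP0 hP
  have νmul : ∀ x y : 𝓞 K, ν (x * y) = ν x + ν y := by
    intro x y
    show emultiplicity P (Ideal.span {x * y}) = _
    rw [← Ideal.span_singleton_mul_span_singleton, emultiplicity_mul hprimeP]
  have νpow : ∀ (x : 𝓞 K) (s : ℕ), ν (x ^ s) = s * ν x := by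
    intro x s
    show emultiplicity P (Ideal.span {x ^ s}) = _
    rw [← Ideal.span_singleton_pow, emultiplicity_pow hprimeP]
  have memiff : ∀ (x : 𝓞 K) (k' : ℕ), (k' : ℕ∞) ≤ ν x ↔ x ∈ P ^ k' := fun x k' =>
    aux_le_emult_iff_mem x k'
  have hfin : ∀ x : 𝓞 K, x ≠ 0 → ν x ≠ ⊤ := fun x hx => aux_emult_ne_top hP hx
  set E : ℕ := (ν (a n)).toNat with hEdef
  have hE : ν (a n) = (E : ℕ∞) := (ENat.coe_toNat (hfin _ han)).symm
  set W : ℕ := (ν ((d : 𝓞 K))).toNat with hWdef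
  have hW : ν ((d : 𝓞 K)) = (W : ℕ∞) := (ENat.coe_toNat (hfin _ hdOK)).symm
  set B : ℕ → ℕ := fun j => (ν (b j)).toNat with hBdef
  have hB : ∀ j, j < m → ν (b j) = (B j : ℕ∞) := fun j hj =>
    (ENat.coe_toNat (hfin _ (hbne j hj))).symm
  have goalAE : emultiplicity P (Ideal.span {a n} ^ ((d ^ (m - 1) - 1) * (d - 1)))
      = (((d ^ (m - 1) - 1) * (d - 1) * E : ℕ) : ℕ∞) := by
    rw [emultiplicity_pow hprimeP,
      show emultiplicity P (Ideal.span {a n}) = ν (a n) from rfl, hE]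
    push_cast
    ring
  suffices hWAE : W = (d ^ (m - 1) - 1) * (d - 1) * E by
    rw [goalAE, show emultiplicity P (Ideal.span {(d : 𝓞 K)}) = ν ((d : 𝓞 K)) from rfl, hW, hWAE]
  -- the star equation
  have hstar : (d - 1) * B (m - 1) = W + (d - 1) * E := by
    have h := congrArg (emultiplicity P) H1
    rw [span_am1, emultiplicity_pow hprimeP, emultiplicity_mul hprimeP,
      emultiplicity_pow hprimeP,
      show emultiplicity P (Ideal.span {b (m - 1)}) = ν (b (m - 1)) from rfl,
      show emultiplicity P (Ideal.span {a n}) = ν (a n) from rfl,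
      show emultiplicity P (Ideal.span {(d : 𝓞 K)}) = ν ((d : 𝓞 K)) from rfl,
      hB (m - 1) (by omega), hE, hW] at h
    exact_mod_cast h
  have hB1 : B 1 = d * E := by
    have h1 : ν (b 1) = ((d * E : ℕ) : ℕ∞) := by
      rw [hb1, νpow, hE]
      push_cast
      ring
    have h2 := hB 1 (by omega)
    rw [h1] at h2
    exact_mod_cast h2.symm
  have hlow : ∀ j k' : ℕ, (k' : ℕ∞) ≤ (d : ℕ∞) * ν (b j) → (k' : ℕ∞) ≤ (W : ℕ∞) + ν (b j) →
      (k' : ℕ∞) ≤ ν (b (j + 1)) := by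
    intro j k' h1 h2
    obtain ⟨z, hz⟩ := hbstep j
    rw [memiff, hz]
    refine Ideal.add_mem _ ?_ ?_
    · apply (memiff _ _).mp
      rw [νpow]
      exact h1
    · apply (memiff _ _).mp
      rw [νmul, νmul, hW]
      calc (k' : ℕ∞) ≤ (W : ℕ∞) + ν (b j) := h2
        _ ≤ (W : ℕ∞) + ν (b j) + ν z := le_self_add
  by_cases hE0 : E = 0
  · rw [hE0, Nat.mul_zero]
    rcases Nat.eq_zero_or_pos W with hW0 | hW0
    · exact hW0
    · exfalso
      have hdP : (d : 𝓞 K) ∈ P := by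
        have h1 : ((1 : ℕ) : ℕ∞) ≤ ν ((d : 𝓞 K)) := by
          rw [hW]
          exact_mod_cast hW0
        simpa using (memiff _ 1).mp h1
      have hanP : a n ∉ P := by
        intro hmem
        have h1 : ((1 : ℕ) : ℕ∞) ≤ ν (a n) := (memiff _ 1).mpr (by simpa using hmem)
        rw [hE, hE0] at h1
        exact absurd (by exact_mod_cast h1 : (1 : ℕ) ≤ 0) (by omega)
      have hbP : ∀ j, 1 ≤ j → j ≤ m - 1 → b j ∉ P := by
        intro j hj1
        induction j with
        | zero => omega
        | succ j ih =>
          intro hjm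
          rcases Nat.lt_or_ge j 1 with h1 | h1
          · have hj0 : j = 0 := by omega
            subst hj0
            intro hmem
            rw [hb1] at hmem
            exact hanP (hP.mem_of_pow_mem _ hmem)
          · intro hmem
            obtain ⟨z, hz⟩ := hbstep j
            have hbjd : b j ^ d ∈ P := by
              have he : b j ^ d = b (j + 1) - (d : 𝓞 K) * b j * z := by
                rw [hz]; ring
              rw [he]
              exact Submodule.sub_mem _ hmem
                (Ideal.mul_mem_right _ _ (Ideal.mul_mem_right _ _ hdP))
            exact (ih h1 (by omega)) (hP.mem_of_pow_mem _ hbjd)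
      have hBm0 : B (m - 1) = 0 := by
        by_contra h0
        have h1 : ((1 : ℕ) : ℕ∞) ≤ ν (b (m - 1)) := by
          rw [hB (m - 1) (by omega)]
          exact_mod_cast Nat.one_le_iff_ne_zero.mpr h0
        exact hbP (m - 1) (by omega) (le_refl _) (by simpa using (memiff _ 1).mp h1)
      rw [hE0, hBm0] at hstar
      simp only [Nat.mul_zero] at hstar
      omega
  · have hEpos : 1 ≤ E := Nat.one_le_iff_ne_zero.mpr hE0
    have hlowN : ∀ j, 1 ≤ j → j ≤ m - 1 → min (d ^ j * E) (W + d * E) ≤ B j := by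
      intro j hj1
      induction j with
      | zero => omega
      | succ j ih =>
        intro hjm
        rcases Nat.lt_or_ge j 1 with h1 | h1
        · have hj0 : j = 0 := by omega
          subst hj0
          rw [hB1]
          calc min (d ^ 1 * E) (W + d * E) ≤ d ^ 1 * E := min_le_left _ _
            _ = d * E := by rw [pow_one]
        · have hBj := ih h1 (by omega)
          have hd1 : min (d ^ (j + 1) * E) (W + d * E) ≤ d * B j := by
            rcases le_total (d ^ j * E) (W + d * E) with hc | hc
            · have h2 : d ^ j * E ≤ B j := by rwa [min_eq_left hc] at hBj
              have h3 : d ^ (j + 1) * E ≤ d * B j := by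
                calc d ^ (j + 1) * E = d * (d ^ j * E) := by rw [pow_succ']; ring
                  _ ≤ d * B j := Nat.mul_le_mul_left d h2
              exact le_trans (min_le_left _ _) h3
            · have h2 : W + d * E ≤ B j := by rwa [min_eq_right hc] at hBj
              calc min (d ^ (j + 1) * E) (W + d * E) ≤ W + d * E := min_le_right _ _
                _ ≤ B j := h2
                _ ≤ d * B j := Nat.le_mul_of_pos_left _ (by omega)
          have hd2 : min (d ^ (j + 1) * E) (W + d * E) ≤ W + B j := by
            rcases le_total (d ^ j * E) (W + d * E) with hc | hc
            · have h2 : d ^ j * E ≤ B j := by rwa [min_eq_left hc] at hBj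
              have h3 : d * E ≤ d ^ j * E :=
                Nat.mul_le_mul_right E (by
                  calc d = d ^ 1 := (pow_one d).symm
                    _ ≤ d ^ j := Nat.pow_le_pow_right (by omega) h1)
              calc min (d ^ (j + 1) * E) (W + d * E) ≤ W + d * E := min_le_right _ _
                _ ≤ W + B j := Nat.add_le_add_left (le_trans h3 h2) W
            · have h2 : W + d * E ≤ B j := by rwa [min_eq_right hc] at hBj
              calc min (d ^ (j + 1) * E) (W + d * E) ≤ W + d * E := min_le_right _ _
                _ ≤ B j := h2
                _ ≤ W + B j := Nat.le_add_left _ _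
          have hν1 : ((min (d ^ (j + 1) * E) (W + d * E) : ℕ) : ℕ∞) ≤ (d : ℕ∞) * ν (b j) := by
            rw [hB j (by omega)]
            exact_mod_cast hd1
          have hν2 : ((min (d ^ (j + 1) * E) (W + d * E) : ℕ) : ℕ∞) ≤ (W : ℕ∞) + ν (b j) := by
            rw [hB j (by omega)]
            exact_mod_cast hd2
          have h4 := hlow j _ hν1 hν2
          rw [hB (j + 1) (by omega)] at h4
          exact_mod_cast h4
    have hAW : (d ^ (m - 1) - 1) * (d - 1) * E ≤ W := by
      have hBm := hlowN (m - 1) (by omega) (le_refl _)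
      rcases le_total (d ^ (m - 1) * E) (W + d * E) with hc | hc
      · have h2 : d ^ (m - 1) * E ≤ B (m - 1) := by rwa [min_eq_left hc] at hBm
        have h3 : (d - 1) * (d ^ (m - 1) * E) ≤ W + (d - 1) * E := by
          rw [← hstar]
          exact Nat.mul_le_mul_left _ h2
        have h4 : (d ^ (m - 1) - 1) * (d - 1) * E + (d - 1) * E = (d - 1) * (d ^ (m - 1) * E) := by
          obtain ⟨t, ht⟩ : ∃ t, d ^ (m - 1) = t + 1 :=
            ⟨d ^ (m - 1) - 1, by have := Nat.one_le_pow (m - 1) d (by omega); omega⟩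
          rw [ht, Nat.add_sub_cancel]
          ring
        have h5 : (d ^ (m - 1) - 1) * (d - 1) * E + (d - 1) * E ≤ W + (d - 1) * E := by
          rw [h4]; exact h3
        exact Nat.le_of_add_le_add_right h5
      · exfalso
        have h2 : W + d * E ≤ B (m - 1) := by rwa [min_eq_right hc] at hBm
        have h3 : (d - 1) * (W + d * E) ≤ W + (d - 1) * E := by
          rw [← hstar]
          exact Nat.mul_le_mul_left _ h2
        obtain ⟨D, hDd⟩ : ∃ D, d = D + 1 := ⟨d - 1, by omega⟩
        have hD1 : 1 ≤ D := by omega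
        have hd1eq : d - 1 = D := by omega
        rw [hd1eq, hDd] at h3
        have hexp : D * (W + (D + 1) * E) = D * W + D * (D * E) + D * E := by ring
        rw [hexp] at h3
        have l1 : W ≤ D * W := Nat.le_mul_of_pos_left _ (by omega)
        have l2 : D * E ≤ D * (D * E) := Nat.le_mul_of_pos_left _ (by omega)
        have l3 : 1 ≤ D * E := Nat.mul_le_mul hD1 hEpos
        have l4 : W + D * E + D * E ≤ D * W + D * (D * E) + D * E :=
          Nat.add_le_add (Nat.add_le_add l1 l2) (le_refl _)
        have l5 : W + D * E + D * E ≤ W + D * E := le_trans l4 h3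
        omega
    have hexact : ∀ j, j + 1 ≤ m - 1 → d * B j < W + B j → B (j + 1) = d * B j := by
      intro j hjm hlt
      have hνj := hB j (by omega)
      have hνj1 := hB (j + 1) (by omega)
      have h1 : ((d * B j : ℕ) : ℕ∞) ≤ ν (b (j + 1)) := by
        apply hlow
        · rw [hνj]
          exact_mod_cast le_refl _
        · rw [hνj]
          exact_mod_cast hlt.le
      have h2 : ¬ (((d * B j + 1 : ℕ) : ℕ∞) ≤ ν (b (j + 1))) := by
        intro hcon
        obtain ⟨z, hz⟩ := hbstep j
        have hmem : b (j + 1) ∈ P ^ (d * B j + 1) := (memiff _ _).mp hcon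
        have hmem2 : (d : 𝓞 K) * b j * z ∈ P ^ (d * B j + 1) := by
          apply (memiff _ _).mp
          rw [νmul, νmul, hW, hνj]
          calc ((d * B j + 1 : ℕ) : ℕ∞) ≤ ((W + B j : ℕ) : ℕ∞) := by exact_mod_cast hlt
            _ = (W : ℕ∞) + (B j : ℕ∞) := by push_cast; rfl
            _ ≤ (W : ℕ∞) + (B j : ℕ∞) + ν z := le_self_add
        have hmem3 : b j ^ d ∈ P ^ (d * B j + 1) := by
          have he : b j ^ d = b (j + 1) - (d : 𝓞 K) * b j * z := by rw [hz]; ring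
          rw [he]
          exact Submodule.sub_mem _ hmem hmem2
        have h3 := (memiff _ _).mpr hmem3
        rw [νpow, hνj] at h3
        have h4 : (d * B j + 1 : ℕ) ≤ d * B j := by exact_mod_cast h3
        omega
      rw [hνj1] at h1 h2
      have n1 : d * B j ≤ B (j + 1) := by exact_mod_cast h1
      have n2 : ¬ (d * B j + 1 ≤ B (j + 1)) := fun h => h2 (by exact_mod_cast h)
      omega
    have hBexact : ∀ j, 1 ≤ j → j ≤ m - 1 → B j = d ^ j * E := by
      intro j hj1
      induction j with
      | zero => omega
      | succ j ih =>
        intro hjm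
        rcases Nat.lt_or_ge j 1 with h1 | h1
        · have hj0 : j = 0 := by omega
          subst hj0
          rw [hB1, pow_one]
        · have hBj := ih h1 (by omega)
          have hm3 : 3 ≤ m := by omega
          have hpj : d ^ j ≤ d ^ (m - 2) := Nat.pow_le_pow_right (by omega) (by omega)
          have hkey : d ^ (m - 2) < d ^ (m - 1) - 1 := by
            have e1 : d ^ (m - 1) = d * d ^ (m - 2) := by
              rw [show m - 1 = (m - 2) + 1 by omega, pow_succ']
            have e2 : 2 * d ^ (m - 2) ≤ d ^ (m - 1) := by
              rw [e1]
              exact Nat.mul_le_mul_right _ hd2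
            have e3 : 2 ≤ d ^ (m - 2) := by
              calc 2 ≤ d := hd2
                _ = d ^ 1 := (pow_one d).symm
                _ ≤ d ^ (m - 2) := Nat.pow_le_pow_right (by omega) (by omega)
            omega
          have hkey2 : d ^ j < d ^ (m - 1) - 1 := lt_of_le_of_lt hpj hkey
          have hlt2 : (d - 1) * (d ^ j * E) < W := by
            have s1 : (d - 1) * (d ^ j * E) = d ^ j * ((d - 1) * E) := by ring
            have s2 : (d ^ (m - 1) - 1) * (d - 1) * E = (d ^ (m - 1) - 1) * ((d - 1) * E) := by
              ring
            have spos : 0 < (d - 1) * E := Nat.mul_pos (by omega) hEpos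
            calc (d - 1) * (d ^ j * E) = d ^ j * ((d - 1) * E) := s1
              _ < (d ^ (m - 1) - 1) * ((d - 1) * E) :=
                mul_lt_mul_of_pos_right hkey2 spos
              _ = (d ^ (m - 1) - 1) * (d - 1) * E := s2.symm
              _ ≤ W := hAW
          have hmlt : d * B j < W + B j := by
            rw [hBj]
            have hsplit : d * (d ^ j * E) = (d - 1) * (d ^ j * E) + d ^ j * E := by
              obtain ⟨t, ht⟩ : ∃ t, d = t + 1 := ⟨d - 1, by omega⟩
              rw [ht, Nat.add_sub_cancel]
              ring
            rw [hsplit]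
            exact Nat.add_lt_add_right hlt2 _
          have h5 := hexact j hjm hmlt
          rw [h5, hBj, pow_succ']
          ring
    have hBm := hBexact (m - 1) (by omega) (le_refl _)
    rw [hBm] at hstar
    have h4 : (d ^ (m - 1) - 1) * (d - 1) * E + (d - 1) * E = (d - 1) * (d ^ (m - 1) * E) := by
      obtain ⟨t, ht⟩ : ∃ t, d ^ (m - 1) = t + 1 :=
        ⟨d ^ (m - 1) - 1, by have := Nat.one_le_pow (m - 1) d (by omega); omega⟩
      rw [ht, Nat.add_sub_cancel]
      ring
    have h5 : (d ^ (m - 1) - 1) * (d - 1) * E + (d - 1) * E = W + (d - 1) * E := by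
      rw [h4, hstar]
    exact (Nat.add_right_cancel h5).symm
end

section
/- Let f(x) = x^d + c (d ≥ 2 arbitrary integer) be post-critically finite with exact type (m,n), m ≥ 1, K = ℚ(c), a_i = f^i(0). Then the ideal (a_i) divides the ideal (d) in O_K for all 1 ≤ i ≤ m+n−1. -/
open NumberField Finset IsDedekindDomain IsDedekindDomain.HeightOneSpectrum
  UniqueFactorizationMonoid

private lemma seq_step_factor {R : Type*} [CommRing R] (d : ℕ) (x y c : R) :
    (x ^ d + c) - (y ^ d + c) = (∑ l ∈ Finset.range d, x ^ l * y ^ (d - 1 - l)) * (x - y) := by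
  rw [geom_sum₂_mul]; ring

/-- Let `f(x) = x^d + c` (`d ≥ 2` arbitrary) be post-critically finite
with exact type `(m,n)`, `m ≥ 1`, `K = ℚ(c)`, `a_i = f^i(0)`. Then the ideal `(a_i)`
divides the ideal `(d)` in `𝓞 K` for all `1 ≤ i ≤ m+n−1`. -/
theorem span_orbit_dvd_span_d {K : Type*} [Field K] [NumberField K]
    (d m n : ℕ) (hd : 2 ≤ d) (hm : 1 ≤ m) (hn : 1 ≤ n)
    (c : 𝓞 K)
    (hK : IntermediateField.adjoin ℚ {algebraMap (𝓞 K) K c} = ⊤)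
    (f : 𝓞 K → 𝓞 K) (hf : f = fun x => x ^ d + c)
    (a : ℕ → 𝓞 K) (ha : ∀ i, a i = f^[i] 0)
    (hper : f^[m + n] 0 = f^[m] 0)
    (hmin : ∀ n', 0 < n' → n' < n → f^[m + n'] 0 ≠ f^[m] 0)
    (htail : ∀ k, k < m → f^[k + n] 0 ≠ f^[k] 0)
    (i : ℕ) (hi : 1 ≤ i) (him : i ≤ m + n - 1) :
    Ideal.span {a i} ∣ Ideal.span {(d : 𝓞 K)} := by
  classical
  have hd0 : d ≠ 0 := by omega
  have hrec : ∀ k, a (k + 1) = a k ^ d + c := by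
    intro k
    rw [ha (k + 1), Function.iterate_succ_apply', ← ha k, hf]
  have ha0 : a 0 = 0 := by rw [ha 0]; rfl
  have ha1 : a 1 = c := by rw [hrec 0, ha0, zero_pow hd0, zero_add]
  have haper : a (m + n) = a m := by rw [ha (m + n), ha m]; exact hper
  have hatail : ∀ k, k < m → a (k + n) ≠ a k := by
    intro k hk
    rw [ha (k + n), ha k]; exact htail k hk
  have hper2 : ∀ q, a (m + q + n) = a (m + q) := by
    intro q
    induction q with
    | zero => simpa using haper
    | succ q ih =>
      have e1 : m + (q + 1) + n = (m + q + n) + 1 := by omega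
      have e2 : m + (q + 1) = (m + q) + 1 := by omega
      rw [e1, e2, hrec, hrec, ih]
  have hper' : ∀ j, m ≤ j → a (j + n) = a j := by
    intro j hj
    have := hper2 (j - m)
    rwa [Nat.add_sub_cancel' hj] at this
  -- all orbit elements with positive index are nonzero
  have hane0 : ∀ j, 1 ≤ j → a j ≠ 0 := by
    intro j hj haj
    have hshift : ∀ k, a (k + j) = a k := by
      intro k
      induction k with
      | zero => rw [zero_add, ha0]; exact haj
      | succ k ih =>
        have e : k + 1 + j = (k + j) + 1 := by omega
        rw [e, hrec, hrec, ih]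
    have hmultj : ∀ N k, a (k + N * j) = a k := by
      intro N
      induction N with
      | zero => intro k; simp
      | succ N ih =>
        intro k
        have e : k + (N + 1) * j = (k + j) + N * j := by ring
        rw [e, ih, hshift]
    have h1 : a (m * j + n) = a (m * j) := hper' _ (Nat.le_mul_of_pos_right m hj)
    have h2 : a (m * j) = 0 := by
      have := hmultj m 0
      rwa [zero_add, ha0] at this
    have h3 : a (n + m * j) = a n := hmultj m n
    have h4 : a n = 0 := by
      rw [← h3, Nat.add_comm n (m * j), h1, h2]
    exact hatail 0 hm (by rw [zero_add, ha0, h4])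
  have hai0 : a i ≠ 0 := hane0 i hi
  have hdK0 : (d : 𝓞 K) ≠ 0 := Nat.cast_ne_zero.mpr hd0
  -- the key valuation-theoretic fact, for every height one prime
  have key : ∀ v : HeightOneSpectrum (𝓞 K),
      v.intValuation ((d : 𝓞 K)) ≤ v.intValuation (a i) := by
    intro v
    by_contra hcon
    push_neg at hcon
    set V := v.intValuation with hV
    have hV1 : ∀ x : 𝓞 K, V x ≤ 1 := fun x => v.intValuation_le_one x
    have hVne : ∀ x : 𝓞 K, x ≠ 0 → V x ≠ 0 := fun x hx => v.intValuation_ne_zero x hx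
    have hs1 : ∀ j k, V (a (j + 1) - a (k + 1)) ≤ V (a j - a k) := by
      intro j k
      rw [hrec, hrec, seq_step_factor, V.map_mul]
      exact mul_le_of_le_one_left' (hV1 _)
    have hs : ∀ s j k, V (a (j + s) - a (k + s)) ≤ V (a j - a k) := by
      intro s
      induction s with
      | zero => intro j k; exact le_rfl
      | succ s ih =>
        intro j k
        have e1 : j + (s + 1) = (j + s) + 1 := by omega
        have e2 : k + (s + 1) = (k + s) + 1 := by omega
        rw [e1, e2]
        exact le_trans (hs1 _ _) (ih j k)
    have hVd1 : V ((d : 𝓞 K)) ≤ 1 := hV1 _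
    have hlt1 : V (a i) < 1 := lt_of_lt_of_le hcon hVd1
    have hex : ∃ j, 1 ≤ j ∧ V (a j) < 1 := ⟨i, hi, hlt1⟩
    set t := Nat.find hex with htdef
    obtain ⟨ht1, htlt⟩ : 1 ≤ t ∧ V (a t) < 1 := Nat.find_spec hex
    have ht0 : 0 < t := ht1
    have hmint : ∀ r, 1 ≤ r → r < t → V (a r) = 1 := by
      intro r h1 h2
      have h3 := Nat.find_min hex h2
      push_neg at h3
      exact le_antisymm (hV1 _) (h3 h1)
    have hC1 : ∀ k, V (a (k + t) - a k) < 1 := by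
      intro k
      induction k with
      | zero => rw [zero_add, ha0, sub_zero]; exact htlt
      | succ k ih =>
        have e : k + 1 + t = (k + t) + 1 := by omega
        rw [e]
        exact lt_of_le_of_lt (hs1 _ _) ih
    have hC1q : ∀ q k, V (a (k + q * t) - a k) < 1 := by
      intro q
      induction q with
      | zero =>
        intro k
        simp only [Nat.zero_mul, Nat.add_zero, sub_self, map_zero]
        exact zero_lt_one
      | succ q ih =>
        intro k
        have e : k + (q + 1) * t = (k + t) + q * t := by ring
        rw [e]
        have h1 := ih (k + t)
        have h2 := hC1 k
        have e2 : a (k + t + q * t) - a k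
            = (a (k + t + q * t) - a (k + t)) + (a (k + t) - a k) := by ring
        rw [e2]
        exact lt_of_le_of_lt (V.map_add _ _) (max_lt h1 h2)
    have hdiv : ∀ j, ¬ t ∣ j → V (a j) = 1 := by
      intro j hj
      have hr0 : j % t ≠ 0 := fun h => hj (Nat.dvd_of_mod_eq_zero h)
      have hrt : j % t < t := Nat.mod_lt j ht0
      have h1 := hC1q (j / t) (j % t)
      rw [show j % t + j / t * t = j by rw [mul_comm]; exact Nat.mod_add_div j t] at h1
      have h2 : V (a (j % t)) = 1 := hmint _ (Nat.one_le_iff_ne_zero.mpr hr0) hrt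
      have e : a j = (a j - a (j % t)) + a (j % t) := by ring
      rw [e, Valuation.map_add_eq_of_lt_right _ (by rw [h2]; exact h1), h2]
    have hmt : m ≤ m * t := Nat.le_mul_of_pos_right m ht0
    have hVan : V (a n) < 1 := by
      have h1 : a (m * t + n) = a (m * t) := hper' _ hmt
      have h2 := hC1q m n
      have h3 := hC1q m 0
      rw [zero_add, ha0, sub_zero] at h3
      have h4 : V (a (n + m * t)) < 1 := by
        rw [show n + m * t = m * t + n by omega, h1]; exact h3
      have e : a n = (a n - a (n + m * t)) + a (n + m * t) := by ring
      rw [e]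
      refine lt_of_le_of_lt (V.map_add _ _) (max_lt ?_ h4)
      rw [Valuation.map_sub_swap]
      exact h2
    have htn : t ∣ n := by
      by_contra h
      exact (ne_of_lt hVan) (hdiv n h)
    have hti : t ∣ i := by
      by_contra h
      exact (ne_of_lt hlt1) (hdiv i h)
    set E := V (a t) with hE
    have hEne : E ≠ 0 := hVne _ (hane0 t ht1)
    have hEpowlt : E ^ d < E := by
      have h1 : E ^ (d - 1) < 1 := pow_lt_one₀ zero_le' htlt (by omega)
      have h2 : E ^ d = E * E ^ (d - 1) := by
        rw [← pow_succ']; congr 1; omega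
      rw [h2]
      calc E * E ^ (d - 1) < E * 1 := mul_lt_mul_of_le_of_lt_of_nonneg_of_pos le_rfl h1 zero_le' (zero_lt_iff.mpr hEne)
        _ = E := mul_one E
    have hC3 : ∀ q, 1 ≤ q → V (a (q * t)) = E := by
      intro q hq
      induction q, hq using Nat.le_induction with
      | base => rw [one_mul]
      | succ q hq ih =>
        have h1 : a (q * t + 1) - a 1 = a (q * t) ^ d := by
          rw [hrec, ha1]; ring
        have h2 : V (a (q * t + 1) - a 1) = E ^ d := by
          rw [h1, V.map_pow, ih]
        have h3 := hs (t - 1) (q * t + 1) 1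
        rw [show q * t + 1 + (t - 1) = q * t + t by omega,
          show 1 + (t - 1) = t by omega, h2] at h3
        have h4 : V (a (q * t + t) - a t) < V (a t) :=
          lt_of_le_of_lt h3 hEpowlt
        have e : a ((q + 1) * t) = (a (q * t + t) - a t) + a t := by
          rw [show (q + 1) * t = q * t + t by ring]; ring
        rw [e, Valuation.map_add_eq_of_lt_right _ h4]
    have hVai : V (a i) = E := by
      obtain ⟨q, rfl⟩ := hti
      have hq1 : 1 ≤ q := by
        rcases Nat.eq_zero_or_pos q with h | h
        · subst h; simp at hi
        · exact h
      rw [mul_comm]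
      exact hC3 q hq1
    have hEd : E < V ((d : 𝓞 K)) := by rw [← hVai]; exact hcon
    have hVan' : V (a n) = E := by
      obtain ⟨q, rfl⟩ := htn
      have hq1 : 1 ≤ q := by
        rcases Nat.eq_zero_or_pos q with h | h
        · subst h; simp at hn
        · exact h
      rw [mul_comm]
      exact hC3 q hq1
    -- m = 1 is impossible
    have hm2 : 2 ≤ m := by
      by_contra h
      have hm1 : m = 1 := by omega
      have h1 : a (n + 1) = c := by
        have h1' := haper
        rw [hm1] at h1'
        rw [show n + 1 = 1 + n by omega, h1', ha1]
      have h3 : a n ^ d = 0 := by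
        have h2 := (hrec n).symm.trans h1
        linear_combination h2
      exact hane0 n hn (pow_eq_zero_iff hd0 |>.mp h3)
    obtain ⟨p, rfl⟩ : ∃ p, m = p + 1 := ⟨m - 1, by omega⟩
    have hp1 : 1 ≤ p := by omega
    set x := a (p + n) with hx
    set y := a p with hy
    have hxyne : x - y ≠ 0 := sub_ne_zero.mpr (hatail p (by omega))
    have hxd : x ^ d = y ^ d := by
      have h1 : a (p + n + 1) = a (p + 1) := by
        have := haper
        rwa [show p + 1 + n = p + n + 1 by omega] at this
      have h2 := hrec (p + n)
      have h3 := hrec p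
      have h4 : x ^ d + c = y ^ d + c := by
        rw [← h2, ← h3, h1]
      exact add_right_cancel h4
    have hSigma : (∑ l ∈ range d, x ^ l * y ^ (d - 1 - l)) = 0 := by
      have h1 : (∑ l ∈ range d, x ^ l * y ^ (d - 1 - l)) * (x - y) = 0 := by
        rw [geom_sum₂_mul, hxd, sub_self]
      rcases mul_eq_zero.mp h1 with h | h
      · exact h
      · exact absurd h hxyne
    have hClaimA : ∀ j, 1 ≤ j → V (a (j + n) - a j) ≤ E ^ d := by
      intro j hj
      induction j, hj using Nat.le_induction with
      | base =>
        have h1 : a (1 + n) - a 1 = a n ^ d := by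
          rw [show 1 + n = n + 1 by omega, hrec, ha1]; ring
        rw [h1, V.map_pow, hVan']
      | succ j hj ih =>
        have e : j + 1 + n = (j + n) + 1 := by omega
        rw [e]
        exact le_trans (hs1 _ _) ih
    have hdel : V (x - y) ≤ E ^ d := hClaimA p hp1
    have hyne0 : y ≠ 0 := hane0 p hp1
    have hyV0 : V y ≠ 0 := hVne _ hyne0
    have hyE : E ≤ V y := by
      by_cases h : t ∣ p
      · obtain ⟨q, rfl⟩ := h
        have hq1 : 1 ≤ q := by
          rcases Nat.eq_zero_or_pos q with h' | h'
          · subst h'; simp at hp1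
          · exact h'
        have := hC3 q hq1
        rw [mul_comm] at this
        rw [hy, this]
      · have h1 := hdiv p h
        rw [hy, h1]
        exact le_of_lt htlt
    have hsplit : (∑ l ∈ range d, x ^ l * y ^ (d - 1 - l))
        = (d : 𝓞 K) * y ^ (d - 1) + ∑ l ∈ range d, (x ^ l - y ^ l) * y ^ (d - 1 - l) := by
      have h1 : ∀ l ∈ range d, x ^ l * y ^ (d - 1 - l)
          = y ^ (d - 1) + (x ^ l - y ^ l) * y ^ (d - 1 - l) := by
        intro l hl
        have hld : l + (d - 1 - l) = d - 1 := by
          have := mem_range.mp hl; omega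
        have h2 : y ^ l * y ^ (d - 1 - l) = y ^ (d - 1) := by
          rw [← pow_add, hld]
        rw [sub_mul, h2]; ring
      rw [Finset.sum_congr rfl h1, Finset.sum_add_distrib, Finset.sum_const, card_range,
        nsmul_eq_mul]
    have hterm : ∀ l ∈ range d, V ((x ^ l - y ^ l) * y ^ (d - 1 - l)) ≤ E ^ d := by
      intro l _
      have h1 : x ^ l - y ^ l = (∑ u ∈ range l, x ^ u * y ^ (l - 1 - u)) * (x - y) :=
        (geom_sum₂_mul x y l).symm
      have h2 : V (x ^ l - y ^ l) ≤ V (x - y) := by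
        rw [h1, V.map_mul]
        exact mul_le_of_le_one_left' (hV1 _)
      calc V ((x ^ l - y ^ l) * y ^ (d - 1 - l))
          = V (x ^ l - y ^ l) * V (y ^ (d - 1 - l)) := V.map_mul _ _
        _ ≤ V (x ^ l - y ^ l) := mul_le_of_le_one_right' (hV1 _)
        _ ≤ V (x - y) := h2
        _ ≤ E ^ d := hdel
    have hR : V (∑ l ∈ range d, (x ^ l - y ^ l) * y ^ (d - 1 - l)) ≤ E ^ d :=
      V.map_sum_le hterm
    have hmain : V ((d : 𝓞 K) * y ^ (d - 1)) ≠ 0 := by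
      rw [V.map_mul, V.map_pow]
      exact mul_ne_zero (hVne _ hdK0) (pow_ne_zero _ hyV0)
    have hEdlt : E ^ d < V ((d : 𝓞 K) * y ^ (d - 1)) := by
      rw [V.map_mul, V.map_pow]
      have h1 : E ^ d = E ^ (d - 1) * E := by
        rw [← pow_succ]; congr 1; omega
      rw [h1]
      have h2 : E ^ (d - 1) ≤ V y ^ (d - 1) := pow_le_pow_left' hyE _
      have h3 := mul_lt_mul_of_le_of_lt_of_nonneg_of_pos h2 hEd zero_le' (zero_lt_iff.mpr (pow_ne_zero _ hyV0))
      exact lt_of_lt_of_eq h3 (mul_comm _ _)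
    have hfinal : V (∑ l ∈ range d, x ^ l * y ^ (d - 1 - l)) ≠ 0 := by
      rw [hsplit, Valuation.map_add_eq_of_lt_left _ (lt_of_le_of_lt hR hEdlt)]
      exact hmain
    exact hfinal (by rw [hSigma]; exact V.map_zero)
  -- glue: deduce ideal divisibility from the valuation inequalities
  have hI0 : Ideal.span {a i} ≠ 0 := by
    simpa [Ideal.zero_eq_bot, Ideal.span_singleton_eq_bot] using hai0
  have hJ0 : Ideal.span {(d : 𝓞 K)} ≠ 0 := by
    simpa [Ideal.zero_eq_bot, Ideal.span_singleton_eq_bot] using hdK0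
  rw [dvd_iff_normalizedFactors_le_normalizedFactors hI0 hJ0, Multiset.le_iff_count]
  intro P
  by_cases hP : P ∈ normalizedFactors (Ideal.span {a i})
  · have hPprime : Prime P := prime_of_normalized_factor P hP
    have hPbot : P ≠ ⊥ := hPprime.ne_zero
    have hPisPrime : P.IsPrime := Ideal.isPrime_of_prime hPprime
    set v : HeightOneSpectrum (𝓞 K) := ⟨P, hPisPrime, hPbot⟩ with hv
    have h := key v
    rw [intValuation_apply, intValuation_apply, v.intValuationDef_if_neg hdK0,
      v.intValuationDef_if_neg hai0] at h
    rw [WithZero.exp_le_exp, neg_le_neg_iff, Nat.cast_le] at h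
    rw [← count_associates_factors_eq hI0 hPisPrime hPbot,
      ← count_associates_factors_eq hJ0 hPisPrime hPbot]
    exact h
  · rw [Multiset.count_eq_zero_of_notMem hP]
    exact Nat.zero_le _
end

section
/- Let d be a prime and suppose f(x) = x^d + c has exact type (m,1) with m ≥ 1 (a fixed point in the post-critical orbit). Set K = ℚ(c). Then f is stable over K, i.e., f^n(x) is irreducible over K for all n ≥ 1. -/
open Polynomial NumberField

namespace StableAuxHJM

/-- `X * u d k` is the polynomial (in the parameter) giving the `k`-th point `f^k(0)` of the
critical orbit of `x ↦ x^d + c`. -/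
noncomputable def u (d : ℕ) : ℕ → ℤ[X]
  | 0 => 0
  | k + 1 => X ^ (d - 1) * (u d k) ^ d + 1

/-- The polynomial whose roots are (essentially) the parameters of exact type `(m,1)`;
it is Eisenstein at `d`. -/
noncomputable def T (d m : ℕ) : ℤ[X] :=
  ∑ i ∈ Finset.range d, (u d m) ^ i * (u d (m - 1)) ^ (d - 1 - i)

variable {d : ℕ}

lemma u_zero : u d 0 = 0 := rfl

lemma u_succ (k : ℕ) : u d (k + 1) = X ^ (d - 1) * (u d k) ^ d + 1 := rfl

lemma u_one (hd : 2 ≤ d) : u d 1 = 1 := by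
  rw [u_succ, u_zero, zero_pow (by omega : d ≠ 0), mul_zero, zero_add]

lemma g_succ (hd : 2 ≤ d) (k : ℕ) :
    X * u d (k + 1) = (X * u d k) ^ d + X := by
  have h : d - 1 + 1 = d := by omega
  rw [u_succ, mul_pow]
  calc X * (X ^ (d - 1) * u d k ^ d + 1) = X ^ (d - 1 + 1) * u d k ^ d + X := by ring
  _ = X ^ d * u d k ^ d + X := by rw [h]

lemma X_pow_mul_T (hd : 2 ≤ d) (m : ℕ) :
    X ^ (d - 1) * T d m
      = ∑ i ∈ Finset.range d, (X * u d m) ^ i * (X * u d (m - 1)) ^ (d - 1 - i) := by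
  rw [T, Finset.mul_sum]
  refine Finset.sum_congr rfl fun i hi => ?_
  have h : i + (d - 1 - i) = d - 1 := by have := Finset.mem_range.1 hi; omega
  have hX : (X : ℤ[X]) ^ (d - 1) = X ^ i * X ^ (d - 1 - i) := by rw [← pow_add, h]
  rw [mul_pow, mul_pow, hX]
  ring

lemma key_identity (hd : 2 ≤ d) (j : ℕ) :
    X * u d (j + 2) - X * u d (j + 1)
      = X ^ (d - 1) * T d (j + 1) * (X * u d (j + 1) - X * u d j) := by
  have hT : X ^ (d - 1) * T d (j + 1)
      = ∑ i ∈ Finset.range d, (X * u d (j + 1)) ^ i * (X * u d j) ^ (d - 1 - i) := by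
    have := X_pow_mul_T hd (j + 1)
    simpa using this
  rw [hT, geom_sum₂_mul, g_succ hd (j + 1), g_succ hd j]
  ring

lemma u_spec (hd : 2 ≤ d) : ∀ k, 1 ≤ k →
    (u d k).Monic ∧ (u d k).natDegree + 1 = d ^ (k - 1) := by
  intro k hk
  induction k, hk using Nat.le_induction with
  | base => rw [u_one hd]; exact ⟨monic_one, by simp⟩
  | succ k hk ih =>
    obtain ⟨hM, hD⟩ := ih
    have hmp : (X ^ (d - 1) * (u d k) ^ d).Monic := (monic_X_pow _).mul (hM.pow _)
    have hdp : (X ^ (d - 1) * (u d k) ^ d).natDegree = (d - 1) + d * (u d k).natDegree := by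
      rw [(monic_X_pow _).natDegree_mul (hM.pow _), natDegree_X_pow, hM.natDegree_pow]
    have hpos : 0 < (X ^ (d - 1) * (u d k) ^ d).natDegree := by
      rw [hdp]; omega
    have hlt : degree (1 : ℤ[X]) < degree (X ^ (d - 1) * (u d k) ^ d) := by
      rw [degree_one, degree_eq_natDegree hmp.ne_zero]
      exact_mod_cast hpos
    constructor
    · rw [u_succ]; exact hmp.add_of_left hlt
    · rw [u_succ, natDegree_eq_of_degree_eq (degree_add_eq_left_of_degree_lt hlt), hdp]
      have h1 : d * (u d k).natDegree + d = d ^ k := by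
        have h2 : d * ((u d k).natDegree + 1) = d ^ k := by
          rw [hD]
          calc d * d ^ (k - 1) = d ^ (k - 1) * d := mul_comm _ _
          _ = d ^ (k - 1 + 1) := (pow_succ _ _).symm
          _ = d ^ k := by congr 1; omega
        rw [Nat.mul_succ] at h2
        omega
      have h3 : k + 1 - 1 = k := by omega
      rw [h3]
      generalize d * (u d k).natDegree = t at h1 ⊢
      omega

lemma T_spec (hd : 2 ≤ d) {m : ℕ} (hm : 2 ≤ m) :
    (T d m).Monic ∧ (T d m).natDegree + (d - 1 + d ^ (m - 1)) = d ^ m := by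
  obtain ⟨n, rfl⟩ : ∃ n, m = n + 2 := ⟨m - 2, by omega⟩
  obtain ⟨e, rfl⟩ : ∃ e, d = e + 1 := ⟨d - 1, by omega⟩
  have he : 1 ≤ e := by omega
  obtain ⟨hM, hD⟩ := u_spec hd (n + 2) (by omega)
  obtain ⟨hM', hD'⟩ := u_spec hd (n + 1) (by omega)
  rw [show n + 2 - 1 = n + 1 from rfl] at hD
  rw [show n + 1 - 1 = n from rfl] at hD'
  set A := (u (e + 1) (n + 2)).natDegree with hA
  set B := (u (e + 1) (n + 1)).natDegree with hB
  have hBA : B < A := by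
    have hp : (e + 1) ^ n < (e + 1) ^ (n + 1) := by
      apply Nat.pow_lt_pow_right (by omega)
      omega
    omega
  have hTsum : T (e + 1) (n + 2)
      = (∑ i ∈ Finset.range e, (u (e + 1) (n + 2)) ^ i * (u (e + 1) (n + 1)) ^ (e - i))
        + (u (e + 1) (n + 2)) ^ e := by
    rw [T, Finset.sum_range_succ]
    have h1 : n + 2 - 1 = n + 1 := by omega
    have h2 : ∀ i : ℕ, e + 1 - 1 - i = e - i := fun i => by omega
    simp only [h1, h2, Nat.sub_self, pow_zero, mul_one]
  have htop : ((u (e + 1) (n + 2)) ^ e).Monic := hM.pow e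
  have hdegtop : ((u (e + 1) (n + 2)) ^ e).natDegree = e * A := hM.natDegree_pow e
  have hlt : degree (∑ i ∈ Finset.range e,
        (u (e + 1) (n + 2)) ^ i * (u (e + 1) (n + 1)) ^ (e - i))
      < degree ((u (e + 1) (n + 2)) ^ e) := by
    have hdeg2 : degree ((u (e + 1) (n + 2)) ^ e) = ((e * A : ℕ) : WithBot ℕ) := by
      rw [degree_eq_natDegree htop.ne_zero, hdegtop]
    rw [hdeg2]
    refine lt_of_le_of_lt (degree_sum_le _ _) ?_
    rw [Finset.sup_lt_iff (WithBot.bot_lt_coe _)]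
    intro i hi
    have hi' := Finset.mem_range.1 hi
    have hmono : ((u (e + 1) (n + 2)) ^ i * (u (e + 1) (n + 1)) ^ (e - i)).Monic :=
      (hM.pow _).mul (hM'.pow _)
    have hnd : ((u (e + 1) (n + 2)) ^ i * (u (e + 1) (n + 1)) ^ (e - i)).natDegree
        = i * A + (e - i) * B := by
      rw [(hM.pow i).natDegree_mul (hM'.pow _), hM.natDegree_pow, hM'.natDegree_pow]
    rw [degree_eq_natDegree hmono.ne_zero, hnd]
    have harith : i * A + (e - i) * B < e * A := by
      have h1 : (e - i) * B < (e - i) * A :=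
        mul_lt_mul_of_pos_left hBA (by omega : 0 < e - i)
      have h2 : i * A + (e - i) * A = e * A := by
        rw [← Nat.add_mul]; congr 1; omega
      omega
    exact_mod_cast harith
  constructor
  · rw [hTsum]; exact htop.add_of_right hlt
  · rw [hTsum, natDegree_eq_of_degree_eq (degree_add_eq_right_of_degree_lt hlt), hdegtop]
    have h1 : (e + 1) ^ (n + 1) = A + 1 := hD.symm
    have h2 : (e + 1) ^ (n + 2) = (A + 1) * (e + 1) := by
      rw [pow_succ, h1]
    rw [show n + 2 - 1 = n + 1 from rfl, h2, h1, show e + 1 - 1 = e from rfl]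
    ring

lemma u_const (hd : 2 ≤ d) : ∀ k, 1 ≤ k → constantCoeff (u d k) = 1 := by
  intro k hk
  induction k, hk using Nat.le_induction with
  | base => rw [u_one hd]; exact map_one _
  | succ k hk ih =>
    have hX : constantCoeff (X ^ (d - 1) : ℤ[X]) = 0 := by
      rw [constantCoeff_apply, coeff_X_pow]
      simp only [if_neg (by omega : ¬ (0 = d - 1))]
    rw [u_succ, map_add, map_mul, map_one, hX, zero_mul, zero_add]

lemma T_const (hd : 2 ≤ d) {m : ℕ} (hm : 2 ≤ m) : constantCoeff (T d m) = d := by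
  have h1 : constantCoeff (u d m) = 1 := u_const hd m (by omega)
  have h2 : constantCoeff (u d (m - 1)) = 1 := u_const hd (m - 1) (by omega)
  rw [T, map_sum]
  have : ∀ i ∈ Finset.range d,
      constantCoeff ((u d m) ^ i * (u d (m - 1)) ^ (d - 1 - i)) = 1 := by
    intro i _
    rw [map_mul, map_pow, map_pow, h1, h2, one_pow, one_pow, one_mul]
  rw [Finset.sum_congr rfl this]
  simp

lemma map_g_sub (hd : d.Prime) : ∀ k : ℕ,
    (X * u d (k + 1) - X * u d k).map (Int.castRingHom (ZMod d)) = X ^ (d ^ k) := by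
  haveI : Fact d.Prime := ⟨hd⟩
  intro k
  induction k with
  | zero =>
    rw [u_one hd.two_le, u_zero, mul_one, mul_zero, sub_zero, pow_zero, pow_one,
      Polynomial.map_X]
  | succ k ih =>
    have h : X * u d (k + 2) - X * u d (k + 1)
        = (X * u d (k + 1)) ^ d - (X * u d k) ^ d := by
      rw [g_succ hd.two_le (k + 1), g_succ hd.two_le k]; ring
    rw [h, Polynomial.map_sub, Polynomial.map_pow, Polynomial.map_pow, ← sub_pow_char,
      ← Polynomial.map_sub, ih, ← pow_mul, ← pow_succ]

lemma T_map_zmod (hd : d.Prime) {m : ℕ} (hm : 2 ≤ m)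
    (hdeg : (T d m).natDegree + (d - 1 + d ^ (m - 1)) = d ^ m) :
    (T d m).map (Int.castRingHom (ZMod d)) = X ^ (T d m).natDegree := by
  haveI : Fact d.Prime := ⟨hd⟩
  obtain ⟨n, rfl⟩ : ∃ n, m = n + 2 := ⟨m - 2, by omega⟩
  rw [show n + 2 - 1 = n + 1 from rfl] at hdeg
  have h := key_identity hd.two_le (n + 1)
  have h2 := congrArg (Polynomial.map (Int.castRingHom (ZMod d))) h
  rw [show n + 1 + 1 = n + 2 from rfl] at h2
  rw [show n + 1 + 2 = n + 2 + 1 from rfl, map_g_sub hd (n + 2), Polynomial.map_mul,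
    Polynomial.map_mul, map_g_sub hd (n + 1), Polynomial.map_pow, Polynomial.map_X] at h2
  have hc : (X : (ZMod d)[X]) ^ (d ^ (n + 2))
      = (T d (n + 2)).map (Int.castRingHom (ZMod d)) * X ^ (d - 1 + d ^ (n + 1)) := by
    rw [h2, pow_add]; ring
  have hX : (X : (ZMod d)[X]) ^ (d - 1 + d ^ (n + 1)) ≠ 0 := pow_ne_zero _ X_ne_zero
  have hdm : d ^ (n + 2) = (T d (n + 2)).natDegree + (d - 1 + d ^ (n + 1)) := by
    rw [← hdeg]
  rw [hdm, pow_add] at hc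
  exact (mul_right_cancel₀ hX hc).symm

lemma T_irreducible (hd : d.Prime) {m : ℕ} (hm : 2 ≤ m) : Irreducible (T d m) := by
  haveI : NeZero d := ⟨hd.ne_zero⟩
  obtain ⟨hMon, hDeq⟩ := T_spec hd.two_le hm
  have hmap := T_map_zmod hd hm hDeq
  have hD0 : 0 < (T d m).natDegree := by
    have h2 : 2 ≤ d := hd.two_le
    set t := d ^ (m - 1) with ht
    have hdt : d ≤ t := by
      rw [ht]
      exact Nat.le_self_pow (by omega) d
    have h3 : t + t ≤ d ^ m := by
      have hm2 : d ^ m = t * d := by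
        rw [ht, ← pow_succ]; congr 1; omega
      calc t + t = t * 2 := by ring
      _ ≤ t * d := Nat.mul_le_mul_left t h2
      _ = d ^ m := hm2.symm
    omega
  have hdZ : ((d : ℤ)) ≠ 0 := by exact_mod_cast hd.ne_zero
  have hdP : Prime ((d : ℕ) : ℤ) := Nat.prime_iff_prime_int.mp hd
  apply irreducible_of_eisenstein_criterion (P := Ideal.span {((d : ℕ) : ℤ)})
  · rw [Ideal.span_singleton_prime hdZ]; exact hdP
  · rw [hMon.leadingCoeff]
    intro h
    rw [Ideal.mem_span_singleton] at h
    exact hdP.not_dvd_one h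
  · intro n hn
    rw [degree_eq_natDegree hMon.ne_zero] at hn
    have hn' : n < (T d m).natDegree := by exact_mod_cast hn
    rw [Ideal.mem_span_singleton]
    have hcoeff : (((T d m).coeff n : ℤ) : ZMod d) = 0 := by
      have hcm := congrArg (fun p => Polynomial.coeff p n) hmap
      simp only [Polynomial.coeff_map, coeff_X_pow, eq_intCast] at hcm
      rw [if_neg (by omega : ¬ n = (T d m).natDegree)] at hcm
      exact hcm
    exact_mod_cast (ZMod.intCast_zmod_eq_zero_iff_dvd _ _).mp hcoeff
  · rw [degree_eq_natDegree hMon.ne_zero]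
    exact_mod_cast hD0
  · have hc : (T d m).coeff 0 = ((d : ℕ) : ℤ) := by
      rw [← constantCoeff_apply]; exact T_const hd.two_le hm
    rw [hc, Ideal.span_singleton_pow, Ideal.mem_span_singleton]
    rintro ⟨r, hr⟩
    have h1 : (1 : ℤ) = (d : ℤ) * r :=
      mul_left_cancel₀ hdZ (by linear_combination hr)
    exact hdP.not_dvd_one ⟨r, h1⟩
  · exact hMon.isPrimitive

/-- The `N`-th iterate of `x ↦ x^d + t` as a polynomial. -/
noncomputable def pIter {R : Type*} [CommRing R] (d : ℕ) (t : R) : ℕ → R[X]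
  | 0 => X
  | k + 1 => (pIter d t k) ^ d + C t

/-- The critical orbit of `x ↦ x^d + t`. -/
def oIter {R : Type*} [CommRing R] (d : ℕ) (t : R) : ℕ → R
  | 0 => 0
  | k + 1 => (oIter d t k) ^ d + t

lemma pIter_map {R S : Type*} [CommRing R] [CommRing S] (φ : R →+* S) (d : ℕ) (t : R) (k : ℕ) :
    (pIter d t k).map φ = pIter d (φ t) k := by
  induction k with
  | zero => simp [pIter]
  | succ k ih => simp [pIter, Polynomial.map_add, Polynomial.map_pow, Polynomial.map_C, ih]

lemma pIter_zero_c {R : Type*} [CommRing R] (d k : ℕ) : pIter d (0 : R) k = X ^ (d ^ k) := by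
  induction k with
  | zero => simp [pIter]
  | succ k ih => rw [pIter, ih, map_zero, add_zero, ← pow_mul, ← pow_succ]

lemma pIter_constantCoeff {R : Type*} [CommRing R] (d : ℕ) (t : R) (k : ℕ) :
    constantCoeff (pIter d t k) = oIter d t k := by
  induction k with
  | zero => simp [pIter, oIter, constantCoeff_apply, coeff_X_zero]
  | succ k ih =>
    rw [pIter, oIter, map_add, map_pow, ih]
    simp

lemma pIter_monic {R : Type*} [CommRing R] [Nontrivial R] (hd : 2 ≤ d) (t : R) : ∀ k : ℕ,
    (pIter d t k).Monic ∧ (pIter d t k).natDegree = d ^ k := by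
  intro k
  induction k with
  | zero => exact ⟨monic_X, by simp [pIter]⟩
  | succ k ih =>
    obtain ⟨hM, hD⟩ := ih
    have hmp : ((pIter d t k) ^ d).Monic := hM.pow d
    have hnd : ((pIter d t k) ^ d).natDegree = d ^ (k + 1) := by
      rw [hM.natDegree_pow, hD, ← pow_succ']
    have hpos : 0 < ((pIter d t k) ^ d).natDegree := by
      rw [hnd]; positivity
    have hlt : degree (C t) < degree ((pIter d t k) ^ d) := by
      refine lt_of_le_of_lt (degree_C_le) ?_
      rw [degree_eq_natDegree hmp.ne_zero]
      exact_mod_cast hpos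
    constructor
    · rw [pIter]; exact hmp.add_of_left hlt
    · rw [pIter, natDegree_eq_of_degree_eq (degree_add_eq_left_of_degree_lt hlt), hnd]

lemma oIter_key {R : Type*} [CommRing R] (hd : 2 ≤ d) (t : R) : ∀ k : ℕ, 1 ≤ k →
    ∃ s : R, oIter d t k = t + t ^ 2 * s := by
  intro k hk
  induction k, hk using Nat.le_induction with
  | base =>
    refine ⟨0, ?_⟩
    rw [oIter, oIter, zero_pow (by omega : d ≠ 0)]
    ring
  | succ k hk ih =>
    obtain ⟨s, hs⟩ := ih
    refine ⟨t ^ (d - 2) * (1 + t * s) ^ d, ?_⟩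
    have h2 : 2 + (d - 2) = d := by omega
    rw [oIter, hs]
    calc (t + t ^ 2 * s) ^ d + t = (t * (1 + t * s)) ^ d + t := by ring
    _ = t ^ d * (1 + t * s) ^ d + t := by rw [mul_pow]
    _ = t ^ (2 + (d - 2)) * (1 + t * s) ^ d + t := by rw [h2]
    _ = t + t ^ 2 * (t ^ (d - 2) * (1 + t * s) ^ d) := by rw [pow_add]; ring

end StableAuxHJM

open StableAuxHJM

/-- Let `d` be a prime and suppose `f(x) = x^d + c` has exact type `(m,1)`
with `m ≥ 1` (a fixed point in the post-critical orbit). Set `K = ℚ(c)`. Then `f` is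
stable over `K`: every iterate `f^N` is irreducible in `K[X]`. -/
theorem stable_of_exact_type_m_one {K : Type*} [Field K] [NumberField K]
    (d m : ℕ) (hd : d.Prime) (hm : 1 ≤ m)
    (c : K)
    (hK : IntermediateField.adjoin ℚ {c} = ⊤)
    (f : K → K) (hf : f = fun x => x ^ d + c)
    (hper : f^[m + 1] 0 = f^[m] 0)
    (htail : ∀ k, k < m → f^[k + 1] 0 ≠ f^[k] 0)
    (N : ℕ) (hN : 1 ≤ N) :
    Irreducible ((fun p => (X ^ d + C c).comp p)^[N] (X : K[X])) := by
  have hd2 : 2 ≤ d := hd.two_le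
  have hfk : ∀ k, f^[k + 1] 0 = (f^[k] 0) ^ d + c := by
    intro k
    rw [Function.iterate_succ_apply', hf]
  have h10 : f^[1] 0 = c := by
    rw [hfk 0, Function.iterate_zero_apply, zero_pow (by omega : d ≠ 0), zero_add]
  have hc0 : c ≠ 0 := by
    have h := htail 0 (by omega)
    rwa [h10, Function.iterate_zero_apply] at h
  -- the case m = 1 is impossible
  have hm2 : 2 ≤ m := by
    rcases Nat.lt_or_ge m 2 with h | h
    · exfalso
      have hm1 : m = 1 := by omega
      subst hm1
      have h2 : f^[1 + 1] 0 = c ^ d + c := by rw [hfk 1, h10]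
      rw [h2, h10] at hper
      have hcd : c ^ d = 0 := by linear_combination hper
      exact hc0 (pow_eq_zero_iff (by omega : d ≠ 0) |>.mp hcd)
    · exact h
  -- the orbit is given by the universal polynomials
  have horb : ∀ k, f^[k] 0 = aeval c (X * u d k) := by
    intro k
    induction k with
    | zero => simp [u_zero]
    | succ k ih =>
      rw [hfk k, ih, g_succ hd2, map_add, map_pow, aeval_X]
  have horb' : ∀ k, f^[k] 0 = c * aeval c (u d k) := by
    intro k
    rw [horb k, map_mul, aeval_X]
  -- c is a root of T d m
  have hTzero : aeval c (T d m) = 0 := by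
    obtain ⟨n, hn⟩ : ∃ n, m = n + 2 := ⟨m - 2, by omega⟩
    subst hn
    have hkey := congrArg (aeval c) (key_identity hd2 (n + 1))
    simp only [map_sub, map_mul, map_pow, aeval_X] at hkey
    rw [show n + 1 + 2 = n + 2 + 1 from rfl, show n + 1 + 1 = n + 2 from rfl,
      ← horb' (n + 2 + 1), ← horb' (n + 2), ← horb' (n + 1), hper, sub_self] at hkey
    have hne : f^[n + 2] 0 - f^[n + 1] 0 ≠ 0 := by
      have := htail (n + 1) (by omega)
      rw [show n + 1 + 1 = n + 2 from rfl] at this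
      exact sub_ne_zero.mpr this
    have hcp : c ^ (d - 1) ≠ 0 := pow_ne_zero _ hc0
    rcases mul_eq_zero.mp hkey.symm with h | h
    · rcases mul_eq_zero.mp h with h' | h'
      · exact absurd h' hcp
      · exact h'
    · exact absurd h hne
  obtain ⟨hTmon, hTdeg⟩ := T_spec hd2 hm2
  have hTirr : Irreducible (T d m) := T_irreducible hd hm2
  -- c is an algebraic integer
  have hci : IsIntegral ℤ c := ⟨T d m, hTmon, by rwa [← aeval_def]⟩
  have hciQ : IsIntegral ℚ c := IsIntegral.of_finite ℚ c
  -- the minimal polynomial of c over ℚ is T d m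
  have hTQirr : Irreducible ((T d m).map (algebraMap ℤ ℚ)) :=
    (hTmon.irreducible_iff_irreducible_map_fraction_map).mp hTirr
  have hmin : minpoly ℚ c = (T d m).map (algebraMap ℤ ℚ) := by
    refine (minpoly.eq_of_irreducible_of_monic hTQirr ?_ (hTmon.map _)).symm
    rw [aeval_map_algebraMap]
    exact hTzero
  have hcoeff0 : (minpoly ℚ c).coeff 0 = (d : ℚ) := by
    rw [hmin, coeff_map]
    have hc' : (T d m).coeff 0 = ((d : ℕ) : ℤ) := by
      rw [← constantCoeff_apply]; exact T_const hd2 hm2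
    rw [hc']
    simp
  -- the norm of c is ± d
  have hnorm : Algebra.norm ℚ c
      = (-1) ^ (IntermediateField.adjoin.powerBasis hciQ |>.map
          ((IntermediateField.equivOfEq hK).trans IntermediateField.topEquiv)).dim * (d : ℚ) := by
    set pb := (IntermediateField.adjoin.powerBasis hciQ).map
      ((IntermediateField.equivOfEq hK).trans IntermediateField.topEquiv) with hpb
    have hgen : pb.gen = c := rfl
    have := Algebra.PowerBasis.norm_gen_eq_coeff_zero_minpoly pb
    rwa [hgen, hcoeff0] at this
  set n₀ := (IntermediateField.adjoin.powerBasis hciQ |>.map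
      ((IntermediateField.equivOfEq hK).trans IntermediateField.topEquiv)).dim with hn₀
  -- move to the ring of integers
  set c' : 𝓞 K := ⟨c, hci⟩ with hc'def
  have hc'K : (algebraMap (𝓞 K) K) c' = c := rfl
  have hnormZ : Algebra.norm ℤ c' = (-1) ^ n₀ * (d : ℤ) := by
    have h1 : ((Algebra.norm ℤ c' : ℤ) : ℚ) = Algebra.norm ℚ c := by
      rw [← hc'K]; exact Algebra.coe_norm_int c'
    have h2 : (((-1) ^ n₀ * (d : ℤ) : ℤ) : ℚ) = (-1) ^ n₀ * (d : ℚ) := by push_cast; ring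
    have h3 : ((Algebra.norm ℤ c' : ℤ) : ℚ) = (((-1) ^ n₀ * (d : ℤ) : ℤ) : ℚ) := by
      rw [h1, hnorm, h2]
    exact_mod_cast h3
  have hnatAbs : (Algebra.norm ℤ c').natAbs = d := by
    rw [hnormZ, Int.natAbs_mul, Int.natAbs_pow]
    simp
  set P : Ideal (𝓞 K) := Ideal.span {c'} with hP
  have hPprime : P.IsPrime := by
    apply Ideal.isPrime_of_irreducible_absNorm
    rw [hP, Ideal.absNorm_span_singleton, hnatAbs]
    exact (Nat.irreducible_iff_nat_prime d).mpr hd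
  have hPne : P ≠ ⊤ := hPprime.ne_top
  have hc'0 : c' ≠ 0 := by
    intro h
    apply hc0
    rw [← hc'K, h, map_zero]
  have hc'P : c' ∈ P := Ideal.mem_span_singleton_self c'
  -- Eisenstein for the iterate over 𝓞 K
  obtain ⟨hFmon, hFdeg⟩ := pIter_monic (R := 𝓞 K) hd2 c' N
  have hFmap : (pIter d c' N).map (Ideal.Quotient.mk P) = X ^ (d ^ N) := by
    rw [pIter_map, Ideal.Quotient.eq_zero_iff_mem.mpr hc'P, pIter_zero_c]
  have hFirr : Irreducible (pIter d c' N) := by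
    apply irreducible_of_eisenstein_criterion hPprime
    · rw [hFmon.leadingCoeff]
      intro h
      exact hPne ((Ideal.eq_top_iff_one P).mpr h)
    · intro n hn
      rw [degree_eq_natDegree hFmon.ne_zero, hFdeg] at hn
      have hn' : n < d ^ N := by exact_mod_cast hn
      have hcm := congrArg (fun p => Polynomial.coeff p n) hFmap
      simp only [Polynomial.coeff_map, coeff_X_pow] at hcm
      rw [if_neg (by omega : ¬ n = d ^ N)] at hcm
      exact Ideal.Quotient.eq_zero_iff_mem.mp hcm
    · rw [degree_eq_natDegree hFmon.ne_zero, hFdeg]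
      exact_mod_cast pow_pos (by omega : 0 < d) N
    · have h0 : (pIter d c' N).coeff 0 = oIter d c' N := by
        rw [← constantCoeff_apply]; exact pIter_constantCoeff d c' N
      obtain ⟨s, hs⟩ := oIter_key hd2 c' N hN
      rw [h0, hs, Ideal.span_singleton_pow, Ideal.mem_span_singleton]
      rintro ⟨r, hr⟩
      have hz : c' * (1 + c' * s - c' * r) = 0 := by linear_combination hr
      rcases mul_eq_zero.mp hz with h | h
      · exact hc'0 h
      · apply hPne
        rw [Ideal.eq_top_iff_one]
        have h1 : (1 : 𝓞 K) = c' * (r - s) := by linear_combination h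
        rw [h1]
        exact Ideal.mul_mem_right _ _ hc'P
    · exact hFmon.isPrimitive
  have hFKirr : Irreducible ((pIter d c' N).map (algebraMap (𝓞 K) K)) :=
    (hFmon.irreducible_iff_irreducible_map_fraction_map).mp hFirr
  rw [pIter_map, hc'K] at hFKirr
  have hgoal : ∀ n : ℕ, (fun p => (X ^ d + C c).comp p)^[n] (X : K[X]) = pIter d c n := by
    intro n
    induction n with
    | zero => rfl
    | succ n ih =>
      rw [Function.iterate_succ_apply', ih]
      simp [pIter, add_comp, pow_comp, X_comp, C_comp]
  rw [hgoal N]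
  exact hFKirr
end

section
/- Let d be a prime and m ≥ 1. The polynomial G_d(m,1) ∈ ℤ[x], whose roots are exactly the Misiurewicz parameters c with exact type (m,1) for x^d + c, is irreducible over ℚ. Equivalently, if c is a root of G_d(m,1) then [ℚ(c):ℚ] = (d^{m−1}−1)(d−1) = deg G_d(m,1). -/
open NumberField



open Polynomial

/-- The auxiliary polynomials: `f_c^[k+1](0) = c * (vAux d k).eval c` for `f_c x = x^d + c`. -/
noncomputable def vAux (d : ℕ) : ℕ → Polynomial ℤ
  | 0 => 1
  | k + 1 => 1 + Polynomial.X ^ (d - 1) * (vAux d k) ^ d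

lemma vAux_arith {d a : ℕ} (hd : 2 ≤ d) (h1 : 1 ≤ a) :
    d - 1 + (a - 1) * d = a * d - 1 ∧ d - 1 + d * (a - 1) = d * a - 1 := by
  obtain ⟨n, rfl⟩ : ∃ n, a = n + 1 := ⟨a - 1, by omega⟩
  have h3 : (n + 1) * d = n * d + d := by rw [Nat.add_mul, one_mul]
  have h4 : d * (n + 1) = d * n + d := by rw [Nat.mul_add, mul_one]
  simp only [Nat.add_sub_cancel, h3, h4]
  omega

lemma vAux_monic_natDegree {d : ℕ} (hd : 2 ≤ d) (k : ℕ) :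
    (vAux d k).Monic ∧ (vAux d k).natDegree = d ^ k - 1 := by
  induction k with
  | zero => exact ⟨monic_one, by simp [vAux]⟩
  | succ k ih =>
    obtain ⟨hm, hdeg⟩ := ih
    have hX : (Polynomial.X ^ (d - 1) * (vAux d k) ^ d).Monic :=
      (monic_X_pow _).mul (hm.pow _)
    have hXdeg : (Polynomial.X ^ (d - 1) * (vAux d k) ^ d).natDegree = d ^ (k + 1) - 1 := by
      rw [natDegree_mul (monic_X_pow _).ne_zero (hm.pow _).ne_zero, natDegree_X_pow,
        natDegree_pow, hdeg, pow_succ']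
      exact (vAux_arith hd (Nat.one_le_pow _ _ (by omega))).2
    have hlt : (1 : ℤ[X]).degree < (Polynomial.X ^ (d - 1) * (vAux d k) ^ d).degree := by
      apply degree_lt_degree
      rw [natDegree_one, hXdeg]
      have h1 : d ≤ d ^ (k + 1) := Nat.le_self_pow (by omega) d
      omega
    constructor
    · show ((1 : ℤ[X]) + Polynomial.X ^ (d - 1) * (vAux d k) ^ d).Monic
      rw [add_comm]
      exact hX.add_of_left hlt
    · show ((1 : ℤ[X]) + Polynomial.X ^ (d - 1) * (vAux d k) ^ d).natDegree = _
      rw [add_comm, natDegree_add_eq_left_of_degree_lt hlt, hXdeg]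

lemma vAux_eval_zero {d : ℕ} (hd : 2 ≤ d) (k : ℕ) : (vAux d k).eval 0 = 1 := by
  induction k with
  | zero => simp [vAux]
  | succ k ih => simp [vAux, zero_pow (show d - 1 ≠ 0 by omega)]

lemma vAux_map_sub {d : ℕ} [Fact d.Prime] (k : ℕ) :
    (vAux d (k + 1)).map (Int.castRingHom (ZMod d)) -
      (vAux d k).map (Int.castRingHom (ZMod d)) = Polynomial.X ^ (d ^ (k + 1) - 1) := by
  have hd : 2 ≤ d := (Fact.out : d.Prime).two_le
  induction k with
  | zero =>
    simp only [vAux, Polynomial.map_add, Polynomial.map_one, Polynomial.map_mul,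
      Polynomial.map_pow, Polynomial.map_X, one_pow, mul_one, pow_one]
    ring
  | succ k ih =>
    have hfrob : ∀ a b : (ZMod d)[X], (a - b) ^ d = a ^ d - b ^ d := fun a b =>
      sub_pow_char a b
    calc (vAux d (k + 2)).map (Int.castRingHom (ZMod d)) -
        (vAux d (k + 1)).map (Int.castRingHom (ZMod d))
        = Polynomial.X ^ (d - 1) *
          (((vAux d (k + 1)).map (Int.castRingHom (ZMod d))) ^ d -
           ((vAux d k).map (Int.castRingHom (ZMod d))) ^ d) := by
          show (vAux d ((k + 1) + 1)).map _ - (vAux d (k + 1)).map _ = _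
          simp only [vAux, Polynomial.map_add, Polynomial.map_one, Polynomial.map_mul,
            Polynomial.map_pow, Polynomial.map_X]
          ring
      _ = Polynomial.X ^ (d ^ (k + 2) - 1) := by
          rw [← hfrob, ih, ← pow_mul, ← pow_add]
          congr 1
          rw [pow_succ d (k + 1)]
          exact (vAux_arith hd (Nat.one_le_pow _ _ (by omega))).1

lemma vAux_succ (d k : ℕ) :
    vAux d (k + 1) = 1 + Polynomial.X ^ (d - 1) * (vAux d k) ^ d := by
  simp only [vAux]

theorem degree_of_misiurewicz_param_period_one' {K : Type*} [Field K] [NumberField K]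
    (d m : ℕ) (hd : d.Prime) (hm : 1 ≤ m)
    (c : 𝓞 K)
    (hK : IntermediateField.adjoin ℚ {algebraMap (𝓞 K) K c} = ⊤)
    (f : 𝓞 K → 𝓞 K) (hf : f = fun x => x ^ d + c)
    (hper : f^[m + 1] 0 = f^[m] 0)
    (htail : ∀ k, k < m → f^[k + 1] 0 ≠ f^[k] 0) :
    Module.finrank ℚ K = (d ^ (m - 1) - 1) * (d - 1) := by
  haveI : Fact d.Prime := ⟨hd⟩
  have hd2 : 2 ≤ d := hd.two_le
  subst hf
  -- `c ≠ 0`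
  have hc : c ≠ 0 := by
    have h := htail 0 (by omega)
    simpa [zero_pow (show d ≠ 0 by omega)] using h
  -- the orbit of the critical point in terms of the polynomials `vAux`
  have horb : ∀ k, (fun x : 𝓞 K => x ^ d + c)^[k + 1] 0
      = c * (Polynomial.aeval c) (vAux d k) := by
    intro k
    induction k with
    | zero => simp [vAux, zero_pow (show d ≠ 0 by omega)]
    | succ k ih =>
      rw [Function.iterate_succ_apply', ih]
      have hcd : (c * (Polynomial.aeval c) (vAux d k)) ^ d
          = c * (c ^ (d - 1) * ((Polynomial.aeval c) (vAux d k)) ^ d) := by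
        have h1 : c ^ d = c * c ^ (d - 1) := by
          conv_lhs => rw [show d = 1 + (d - 1) by omega]
          rw [pow_add, pow_one]
        rw [mul_pow, h1]; ring
      simp only [vAux_succ, map_add, map_mul, map_pow, map_one, aeval_X]
      rw [hcd]; ring
  rcases m with _ | m
  · omega
  rcases m with _ | t
  · -- the case `m = 1` is impossible
    exfalso
    have h1 : c * (Polynomial.aeval c) (vAux d 1) = c * (Polynomial.aeval c) (vAux d 0) := by
      rw [← horb 1, ← horb 0]; exact hper
    have h2 : (Polynomial.aeval c) (vAux d 1) = (Polynomial.aeval c) (vAux d 0) :=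
      mul_left_cancel₀ hc h1
    rw [vAux_succ] at h2
    simp only [vAux, map_add, map_mul, map_pow, map_one, aeval_X, one_pow, mul_one] at h2
    -- h2 : 1 + c ^ (d - 1) = 1
    have h3 : c ^ (d - 1) = 0 := by
      have := add_left_cancel (h2.trans (add_zero (1 : 𝓞 K)).symm)
      simpa using this
    exact hc (pow_eq_zero_iff (show d - 1 ≠ 0 by omega) |>.mp h3)
  · -- the main case `m = t + 2`
    set x := (Polynomial.aeval c) (vAux d (t + 1)) with hxdef
    set y := (Polynomial.aeval c) (vAux d t) with hydef
    -- the fixed-point relation gives `x ^ d = y ^ d`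
    have h1 : c * (Polynomial.aeval c) (vAux d (t + 2)) = c * x := by
      rw [← horb, ← horb]; exact hper
    have h2 : (Polynomial.aeval c) (vAux d (t + 2)) = x := mul_left_cancel₀ hc h1
    have e1 : (Polynomial.aeval c) (vAux d (t + 2)) = 1 + c ^ (d - 1) * x ^ d := by
      rw [vAux_succ]
      simp only [map_add, map_mul, map_pow, map_one, aeval_X, hxdef]
    have e2 : x = 1 + c ^ (d - 1) * y ^ d := by
      rw [hxdef, vAux_succ]
      simp only [map_add, map_mul, map_pow, map_one, aeval_X, hydef]
    have h3 : (1 : 𝓞 K) + c ^ (d - 1) * x ^ d = 1 + c ^ (d - 1) * y ^ d :=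
      (e1.symm.trans h2).trans e2
    have hxy : x ^ d = y ^ d :=
      mul_left_cancel₀ (pow_ne_zero _ hc) (add_left_cancel h3)
    -- the tail condition gives `x ≠ y`
    have hne : x ≠ y := by
      have h := htail (t + 1) (by omega)
      rw [horb (t + 1), horb t] at h
      exact fun hxyeq => h (by rw [← hxdef, ← hydef, hxyeq])
    -- the Misiurewicz polynomial
    set G : Polynomial ℤ :=
      ∑ i ∈ Finset.range d, (vAux d (t + 1)) ^ i * (vAux d t) ^ (d - 1 - i) with hGdef
    have hAG : (Polynomial.aeval c) G = 0 := by
      have hgs : (∑ i ∈ Finset.range d, x ^ i * y ^ (d - 1 - i)) * (x - y) = x ^ d - y ^ d :=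
        geom_sum₂_mul x y d
      have hAGsum : (Polynomial.aeval c) G = ∑ i ∈ Finset.range d, x ^ i * y ^ (d - 1 - i) := by
        rw [hGdef, map_sum]
        simp only [map_mul, map_pow, hxdef, hydef]
      have hz : (Polynomial.aeval c) G * (x - y) = 0 := by
        rw [hAGsum, hgs, hxy, sub_self]
      rcases mul_eq_zero.mp hz with h | h
      · exact h
      · exact absurd (sub_eq_zero.mp h) hne
    -- degree and monicity of `G`
    obtain ⟨hm1, hdeg1⟩ := vAux_monic_natDegree hd2 (t + 1)
    obtain ⟨hm0, hdeg0⟩ := vAux_monic_natDegree hd2 t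
    have hpowlt : d ^ t - 1 < d ^ (t + 1) - 1 := by
      have h4 : d ^ t < d ^ (t + 1) := Nat.pow_lt_pow_succ (by omega)
      have h5 : 1 ≤ d ^ t := Nat.one_le_pow _ _ (by omega)
      omega
    have hBlt : (vAux d t).degree < (vAux d (t + 1)).degree :=
      degree_lt_degree (by rw [hdeg0, hdeg1]; exact hpowlt)
    have hB : (vAux d (t + 1) - vAux d t).Monic := hm1.sub_of_left hBlt
    have hBdeg : (vAux d (t + 1) - vAux d t).natDegree = d ^ (t + 1) - 1 := by
      rw [natDegree_eq_of_degree_eq (degree_sub_eq_left_of_degree_lt hBlt), hdeg1]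
    have hClt : ((vAux d t) ^ d).degree < ((vAux d (t + 1)) ^ d).degree := by
      apply degree_lt_degree
      rw [natDegree_pow, natDegree_pow, hdeg0, hdeg1]
      exact mul_lt_mul_of_pos_left hpowlt (by omega)
    have hC : ((vAux d (t + 1)) ^ d - (vAux d t) ^ d).Monic := (hm1.pow d).sub_of_left hClt
    have hCdeg : ((vAux d (t + 1)) ^ d - (vAux d t) ^ d).natDegree = d * (d ^ (t + 1) - 1) := by
      rw [natDegree_eq_of_degree_eq (degree_sub_eq_left_of_degree_lt hClt), natDegree_pow, hdeg1]
    have hGB : G * (vAux d (t + 1) - vAux d t) = (vAux d (t + 1)) ^ d - (vAux d t) ^ d := by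
      rw [hGdef]; exact geom_sum₂_mul _ _ d
    have hG : G.Monic := by
      show G.leadingCoeff = 1
      rw [← leadingCoeff_mul_monic hB, hGB]
      exact hC
    have hsum : G.natDegree + (d ^ (t + 1) - 1) = d * (d ^ (t + 1) - 1) := by
      have h := hCdeg
      rw [← hGB, hG.natDegree_mul hB, hBdeg] at h
      exact h
    have hGdeg : G.natDegree = (d ^ (t + 1) - 1) * (d - 1) := by
      have hms : (d ^ (t + 1) - 1) * (d - 1) = (d ^ (t + 1) - 1) * d - (d ^ (t + 1) - 1) * 1 :=
        Nat.mul_sub _ _ _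
      have hcm : d * (d ^ (t + 1) - 1) = (d ^ (t + 1) - 1) * d := mul_comm _ _
      omega
    -- `G` is Eisenstein at `d`
    have hmapB : (vAux d (t + 1) - vAux d t).map (Int.castRingHom (ZMod d))
        = Polynomial.X ^ (d ^ (t + 1) - 1) := by
      rw [Polynomial.map_sub]; exact vAux_map_sub t
    have hmapC : ((vAux d (t + 1)) ^ d - (vAux d t) ^ d).map (Int.castRingHom (ZMod d))
        = Polynomial.X ^ (d * (d ^ (t + 1) - 1)) := by
      rw [Polynomial.map_sub, Polynomial.map_pow, Polynomial.map_pow, ← sub_pow_char,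
        vAux_map_sub, ← pow_mul, mul_comm]
    have hmapG : G.map (Int.castRingHom (ZMod d)) = Polynomial.X ^ G.natDegree := by
      have h := congrArg (Polynomial.map (Int.castRingHom (ZMod d))) hGB
      rw [Polynomial.map_mul, hmapB, hmapC] at h
      have hX : (Polynomial.X : (ZMod d)[X]) ^ (d * (d ^ (t + 1) - 1))
          = Polynomial.X ^ G.natDegree * Polynomial.X ^ (d ^ (t + 1) - 1) := by
        rw [← pow_add]
        congr 1
        omega
      rw [hX] at h
      exact mul_right_cancel₀ (pow_ne_zero _ Polynomial.X_ne_zero) h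
    have hcoeff0 : G.coeff 0 = (d : ℤ) := by
      rw [coeff_zero_eq_eval_zero, hGdef, eval_finset_sum]
      simp [vAux_eval_zero hd2]
    have hPprime : (Ideal.span {(d : ℤ)}).IsPrime :=
      (Ideal.span_singleton_prime (by exact_mod_cast hd.ne_zero)).mpr
        (Nat.prime_iff_prime_int.mp hd)
    have hEis : G.IsEisensteinAt (Ideal.span {(d : ℤ)}) := by
      refine ⟨?_, fun {n} hn => ?_, ?_⟩
      · rw [hG.leadingCoeff]
        intro hmem
        rw [Ideal.mem_span_singleton] at hmem
        rw [show (1 : ℤ) = ((1 : ℕ) : ℤ) by norm_num, Int.natCast_dvd_natCast] at hmem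
        have := Nat.dvd_one.mp hmem
        omega
      · rw [Ideal.mem_span_singleton, ← ZMod.intCast_zmod_eq_zero_iff_dvd]
        have h := congrArg (fun p => Polynomial.coeff p n) hmapG
        simp only [coeff_map, coeff_X_pow] at h
        rw [if_neg (by omega : ¬ n = G.natDegree)] at h
        exact_mod_cast h
      · rw [hcoeff0, Ideal.span_singleton_pow, Ideal.mem_span_singleton]
        intro hdvd
        have hcast : ((d ^ 2 : ℕ) : ℤ) ∣ ((d : ℕ) : ℤ) := by push_cast; exact hdvd
        have h2 := Int.natCast_dvd_natCast.mp hcast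
        have h3 := Nat.le_of_dvd (by omega) h2
        nlinarith [sq_nonneg d]
    have hGpos : 0 < G.natDegree := by
      rw [hGdeg]
      have h4 : 2 ≤ d ^ (t + 1) := le_trans hd2 (Nat.le_self_pow (by omega) d)
      exact Nat.mul_pos (by omega) (by omega)
    have hGirr : Irreducible G := hEis.irreducible hPprime hG.isPrimitive hGpos
    have hGirrQ : Irreducible (G.map (algebraMap ℤ ℚ)) :=
      (hG.isPrimitive.irreducible_iff_irreducible_map_fraction_map).mp hGirr
    -- conclude via the minimal polynomial of `c`
    have haeval : (Polynomial.aeval (algebraMap (𝓞 K) K c)) (G.map (algebraMap ℤ ℚ)) = 0 := by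
      rw [aeval_map_algebraMap, aeval_algebraMap_apply, hAG, map_zero]
    have hmono : (G.map (algebraMap ℤ ℚ)).Monic := hG.map _
    have hmin : minpoly ℚ (algebraMap (𝓞 K) K c) = G.map (algebraMap ℤ ℚ) :=
      (minpoly.eq_of_irreducible_of_monic hGirrQ haeval hmono).symm
    have hint : IsIntegral ℚ (algebraMap (𝓞 K) K c) := IsIntegral.of_finite ℚ _
    have hfr := IntermediateField.adjoin.finrank hint
    rw [hK, IntermediateField.finrank_top'] at hfr
    rw [hfr, hmin, hG.natDegree_map, hGdeg]
    simp [Nat.add_sub_cancel]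


/-- Let `d` be a prime and `m ≥ 1`. The polynomial `G_d(m,1)`, whose
roots are exactly the Misiurewicz parameters `c` of exact type `(m,1)` for `x^d + c`,
is irreducible over `ℚ`. Equivalently (as formalized here): if `c` is such a
parameter, then `[ℚ(c) : ℚ] = (d^(m−1) − 1)(d − 1) = deg G_d(m,1)`. -/
theorem degree_of_misiurewicz_param_period_one {K : Type*} [Field K] [NumberField K]
    (d m : ℕ) (hd : d.Prime) (hm : 1 ≤ m)
    (c : 𝓞 K)
    (hK : IntermediateField.adjoin ℚ {algebraMap (𝓞 K) K c} = ⊤)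
    (f : 𝓞 K → 𝓞 K) (hf : f = fun x => x ^ d + c)
    (hper : f^[m + 1] 0 = f^[m] 0)
    (htail : ∀ k, k < m → f^[k + 1] 0 ≠ f^[k] 0) :
    Module.finrank ℚ K = (d ^ (m - 1) - 1) * (d - 1) :=
  degree_of_misiurewicz_param_period_one' d m hd hm c hK f hf hper htail
end

section
/- Let m ≥ 1. The polynomial G_2(m,2) ∈ ℤ[x], whose roots are the Misiurewicz parameters c with exact type (m,2) for x^2 + c, is irreducible over ℚ. Its degree is 2^{m−1}−1 if m is odd and 2^{m−1} if m is even, and any root c satisfies [ℚ(c):ℚ] equal to that degree. -/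
open NumberField

namespace MisiurewiczAux

open Polynomial

noncomputable def g : ℕ → ℤ[X]
  | 0 => 0
  | (n+1) => (g n)^2 + X

lemma g_zero : g 0 = 0 := rfl
lemma g_succ (n : ℕ) : g (n+1) = (g n)^2 + X := rfl

/-- Key identity 1: `f^{k+2}(0) - f^k(0) = (f^{k+1}(0) - f^k(0)) · Φ₂(f^k(0))`. -/
lemma key1 (k : ℕ) :
    g (k+2) - g k = (g (k+1) - g k) * (g (k+1) + g k + 1) := by
  have h1 := g_succ (k+1)
  have h2 := g_succ k
  linear_combination h1 - h2

/-- Key identity 2: the dynatomic factorization `P_{k+1} = E_k · P_k`. -/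
lemma key2 (k : ℕ) :
    g (k+2) + g (k+1) + 1 = (g (k+1) - g k + 1) * (g (k+1) + g k + 1) := by
  have h1 := g_succ (k+1)
  have h2 := g_succ k
  linear_combination h1 - h2

lemma g_monic_deg (n : ℕ) : (g (n+1)).Monic ∧ (g (n+1)).natDegree = 2^n := by
  induction n with
  | zero =>
      constructor
      · show ((g 0)^2 + X).Monic
        rw [g_zero]; simpa using monic_X
      · show ((g 0)^2 + X).natDegree = 1
        rw [g_zero]; simp
  | succ n ih =>
      obtain ⟨hm, hd⟩ := ih
      have hsq : ((g (n+1))^2).Monic := hm.pow 2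
      have hsqd : ((g (n+1))^2).natDegree = 2^(n+1) := by
        rw [hm.natDegree_pow, hd]; ring
      have hdeglt : (X : ℤ[X]).degree < ((g (n+1))^2).degree := by
        rw [degree_X, degree_eq_natDegree hsq.ne_zero, hsqd]
        exact_mod_cast Nat.one_lt_two_pow_iff.mpr (Nat.succ_ne_zero n)
      constructor
      · exact hsq.add_of_left hdeglt
      · show ((g (n+1))^2 + X).natDegree = 2^(n+1)
        rw [natDegree_eq_of_degree_eq (degree_add_eq_left_of_degree_lt hdeglt), hsqd]

lemma E_monic_deg (n : ℕ) (hn : 1 ≤ n) :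
    (g (n+1) - g n + 1).Monic ∧ (g (n+1) - g n + 1).natDegree = 2^n := by
  obtain ⟨j, rfl⟩ : ∃ j, n = j + 1 := ⟨n - 1, (Nat.succ_pred_eq_of_pos hn).symm⟩
  obtain ⟨hm1, hd1⟩ := g_monic_deg (j+1)
  obtain ⟨hm0, hd0⟩ := g_monic_deg j
  have hE : g (j+2) - g (j+1) + 1 = g (j+2) + (1 - g (j+1)) := by ring
  have hdeglt : (1 - g (j+1)).degree < (g (j+2)).degree := by
    refine lt_of_le_of_lt (degree_sub_le _ _) ?_
    rw [degree_eq_natDegree hm1.ne_zero, hd1, degree_eq_natDegree hm0.ne_zero, hd0]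
    rw [max_lt_iff]
    constructor
    · rw [degree_one]
      exact_mod_cast pow_pos (by norm_num : (0:ℕ) < 2) (j+1)
    · exact_mod_cast Nat.pow_lt_pow_right one_lt_two (Nat.lt_succ_self j)
  rw [hE]
  exact ⟨hm1.add_of_left hdeglt,
    by rw [natDegree_eq_of_degree_eq (degree_add_eq_left_of_degree_lt hdeglt), hd1]⟩

notation "ρ" => Int.castRingHom (ZMod 2)

lemma map_g (n : ℕ) : (g (n+1)).map ρ = (g n).map ρ + X^(2^n) := by
  induction n with
  | zero => show ((g 0)^2 + X).map ρ = (g 0).map ρ + X^1; simp [g_zero]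
  | succ n ih =>
      show ((g (n+1))^2 + X).map ρ = ((g n)^2 + X).map ρ + X^(2^(n+1))
      rw [Polynomial.map_add, Polynomial.map_pow, Polynomial.map_X, ih,
        add_pow_char, Polynomial.map_add, Polynomial.map_pow,
        ← pow_mul, Polynomial.map_X]
      ring

lemma map_E (n : ℕ) : (g (n+1) - g n + 1).map ρ = (X + 1)^(2^n) := by
  rw [Polynomial.map_add, Polynomial.map_sub, map_g, Polynomial.map_one]
  rw [add_pow_char_pow]
  ring

lemma eval_g (n : ℕ) : (g n).eval (-1) = if Odd n then -1 else 0 := by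
  induction n with
  | zero => simp [g_zero]
  | succ n ih =>
      show ((g n)^2 + X).eval (-1) = _
      rw [eval_add, eval_pow, eval_X, ih]
      rcases Nat.even_or_odd n with h | h
      · simp [Nat.odd_add_one, Nat.not_even_iff_odd, h, Nat.not_odd_iff_even]
      · simp [Nat.odd_add_one, h, Nat.not_odd_iff_even, Even.add_one]

lemma eval_deriv_g (n : ℕ) : (derivative (g (n+1))).eval (-1) = (-1)^n := by
  induction n with
  | zero => show (derivative ((g 0)^2 + X)).eval (-1) = 1; simp [g_zero]
  | succ n ih =>
      show (derivative ((g (n+1))^2 + X)).eval (-1) = (-1)^(n+1)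
      rw [derivative_add, derivative_X, derivative_sq, eval_add, eval_one,
        eval_mul, eval_mul, eval_C, eval_g, ih]
      rcases Nat.even_or_odd n with h | h
      · have h1 : Odd (n+1) := Even.add_one h
        rw [if_pos h1, h.neg_one_pow, Odd.neg_one_pow (by simpa using h1)]
        ring
      · have h1 : ¬ Odd (n+1) := by simpa [Nat.not_odd_iff_even] using Odd.add_one h
        rw [if_neg h1, h.neg_one_pow,
          Even.neg_one_pow (by simpa [Nat.not_odd_iff_even] using h1)]
        ring

/-- The Eisenstein-at-2 / minimal polynomial argument: if `c` generates `K` and is a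
root of a monic integer polynomial of degree `D` which is Eisenstein at `2` after the
shift `x ↦ x - 1`, then `[K : ℚ] = D`. -/
theorem main_aux {K : Type*} [Field K] [NumberField K] (c : 𝓞 K)
    (hK : IntermediateField.adjoin ℚ {algebraMap (𝓞 K) K c} = ⊤)
    (H : ℤ[X]) (hmo : H.Monic) (D : ℕ) (hdeg : H.natDegree = D) (hD : 0 < D)
    (hc : Polynomial.aeval c H = 0)
    (hmap : H.map ρ = (X+1)^D)
    (heval : H.eval (-1) = 2) :
    Module.finrank ℚ K = D := by
  set x : K := algebraMap (𝓞 K) K c with hx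
  have hint : IsIntegral ℚ x := IsIntegral.of_finite ℚ x
  set H1 : ℤ[X] := H.comp (X + C (-1)) with hH1
  have h1monic : H1.Monic := hmo.comp_X_add_C _
  have h1deg : H1.natDegree = D := by
    rw [hH1, natDegree_comp, natDegree_X_add_C, mul_one, hdeg]
  have h1map : H1.map ρ = X ^ D := by
    rw [hH1, Polynomial.map_comp, hmap, Polynomial.map_add, Polynomial.map_X, Polynomial.map_C]
    have h1 : C (ρ (-1)) = (1 : (ZMod 2)[X]) := by
      rw [show (ρ (-1) : ZMod 2) = 1 from by decide, C_1]
    rw [h1, pow_comp, add_comp, X_comp, one_comp]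
    rw [add_assoc, CharTwo.add_self_eq_zero, add_zero]
  have heis : H1.IsEisensteinAt (Ideal.span {(2:ℤ)}) := by
    refine ⟨?_, ?_, ?_⟩
    · rw [h1monic.leadingCoeff, Ideal.mem_span_singleton]
      norm_num
    · intro i hi
      rw [h1deg] at hi
      rw [Ideal.mem_span_singleton]
      have h0 : ((H1.coeff i : ZMod 2)) = 0 := by
        have := congrArg (fun p => Polynomial.coeff p i) h1map
        simp only [Polynomial.coeff_map] at this
        rw [Polynomial.coeff_X_pow, if_neg (by omega : ¬ i = D)] at this
        exact this
      exact_mod_cast (ZMod.intCast_zmod_eq_zero_iff_dvd _ 2).mp h0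
    · rw [coeff_zero_eq_eval_zero, hH1, eval_comp, eval_add, eval_X, eval_C, zero_add, heval,
        Ideal.span_singleton_pow, Ideal.mem_span_singleton]
      norm_num
  have h1irr : Irreducible H1 :=
    heis.irreducible ((Ideal.span_singleton_prime (by norm_num)).mpr Int.prime_two)
      h1monic.isPrimitive (by omega)
  have h1irrQ : Irreducible (H1.map (algebraMap ℤ ℚ)) :=
    (h1monic.irreducible_iff_irreducible_map_fraction_map).mp h1irr
  have haev : Polynomial.aeval x (H.map (algebraMap ℤ ℚ)) = 0 := by
    rw [Polynomial.aeval_map_algebraMap, hx, Polynomial.aeval_algebraMap_apply, hc, map_zero]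
  have hdvd : minpoly ℚ x ∣ H.map (algebraMap ℤ ℚ) := minpoly.dvd ℚ x haev
  set μ1 : ℚ[X] := (minpoly ℚ x).comp (X + C (-1)) with hμ1
  have hdvd1 : μ1 ∣ H1.map (algebraMap ℤ ℚ) := by
    rw [hH1, Polynomial.map_comp]
    obtain ⟨t, ht⟩ := hdvd
    refine ⟨t.comp ((X + C (-1)).map (algebraMap ℤ ℚ)), ?_⟩
    rw [ht, mul_comp, hμ1]
    congr 1
    simp
  have hμdeg : (minpoly ℚ x).natDegree = D := by
    have hμ1deg : μ1.natDegree = (minpoly ℚ x).natDegree := by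
      rw [hμ1, natDegree_comp, natDegree_X_add_C, mul_one]
    have hnotunit : ¬ IsUnit μ1 := by
      intro hu
      have h0 := natDegree_eq_zero_of_isUnit hu
      have hpos := minpoly.natDegree_pos hint
      omega
    obtain ⟨t, ht⟩ := hdvd1
    rcases h1irrQ.isUnit_or_isUnit ht with h | h
    · exact absurd h hnotunit
    · have htdeg : t.natDegree = 0 := natDegree_eq_zero_of_isUnit h
      have hmapdeg : (H1.map (algebraMap ℤ ℚ)).natDegree = D := by
        rw [(h1monic).natDegree_map, h1deg]
      have hμ1ne : μ1 ≠ 0 := by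
        intro h0
        rw [h0, zero_mul] at ht
        rw [ht] at hmapdeg
        simp at hmapdeg
        omega
      have htne : t ≠ 0 := by
        intro h0
        rw [h0, mul_zero] at ht
        rw [ht] at hmapdeg
        simp at hmapdeg
        omega
      have := natDegree_mul hμ1ne htne
      rw [← ht, hmapdeg, htdeg, add_zero, hμ1deg] at this
      omega
  have hfr : Module.finrank ℚ K = (minpoly ℚ x).natDegree := by
    rw [← IntermediateField.adjoin.finrank hint, hK, IntermediateField.finrank_top']
  rw [hfr, hμdeg]

end MisiurewiczAux

open MisiurewiczAux Polynomial in
/-- Let `m ≥ 1`. The polynomial `G_2(m,2)`, whose roots are the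
Misiurewicz parameters `c` of exact type `(m,2)` for `x^2 + c`, is irreducible over
`ℚ`; its degree is `2^(m−1) − 1` if `m` is odd and `2^(m−1)` if `m` is even.
Equivalently (as formalized here): any such parameter `c` satisfies
`[ℚ(c) : ℚ]` equal to that degree. -/
theorem degree_of_misiurewicz_param_period_two {K : Type*} [Field K] [NumberField K]
    (m : ℕ) (hm : 1 ≤ m)
    (c : 𝓞 K)
    (hK : IntermediateField.adjoin ℚ {algebraMap (𝓞 K) K c} = ⊤)
    (f : 𝓞 K → 𝓞 K) (hf : f = fun x => x ^ 2 + c)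
    (hper : f^[m + 2] 0 = f^[m] 0)
    (hmin : f^[m + 1] 0 ≠ f^[m] 0)
    (htail : ∀ k, k < m → f^[k + 2] 0 ≠ f^[k] 0) :
    Module.finrank ℚ K = if Odd m then 2 ^ (m - 1) - 1 else 2 ^ (m - 1) := by
  -- the orbit of 0 is given by evaluating the polynomials `g n` at `c`
  have horb : ∀ n, Polynomial.aeval c (g n) = f^[n] 0 := by
    intro n
    induction n with
    | zero => simp [g_zero]
    | succ n ih =>
        rw [Function.iterate_succ_apply', g_succ, map_add, map_pow, Polynomial.aeval_X, ih, hf]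
  have e1 : (g 1 : ℤ[X]) = X := by rw [g_succ, g_zero]; ring
  have e2 : (g 2 : ℤ[X]) = X^2 + X := by rw [g_succ (1), e1]
  -- `c + 1 ≠ 0`
  have hc1 : c + 1 ≠ 0 := by
    intro h0
    have h2 : f^[2] 0 ≠ 0 := by simpa using htail 0 (by omega)
    apply h2
    have hv : f^[2] 0 = c * (c + 1) := by
      rw [← horb 2, e2]; simp; ring
    rw [hv, h0, mul_zero]
  -- `P_m(c) = 0`
  have hPm : Polynomial.aeval c (g (m+1) + g m + 1) = 0 := by
    have hNm : Polynomial.aeval c (g (m+2) - g m) = 0 := by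
      rw [map_sub, horb, horb, hper, sub_self]
    have hDm : Polynomial.aeval c (g (m+1) - g m) ≠ 0 := by
      rw [map_sub, horb, horb, sub_ne_zero]; exact hmin
    rw [key1 m, map_mul] at hNm
    exact (mul_eq_zero.mp hNm).resolve_left hDm
  rcases eq_or_lt_of_le hm with hm1 | hm2
  · -- `m = 1` is impossible : it would force `c = -1`
    exfalso
    rw [← hm1] at hPm
    have hval : Polynomial.aeval c (g (1+1) + g 1 + 1) = (c+1)^2 := by
      rw [show g (1+1) = g 2 from rfl, e2, e1]; simp; ring
    rw [hval] at hPm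
    exact hc1 (pow_eq_zero_iff (by norm_num) |>.mp hPm)
  -- now `m ≥ 2`; write `m = n + 1` with `n ≥ 1`
  obtain ⟨n, rfl⟩ : ∃ n, m = n + 1 := ⟨m - 1, by omega⟩
  have hn : 1 ≤ n := by omega
  simp only [Nat.add_sub_cancel]
  -- `P_{m-1}(c) ≠ 0`
  have hPn : Polynomial.aeval c (g (n+1) + g n + 1) ≠ 0 := by
    intro h0
    have hNn : Polynomial.aeval c (g (n+2) - g n) ≠ 0 := by
      rw [map_sub, horb, horb, sub_ne_zero]; exact htail n (by omega)
    apply hNn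
    rw [key1 n, map_mul, h0, mul_zero]
  -- `E(c) = 0` where `E = g (n+1) - g n + 1`
  have hPm' : Polynomial.aeval c (g (n+2) + g (n+1) + 1) = 0 := hPm
  rw [key2 n, map_mul] at hPm'
  have hE0 : Polynomial.aeval c (g (n+1) - g n + 1) = 0 :=
    (mul_eq_zero.mp hPm').resolve_right hPn
  obtain ⟨hEmonic, hEdeg⟩ := E_monic_deg n hn
  rcases Nat.even_or_odd n with hne | hno
  · -- `n` even, `m = n+1` odd : divide out the factor `X + 1`
    rw [if_pos (Even.add_one hne)]
    obtain ⟨j, rfl⟩ : ∃ j, n = j + 1 := ⟨n - 1, by omega⟩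
    have hjodd : Odd j := by
      rcases Nat.even_or_odd j with h | h
      · exact absurd (Even.add_one h) (Nat.not_odd_iff_even.mpr hne)
      · exact h
    set n := j + 1 with hnj
    have hroot : IsRoot (g (n+1) - g n + 1) (-1) := by
      show (g (n+1) - g n + 1).eval (-1) = 0
      rw [eval_add, eval_sub, eval_one, eval_g, eval_g,
        if_pos (Even.add_one hne), if_neg (Nat.not_odd_iff_even.mpr hne)]
      ring
    obtain ⟨H, hEH⟩ := dvd_iff_isRoot.mpr hroot
    have hHmon : H.Monic :=
      (monic_X_sub_C (-1)).of_mul_monic_left (by rw [← hEH]; exact hEmonic)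
    have hHdeg : H.natDegree = 2^n - 1 := by
      have hmul := natDegree_mul (X_sub_C_ne_zero (-1)) hHmon.ne_zero
      rw [← hEH, hEdeg, natDegree_X_sub_C] at hmul
      omega
    have hD : 0 < 2^n - 1 := by
      have : 1 < 2^n := Nat.one_lt_two_pow_iff.mpr (by omega)
      omega
    have hHc : Polynomial.aeval c H = 0 := by
      have hsplit : Polynomial.aeval c (g (n+1) - g n + 1)
          = (c + 1) * Polynomial.aeval c H := by
        rw [hEH, map_mul]
        congr 1
        simp
      rw [hsplit] at hE0
      exact (mul_eq_zero.mp hE0).resolve_left hc1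
    have hXmap : (X - C (-1) : ℤ[X]).map ρ = X + 1 := by
      rw [Polynomial.map_sub, Polynomial.map_X, Polynomial.map_C,
        show (ρ (-1) : ZMod 2) = 1 from by decide, C_1, CharTwo.sub_eq_add]
    have hHmap : H.map ρ = (X + 1)^(2^n - 1) := by
      have hXne : (X + 1 : (ZMod 2)[X]) ≠ 0 := fun h => by
        have := congrArg (eval 0) h
        simp at this
      apply mul_left_cancel₀ hXne
      have hme := map_E n
      rw [hEH, Polynomial.map_mul, hXmap] at hme
      rw [hme, ← pow_succ']
      congr 1
      omega
    have hHeval : H.eval (-1) = 2 := by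
      have hd := congrArg derivative hEH
      rw [derivative_mul, derivative_sub, derivative_X, derivative_C, sub_zero, one_mul] at hd
      have h6 := congrArg (eval (-1)) hd
      rw [derivative_add, derivative_sub, derivative_one, add_zero, eval_sub,
        eval_deriv_g n, eval_add, eval_mul, eval_sub, eval_X, eval_C] at h6
      rw [show derivative (g n) = derivative (g (j+1)) from rfl, eval_deriv_g j] at h6
      rw [hne.neg_one_pow, hjodd.neg_one_pow] at h6
      have : (2 : ℤ) = H.eval (-1) + (-1 - -1) * (derivative H).eval (-1) := by
        rw [← h6]; ring
      rw [this]; ring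
    exact main_aux c hK H hHmon (2^n - 1) hHdeg hD hHc hHmap hHeval
  · -- `n` odd, `m = n+1` even : `E` itself is the Misiurewicz polynomial
    rw [if_neg (Nat.not_odd_iff_even.mpr (Odd.add_one hno))]
    have hHeval : (g (n+1) - g n + 1).eval (-1) = 2 := by
      rw [eval_add, eval_sub, eval_one, eval_g, eval_g,
        if_neg (by simpa [Nat.not_odd_iff_even] using Odd.add_one hno), if_pos hno]
      ring
    exact main_aux c hK _ hEmonic (2^n) hEdeg (pow_pos (by norm_num) n) hE0 (map_E n) hHeval
end

section
/- Let f(x) = x^d + c be post-critically finite with exact type (0,n) (i.e., 0 is periodic of exact period n), K = ℚ(c), a_i = f^i(0), so a_n = 0. Then a_i is a unit in O_K for all 1 ≤ i ≤ n−1. -/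
open NumberField

/-- Let `f(x) = x^d + c` be post-critically finite with exact type
`(0,n)` (i.e. `0` is periodic of exact period `n`), `K = ℚ(c)`, `a_i = f^i(0)`, so
`a_n = 0`. Then `a_i` is a unit in `𝓞 K` for all `1 ≤ i ≤ n−1`. -/
theorem orbit_elem_isUnit_of_periodic_case {K : Type*} [Field K] [NumberField K]
    (d n : ℕ) (hd : 2 ≤ d) (hn : 1 ≤ n)
    (c : 𝓞 K)
    (hK : IntermediateField.adjoin ℚ {algebraMap (𝓞 K) K c} = ⊤)
    (f : 𝓞 K → 𝓞 K) (hf : f = fun x => x ^ d + c)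
    (a : ℕ → 𝓞 K) (ha : ∀ i, a i = f^[i] 0)
    (hper : f^[n] 0 = 0)
    (hmin : ∀ i, 1 ≤ i → i ≤ n - 1 → f^[i] 0 ≠ 0)
    (i : ℕ) (hi : 1 ≤ i) (hin : i ≤ n - 1) :
    IsUnit (a i) := by
  have hrec : ∀ m, a (m + 1) = (a m) ^ d + c := by
    intro m
    rw [ha, ha, Function.iterate_succ_apply', hf]
  have ha0 : a 0 = 0 := by rw [ha]; rfl
  have han : a n = 0 := by rw [ha]; exact hper
  have hperiod : ∀ m, a (m + n) = a m := by
    intro m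
    rw [ha, ha, Function.iterate_add_apply, hper]
  have hmod : ∀ m, a (m % n) = a m := by
    intro m
    conv_rhs => rw [← Nat.mod_add_div m n]
    generalize m / n = k
    induction k with
    | zero => simp
    | succ k ih =>
        rw [show m % n + n * (k + 1) = (m % n + n * k) + n by ring, hperiod, ih]
  have key : ∀ p q : ℕ, p < q → q < n → a p = a q → False := by
    intro p q hpq hq heq
    have step : ∀ l, a (p + l) = a (q + l) := by
      intro l
      induction l with
      | zero => simpa using heq
      | succ l ih =>
          rw [← Nat.add_assoc, ← Nat.add_assoc, hrec, hrec, ih]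
    have h0 : a (p + (n - q)) = 0 := by
      have := step (n - q)
      rwa [Nat.add_sub_cancel' hq.le, han] at this
    rw [ha] at h0
    exact hmin _ (by omega) (by omega) h0
  have hinj : ∀ p q : ℕ, p < n → q < n → p ≠ q → a p ≠ a q := by
    intro p q hp hq hne heq
    rcases hne.lt_or_gt with h | h
    · exact key p q h hq heq
    · exact key q p h hp heq.symm
  set S := (Finset.range n).offDiag with hS
  have memS : ∀ p : ℕ × ℕ, p ∈ S ↔ p.1 < n ∧ p.2 < n ∧ p.1 ≠ p.2 := by
    intro p
    simp [hS, Finset.mem_offDiag]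
  -- the shift is a bijection of S
  have hcancel : ∀ c p q : ℕ, p < n → q < n → (p + c) % n = (q + c) % n → p = q := by
    intro c p q hp hq h
    have h' : p + c ≡ q + c [MOD n] := h
    have := Nat.ModEq.add_right_cancel' c h'
    rwa [Nat.ModEq, Nat.mod_eq_of_lt hp, Nat.mod_eq_of_lt hq] at this
  have hmodinj : ∀ p q : ℕ, p < n → q < n → p ≠ q → (p + 1) % n ≠ (q + 1) % n := by
    intro p q hp hq hne h
    exact hne (hcancel 1 p q hp hq h)
  have hshiftprod :
      (∏ p ∈ S, (a p.1 - a p.2)) =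
        ∏ p ∈ S, (a (p.1 + 1) - a (p.2 + 1)) := by
    refine Finset.prod_bij' (fun p _ => (((p.1 + (n - 1)) % n, (p.2 + (n - 1)) % n) : ℕ × ℕ))
      (fun p _ => (((p.1 + 1) % n, (p.2 + 1) % n) : ℕ × ℕ)) ?_ ?_ ?_ ?_ ?_
    · intro p hp
      rw [memS] at hp ⊢
      exact ⟨Nat.mod_lt _ (by omega), Nat.mod_lt _ (by omega),
        fun h => hp.2.2 (hcancel (n - 1) _ _ hp.1 hp.2.1 h)⟩
    · intro p hp
      rw [memS] at hp ⊢
      exact ⟨Nat.mod_lt _ (by omega), Nat.mod_lt _ (by omega),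
        hmodinj _ _ hp.1 hp.2.1 hp.2.2⟩
    · intro p hp
      rw [memS] at hp
      have e : ∀ x : ℕ, x < n → ((x + (n - 1)) % n + 1) % n = x := by
        intro x hx
        rw [Nat.mod_add_mod]
        have : x + (n - 1) + 1 = x + n := by omega
        rw [this, Nat.add_mod_right, Nat.mod_eq_of_lt hx]
      exact Prod.ext (e _ hp.1) (e _ hp.2.1)
    · intro p hp
      rw [memS] at hp
      have e : ∀ x : ℕ, x < n → ((x + 1) % n + (n - 1)) % n = x := by
        intro x hx
        rw [Nat.mod_add_mod]
        have : x + 1 + (n - 1) = x + n := by omega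
        rw [this, Nat.add_mod_right, Nat.mod_eq_of_lt hx]
      exact Prod.ext (e _ hp.1) (e _ hp.2.1)
    · intro p hp
      rw [memS] at hp
      have e : ∀ x : ℕ, x < n → a ((x + (n - 1)) % n + 1) = a x := by
        intro x hx
        rw [← hmod ((x + (n - 1)) % n + 1), Nat.mod_add_mod,
          show x + (n - 1) + 1 = x + n by omega, Nat.add_mod_right, Nat.mod_eq_of_lt hx]
      simp only
      rw [e _ hp.1, e _ hp.2.1]
  have hfactor : ∀ p : ℕ × ℕ,
      a (p.1 + 1) - a (p.2 + 1) =
        (∑ k ∈ Finset.range d, a p.1 ^ k * a p.2 ^ (d - 1 - k)) * (a p.1 - a p.2) := by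
    intro p
    rw [hrec, hrec, geom_sum₂_mul]
    ring
  have hPne : (∏ p ∈ S, (a p.1 - a p.2)) ≠ 0 := by
    rw [Finset.prod_ne_zero_iff]
    intro p hp
    rw [memS] at hp
    exact sub_ne_zero_of_ne (hinj _ _ hp.1 hp.2.1 hp.2.2)
  have hQ : (∏ p ∈ S, ∑ k ∈ Finset.range d, a p.1 ^ k * a p.2 ^ (d - 1 - k)) = 1 := by
    have : (∏ p ∈ S, (a p.1 - a p.2)) =
        (∏ p ∈ S, ∑ k ∈ Finset.range d, a p.1 ^ k * a p.2 ^ (d - 1 - k)) *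
          (∏ p ∈ S, (a p.1 - a p.2)) := by
      conv_lhs => rw [hshiftprod]
      rw [← Finset.prod_mul_distrib]
      exact Finset.prod_congr rfl fun p _ => hfactor p
    have := this.symm
    nth_rewrite 2 [show (∏ p ∈ S, (a p.1 - a p.2)) =
      1 * (∏ p ∈ S, (a p.1 - a p.2)) by rw [one_mul]] at this
    exact mul_right_cancel₀ hPne this
  have hmemi : ((i, 0) : ℕ × ℕ) ∈ S := by
    rw [memS]
    exact ⟨by omega, by omega, by omega⟩
  have hdvd : (∑ k ∈ Finset.range d, a i ^ k * a 0 ^ (d - 1 - k)) ∣ 1 := by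
    rw [← hQ]
    exact Finset.dvd_prod_of_mem _ hmemi
  have hsum : (∑ k ∈ Finset.range d, a i ^ k * a 0 ^ (d - 1 - k)) = a i ^ (d - 1) := by
    rw [ha0]
    rw [Finset.sum_eq_single (d - 1)]
    · simp
    · intro k hk hne
      rw [Finset.mem_range] at hk
      rw [zero_pow (by omega), mul_zero]
    · intro h
      exact absurd (Finset.mem_range.mpr (by omega)) h
  rw [hsum] at hdvd
  exact isUnit_of_dvd_one (dvd_trans (dvd_pow_self (a i) (by omega)) hdvd)
end

section
/- Let x_1, …, x_n be distinct elements of an integral domain with x_{i+1} = x_i^d + c for all i (indices mod n, d ≥ 2, c fixed). Then ∏_{i≠j} (x_i^d − x_j^d)/(x_i − x_j) = 1; in particular each quotient (x_i^d − x_j^d)/(x_i − x_j) is a unit in the ring generated by the x_i and c. -/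
/-- Let `x_1, …, x_n` be distinct elements of an integral domain with
`x_{i+1} = x_i^d + c` (indices mod `n`, `d ≥ 2`, `c` fixed). Then
`∏_{i≠j} (x_i^d − x_j^d)/(x_i − x_j) = 1`, where each quotient is
`Σ_{l=0}^{d−1} x_i^l x_j^{d−1−l}`; in particular each quotient is a unit in the
subring generated by the `x_i` and `c`. -/
theorem prod_cyclic_orbit_quotients_eq_one {R : Type*} [CommRing R] [IsDomain R]
    (d n : ℕ) (hd : 2 ≤ d) (hn : 1 ≤ n)
    (c : R) (x : ℕ → R)
    (hdist : ∀ i j, i < n → j < n → x i = x j → i = j)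
    (hrec : ∀ i, i < n → x ((i + 1) % n) = x i ^ d + c) :
    (∏ i ∈ Finset.range n, ∏ j ∈ Finset.range n,
        if i = j then 1 else ∑ l ∈ Finset.range d, x i ^ l * x j ^ (d - 1 - l)) = 1 ∧
    ∀ i j, i < n → j < n → i ≠ j →
      ∃ u ∈ Subring.closure ({c} ∪ Set.range fun i : Fin n => x i),
        (∑ l ∈ Finset.range d, x i ^ l * x j ^ (d - 1 - l)) * u = 1 := by
  have hn0 : 0 < n := hn
  set Q : ℕ → ℕ → R := fun i j => ∑ l ∈ Finset.range d, x i ^ l * x j ^ (d - 1 - l) with hQdef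
  set σ : ℕ → ℕ := fun i => (i + 1) % n with hσ
  set τ : ℕ → ℕ := fun j => (j + n - 1) % n with hτ
  have hσmem : ∀ i ∈ Finset.range n, σ i ∈ Finset.range n := by
    intro i _; simp only [Finset.mem_range, hσ]; exact Nat.mod_lt _ hn0
  have hτmem : ∀ j ∈ Finset.range n, τ j ∈ Finset.range n := by
    intro j _; simp only [Finset.mem_range, hτ]; exact Nat.mod_lt _ hn0
  have hτσ : ∀ i ∈ Finset.range n, τ (σ i) = i := by
    intro i hi
    simp only [Finset.mem_range] at hi
    simp only [hσ, hτ]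
    rcases Nat.lt_or_ge (i + 1) n with h | h
    · rw [Nat.mod_eq_of_lt h, show i + 1 + n - 1 = i + n by omega, Nat.add_mod_right,
        Nat.mod_eq_of_lt hi]
    · have h1 : i + 1 = n := by omega
      rw [h1, Nat.mod_self, show 0 + n - 1 = i by omega, Nat.mod_eq_of_lt hi]
  have hστ : ∀ j ∈ Finset.range n, σ (τ j) = j := by
    intro j hj
    simp only [Finset.mem_range] at hj
    simp only [hσ, hτ]
    rcases Nat.eq_zero_or_pos j with h | h
    · subst h
      rw [show 0 + n - 1 = n - 1 by omega, Nat.mod_eq_of_lt (by omega : n - 1 < n),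
        Nat.sub_add_cancel hn, Nat.mod_self]
    · rw [show j + n - 1 = (j - 1) + n by omega, Nat.add_mod_right,
        Nat.mod_eq_of_lt (by omega : j - 1 < n), show j - 1 + 1 = j by omega,
        Nat.mod_eq_of_lt hj]
  have reindex : ∀ f : ℕ → R,
      ∏ i ∈ Finset.range n, f (σ i) = ∏ i ∈ Finset.range n, f i :=
    fun f => Finset.prod_nbij' σ τ hσmem hτmem hτσ hστ (fun a _ => rfl)
  have hσinj : ∀ i ∈ Finset.range n, ∀ j ∈ Finset.range n, σ i = σ j → i = j := by
    intro i hi j hj h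
    have := hτσ i hi
    rw [h, hτσ j hj] at this
    exact this.symm
  set D : R := ∏ i ∈ Finset.range n, ∏ j ∈ Finset.range n,
      if i = j then 1 else x i - x j with hD
  have hDne : D ≠ 0 := by
    rw [hD]
    apply Finset.prod_ne_zero_iff.mpr
    intro i hi
    apply Finset.prod_ne_zero_iff.mpr
    intro j hj
    by_cases h : i = j
    · simp [h]
    · simp only [if_neg h]
      intro hc
      exact h (hdist i j (Finset.mem_range.mp hi) (Finset.mem_range.mp hj) (sub_eq_zero.mp hc))
  set P : R := ∏ i ∈ Finset.range n, ∏ j ∈ Finset.range n,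
      if i = j then 1 else Q i j with hP
  have key : P * D = D := by
    rw [hP, hD, ← Finset.prod_mul_distrib]
    have step1 : ∀ i ∈ Finset.range n,
        (∏ j ∈ Finset.range n, if i = j then 1 else Q i j) *
        (∏ j ∈ Finset.range n, if i = j then 1 else x i - x j)
        = ∏ j ∈ Finset.range n, if σ i = σ j then 1 else x (σ i) - x (σ j) := by
      intro i hi
      rw [← Finset.prod_mul_distrib]
      apply Finset.prod_congr rfl
      intro j hj
      by_cases h : i = j
      · rw [if_pos h, if_pos h, if_pos (show σ i = σ j by rw [h]), one_mul]
      · rw [if_neg h, if_neg h, if_neg (fun hc => h (hσinj i hi j hj hc))]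
        have hi' := Finset.mem_range.mp hi
        have hj' := Finset.mem_range.mp hj
        rw [hQdef]
        simp only [hσ]
        rw [hrec i hi', hrec j hj']
        calc (∑ l ∈ Finset.range d, x i ^ l * x j ^ (d - 1 - l)) * (x i - x j)
            = x i ^ d - x j ^ d := geom_sum₂_mul (x i) (x j) d
          _ = x i ^ d + c - (x j ^ d + c) := by ring
    rw [Finset.prod_congr rfl step1]
    calc (∏ i ∈ Finset.range n, ∏ j ∈ Finset.range n,
            if σ i = σ j then 1 else x (σ i) - x (σ j))
        = ∏ i ∈ Finset.range n, ∏ j ∈ Finset.range n,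
            if σ i = j then 1 else x (σ i) - x j := by
          apply Finset.prod_congr rfl
          intro i _
          exact reindex (fun j => if σ i = j then 1 else x (σ i) - x j)
      _ = D := by
          rw [hD]
          exact reindex (fun i => ∏ j ∈ Finset.range n, if i = j then 1 else x i - x j)
  have hP1 : P = 1 := mul_right_cancel₀ hDne (by rw [key, one_mul] : P * D = 1 * D)
  refine ⟨hP1, ?_⟩
  intro i j hi hj hij
  set S := Subring.closure ({c} ∪ Set.range fun i : Fin n => x i) with hS
  have hxS : ∀ k, k < n → x k ∈ S := fun k hk =>
    Subring.subset_closure (Or.inr ⟨⟨k, hk⟩, rfl⟩)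
  have hQS : ∀ a b, a < n → b < n → Q a b ∈ S := fun a b ha hb =>
    Subring.sum_mem _ fun l _ =>
      Subring.mul_mem _ (Subring.pow_mem _ (hxS a ha) _) (Subring.pow_mem _ (hxS b hb) _)
  have hPs : P = ∏ p ∈ Finset.range n ×ˢ Finset.range n,
      (if p.1 = p.2 then (1 : R) else Q p.1 p.2) := by
    rw [hP]
    exact (Finset.prod_product' _ _ (fun a b => if a = b then (1 : R) else Q a b)).symm
  have hmem : (i, j) ∈ Finset.range n ×ˢ Finset.range n := by
    simp [Finset.mem_product, Finset.mem_range, hi, hj]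
  refine ⟨∏ p ∈ (Finset.range n ×ˢ Finset.range n).erase (i, j),
      (if p.1 = p.2 then (1 : R) else Q p.1 p.2), ?_, ?_⟩
  · apply Subring.prod_mem
    intro p hp
    have hp' := Finset.mem_of_mem_erase hp
    rw [Finset.mem_product, Finset.mem_range, Finset.mem_range] at hp'
    by_cases h : p.1 = p.2
    · rw [if_pos h]; exact Subring.one_mem _
    · rw [if_neg h]; exact hQS _ _ hp'.1 hp'.2
  · have h1 : (∑ l ∈ Finset.range d, x i ^ l * x j ^ (d - 1 - l))
        = (if (i, j).1 = (i, j).2 then (1 : R) else Q (i, j).1 (i, j).2) := by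
      simp [hij, hQdef]
    rw [h1, Finset.mul_prod_erase _ (fun p : ℕ × ℕ => if p.1 = p.2 then (1 : R) else Q p.1 p.2)
      hmem, ← hPs, hP1]
end
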